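/- arXiv:2102.06134 — 6 statements merged into one kernel-verified Lean document; each statement's English description precedes it below -/
import Mathlib

section
/- The n-permutahedron, defined as the convex hull of the points (σ(1), ..., σ(n)) in R^n over all permutations σ of [n], equals the Minkowski sum (n+1)/2 · (1,...,1) + Σ_{1 ≤ i < j ≤ n} [-(e_i - e_j)/2, (e_i - e_j)/2], where [p,q] denotes the segment between p and q and e_i are the standard basis vectors. -/
open scoped BigOperators Pointwise

/-- The standard basis vector `e_i` of `ℝ^n`. -/
noncomputable def stdBasis (n : ℕ) (i : Fin n) : Fin n → ℝ := Pi.single i 1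



open Finset

lemma perm_count_lt {n : ℕ} (σ : Equiv.Perm (Fin n)) (a : Fin n) :
    (Finset.univ.filter fun j => σ j < a).card = (a : ℕ) := by
  rw [← Fin.card_Iio (b := a)]
  apply Finset.card_bij (fun j _ => σ j)
  · intro j hj
    simp only [Finset.mem_filter] at hj
    simpa using hj.2
  · intro j1 _ j2 _ h
    exact σ.injective h
  · intro m hm
    exact ⟨σ.symm m, by simpa using Finset.mem_Iio.mp hm, by simp⟩

lemma perm_count_le {n : ℕ} (σ : Equiv.Perm (Fin n)) (a : Fin n) :
    (Finset.univ.filter fun j => σ j ≤ a).card = (a : ℕ) + 1 := by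
  rw [← Fin.card_Iic (b := a)]
  apply Finset.card_bij (fun j _ => σ j)
  · intro j hj
    simp only [Finset.mem_filter] at hj
    simpa using hj.2
  · intro j1 _ j2 _ h
    exact σ.injective h
  · intro m hm
    exact ⟨σ.symm m, by simp [Finset.mem_Iic.mp hm], by simp⟩

lemma row_sum {n : ℕ} (σ : Equiv.Perm (Fin n)) (i : Fin n) :
    ∑ j, (if σ j < σ i then (1:ℝ) else -1) = 2 * (σ i : ℕ) - n := by
  rw [Finset.sum_ite, Finset.sum_const, Finset.sum_const]
  have h1 := perm_count_lt σ (σ i)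
  have h2 : (Finset.univ.filter fun j => ¬ σ j < σ i).card = n - (σ i : ℕ) := by
    have h3 := Finset.card_filter_add_card_filter_not
      (s := (Finset.univ : Finset (Fin n))) (p := fun j => σ j < σ i)
    simp only [Finset.card_univ, Fintype.card_fin] at h3
    omega
  rw [h1, h2]
  have h4 : (σ i : ℕ) ≤ n := le_of_lt (σ i).2
  rw [nsmul_eq_mul, nsmul_eq_mul, Nat.cast_sub h4]
  ring

lemma col_sum {n : ℕ} (σ : Equiv.Perm (Fin n)) (j : Fin n) :
    ∑ i, (if σ j < σ i then (1:ℝ) else -1) = n - 2 * (σ j : ℕ) - 2 := by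
  rw [Finset.sum_ite, Finset.sum_const, Finset.sum_const]
  have h1 : (Finset.univ.filter fun i => ¬ σ j < σ i).card = (σ j : ℕ) + 1 := by
    simpa only [not_lt] using perm_count_le σ (σ j)
  have h2 : (Finset.univ.filter fun i => σ j < σ i).card = n - ((σ j : ℕ) + 1) := by
    have h3 := Finset.card_filter_add_card_filter_not
      (s := (Finset.univ : Finset (Fin n))) (p := fun i => σ j < σ i)
    simp only [Finset.card_univ, Fintype.card_fin] at h3
    omega
  rw [h1, h2]
  have h4 : (σ j : ℕ) + 1 ≤ n := (σ j).2
  rw [nsmul_eq_mul, nsmul_eq_mul, Nat.cast_sub h4]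
  push_cast
  ring

lemma pair_sum {n : ℕ} (σ : Equiv.Perm (Fin n)) (c : Fin n → ℝ) :
    ∑ p ∈ Finset.univ.filter (fun p : Fin n × Fin n => p.1 < p.2),
      (if σ p.2 < σ p.1 then (1:ℝ) else -1) * (c p.1 - c p.2)
    = ∑ k, (2 * (σ k : ℕ) - ((n : ℝ) - 1)) * c k := by
  set g : Fin n × Fin n → ℝ :=
    fun p => (if σ p.2 < σ p.1 then (1:ℝ) else -1) * (c p.1 - c p.2) with hgdef
  have htot : ∑ p : Fin n × Fin n, g p
      = 2 * ∑ k, (2 * (σ k : ℕ) - ((n:ℝ) - 1)) * c k := by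
    rw [Fintype.sum_prod_type]
    have hexp : ∀ i j : Fin n, g (i, j)
        = (if σ j < σ i then (1:ℝ) else -1) * c i
          - (if σ j < σ i then (1:ℝ) else -1) * c j := fun i j => mul_sub _ _ _
    simp_rw [hexp, Finset.sum_sub_distrib, ← Finset.sum_mul, row_sum]
    rw [Finset.sum_comm]
    simp_rw [← Finset.sum_mul, col_sum]
    rw [← Finset.sum_sub_distrib, Finset.mul_sum]
    refine Finset.sum_congr rfl fun k _ => ?_
    ring
  have hswap : ∑ p ∈ Finset.univ.filter (fun p : Fin n × Fin n => p.2 < p.1), g p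
      = ∑ p ∈ Finset.univ.filter (fun p : Fin n × Fin n => p.1 < p.2), g p := by
    refine Finset.sum_nbij' (fun p => p.swap) (fun p => p.swap) ?_ ?_ ?_ ?_ ?_
    · intro p hp; simp only [Finset.mem_filter, Finset.mem_univ, true_and] at hp ⊢; exact hp
    · intro p hp; simp only [Finset.mem_filter, Finset.mem_univ, true_and] at hp ⊢; exact hp
    · intro p _; exact Prod.swap_swap p
    · intro p _; exact Prod.swap_swap p
    · intro p hp
      simp only [Finset.mem_filter, Finset.mem_univ, true_and] at hp
      have hne : σ p.2 ≠ σ p.1 := fun h => absurd (σ.injective h) (ne_of_lt hp)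
      simp only [hgdef, Prod.fst_swap, Prod.snd_swap]
      rcases lt_or_gt_of_ne hne with h | h
      · rw [if_pos h, if_neg (asymm h)]; ring
      · rw [if_neg (asymm h), if_pos h]; ring
  have hnot : ∑ p ∈ Finset.univ.filter (fun p : Fin n × Fin n => ¬ p.1 < p.2), g p
      = ∑ p ∈ Finset.univ.filter (fun p : Fin n × Fin n => p.2 < p.1), g p := by
    symm
    apply Finset.sum_subset
    · intro p hp
      simp only [Finset.mem_filter, Finset.mem_univ, true_and] at hp ⊢
      exact asymm hp
    · intro p hp hnp
      simp only [Finset.mem_filter, Finset.mem_univ, true_and, not_lt] at hp hnp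
      have h12 : p.1 = p.2 := le_antisymm hnp hp
      simp [hgdef, h12]
  have hsplit := Finset.sum_filter_add_sum_filter_not Finset.univ
    (fun p : Fin n × Fin n => p.1 < p.2) g
  rw [hnot, hswap] at hsplit
  rw [htot] at hsplit
  linarith

lemma single_eq_stdBasis (n : ℕ) (m : Fin n) :
    (fun j => if m = j then (1:ℝ) else 0) = stdBasis n m := by
  funext j
  simp only [stdBasis]
  rw [Pi.single_apply]
  by_cases h : m = j
  · simp [h]
  · simp [h, Ne.symm h]

/-- The `n`-permutahedron `conv{(σ(1),…,σ(n)) : σ ∈ S_n}` equals the Minkowski sum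
`(n+1)/2 · (1,…,1) + Σ_{i<j} [-(e_i-e_j)/2, (e_i-e_j)/2]`. -/
theorem permutahedron_eq_minkowski (n : ℕ) :
    convexHull ℝ {x : Fin n → ℝ | ∃ σ : Equiv.Perm (Fin n), ∀ i, x i = (σ i : ℕ) + 1} =
    ({fun _ => ((n : ℝ) + 1) / 2} : Set (Fin n → ℝ)) +
      ∑ p ∈ Finset.univ.filter (fun p : Fin n × Fin n => p.1 < p.2),
        segment ℝ (-(((2 : ℝ)⁻¹) • (stdBasis n p.1 - stdBasis n p.2)))
          (((2 : ℝ)⁻¹) • (stdBasis n p.1 - stdBasis n p.2)) := by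
  classical
  set P : Finset (Fin n × Fin n) :=
    Finset.univ.filter (fun p : Fin n × Fin n => p.1 < p.2) with hPdef
  -- coordinate formula for the signed sum of segment endpoints
  have hcoord : ∀ (σ : Equiv.Perm (Fin n)) (k : Fin n),
      (∑ p ∈ P, (if σ p.2 < σ p.1 then (1:ℝ) else -1) •
          (((2:ℝ)⁻¹) • (stdBasis n p.1 - stdBasis n p.2))) k
        = (2:ℝ)⁻¹ * (2 * ((σ k : ℕ) : ℝ) - ((n:ℝ) - 1)) := by
    intro σ k
    rw [Finset.sum_apply]
    have hterm : ∀ p ∈ P, ((if σ p.2 < σ p.1 then (1:ℝ) else -1) •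
          (((2:ℝ)⁻¹) • (stdBasis n p.1 - stdBasis n p.2))) k
        = (2:ℝ)⁻¹ * ((if σ p.2 < σ p.1 then (1:ℝ) else -1) *
            ((fun i => (Pi.single i (1:ℝ) : Fin n → ℝ) k) p.1
              - (fun i => (Pi.single i (1:ℝ) : Fin n → ℝ) k) p.2)) := by
      intro p _
      simp only [stdBasis, Pi.smul_apply, smul_eq_mul, Pi.sub_apply]
      ring
    rw [Finset.sum_congr rfl hterm, ← Finset.mul_sum]
    have hps := pair_sum σ (fun i => (Pi.single i (1:ℝ) : Fin n → ℝ) k)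
    rw [hps]
    congr 1
    rw [Finset.sum_eq_single k]
    · simp [Pi.single_apply]
    · intro m _ hm
      simp [Pi.single_apply, Ne.symm hm]
    · intro h; exact absurd (Finset.mem_univ k) h
  apply Set.Subset.antisymm
  · -- convex hull of permutation points ⊆ zonotope
    apply convexHull_min
    · rintro x ⟨σ, hx⟩
      have hx' : x = (fun _ => ((n:ℝ)+1)/2) +
          ∑ p ∈ P, (if σ p.2 < σ p.1 then (1:ℝ) else -1) •
            (((2:ℝ)⁻¹) • (stdBasis n p.1 - stdBasis n p.2)) := by
        funext k
        simp only [Pi.add_apply, hcoord σ k, hx k]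
        ring
      rw [hx']
      refine Set.add_mem_add (Set.mem_singleton _)
        (Set.finset_sum_mem_finset_sum _ _ _ fun p _ => ?_)
      by_cases h : σ p.2 < σ p.1
      · rw [if_pos h, one_smul]
        exact right_mem_segment ℝ _ _
      · rw [if_neg h, neg_one_smul]
        exact left_mem_segment ℝ _ _
    · exact (convex_singleton _).add (convex_sum _ fun p _ => convex_segment _ _)
  · -- zonotope ⊆ convex hull
    intro x hx
    by_contra hxn
    have hGfin : ({x : Fin n → ℝ | ∃ σ : Equiv.Perm (Fin n),
        ∀ i, x i = (σ i : ℕ) + 1}).Finite := by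
      apply (Set.finite_range
        (fun σ : Equiv.Perm (Fin n) => fun i => ((σ i : ℕ) : ℝ) + 1)).subset
      rintro z ⟨σ, hz⟩
      exact ⟨σ, by funext i; exact (hz i).symm⟩
    obtain ⟨f, u, hfu, hux⟩ := geometric_hahn_banach_closed_point
      (convex_convexHull ℝ _) (hGfin.isClosed_convexHull (𝕜 := ℝ)) hxn
    set c : Fin n → ℝ := fun i => f (stdBasis n i) with hcdef
    have hc1 : ∀ i, f (stdBasis n i) = c i := fun i => rfl
    have hfeval : ∀ z : Fin n → ℝ, f z = ∑ k, z k * c k := by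
      intro z
      conv_lhs => rw [pi_eq_sum_univ z]
      rw [map_sum]
      refine Finset.sum_congr rfl fun k _ => ?_
      rw [single_eq_stdBasis n k, map_smul, smul_eq_mul, hc1]
    set τ : Equiv.Perm (Fin n) := Tuple.sort c with hτ
    set σ : Equiv.Perm (Fin n) := τ⁻¹ with hσ
    have hmono : Monotone (c ∘ τ) := Tuple.monotone_sort c
    have hcmp : ∀ i j : Fin n, σ i < σ j → c i ≤ c j := by
      intro i j hij
      have h := hmono (le_of_lt hij)
      simpa [Function.comp, hσ] using h
    -- decompose x
    rw [Set.mem_add] at hx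
    obtain ⟨a, ha, y, hy, hxy⟩ := hx
    rw [Set.mem_singleton_iff] at ha
    subst ha
    rw [Set.mem_finset_sum] at hy
    obtain ⟨g, hg, hgy⟩ := hy
    subst hgy
    -- bound f on each segment element
    have hb : ∀ p ∈ P, f (g p) ≤ (2:ℝ)⁻¹ *
        ((if σ p.2 < σ p.1 then (1:ℝ) else -1) * (c p.1 - c p.2)) := by
      intro p hp
      have hp' : p.1 < p.2 := by
        rw [hPdef] at hp
        simpa using (Finset.mem_filter.mp hp).2
      obtain ⟨α, β, hα, hβ, hαβ, hgp⟩ := hg hp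
      have hfg : f (g p) = (β - α) * ((2:ℝ)⁻¹ * (c p.1 - c p.2)) := by
        rw [← hgp, map_add, map_smul, map_smul, map_neg, map_smul, map_sub, hc1, hc1]
        simp only [smul_eq_mul]
        ring
      have hne : σ p.1 ≠ σ p.2 := fun h =>
        absurd (σ.injective h) (ne_of_lt hp')
      by_cases h : σ p.2 < σ p.1
      · have hle : c p.2 ≤ c p.1 := hcmp _ _ h
        rw [if_pos h, hfg]
        nlinarith [mul_nonneg (show (0:ℝ) ≤ 1 - (β - α) by linarith)
          (show (0:ℝ) ≤ c p.1 - c p.2 by linarith)]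
      · have h' : σ p.1 < σ p.2 := lt_of_le_of_ne (not_lt.mp h) hne
        have hle : c p.1 ≤ c p.2 := hcmp _ _ h'
        rw [if_neg h, hfg]
        nlinarith [mul_nonneg (show (0:ℝ) ≤ (β - α) + 1 by linarith)
          (show (0:ℝ) ≤ c p.2 - c p.1 by linarith)]
    -- total bound
    have hfx : f ((fun _ => ((n:ℝ)+1)/2) + ∑ p ∈ P, g p)
        ≤ ∑ k, (((σ k : ℕ) : ℝ) + 1) * c k := by
      rw [map_add, map_sum]
      have h1 : ∑ p ∈ P, f (g p) ≤ ∑ p ∈ P, (2:ℝ)⁻¹ *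
          ((if σ p.2 < σ p.1 then (1:ℝ) else -1) * (c p.1 - c p.2)) :=
        Finset.sum_le_sum hb
      rw [← Finset.mul_sum, pair_sum σ c] at h1
      have h2 : f (fun _ => ((n:ℝ)+1)/2) = ∑ k, (((n:ℝ)+1)/2) * c k := hfeval _
      have h3 : ∑ k, (((n:ℝ)+1)/2) * c k
          + (2:ℝ)⁻¹ * ∑ k, (2 * ((σ k : ℕ) : ℝ) - ((n:ℝ) - 1)) * c k
          = ∑ k, (((σ k : ℕ) : ℝ) + 1) * c k := by
        rw [Finset.mul_sum, ← Finset.sum_add_distrib]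
        refine Finset.sum_congr rfl fun k _ => ?_
        ring
      rw [h2]
      linarith
    have hperm : (fun i => ((σ i : ℕ) : ℝ) + 1) ∈ convexHull ℝ
        {x : Fin n → ℝ | ∃ σ : Equiv.Perm (Fin n), ∀ i, x i = (σ i : ℕ) + 1} :=
      subset_convexHull ℝ _ ⟨σ, fun i => rfl⟩
    have h4 : f (fun i => ((σ i : ℕ) : ℝ) + 1) = ∑ k, (((σ k : ℕ) : ℝ) + 1) * c k :=
      hfeval _
    have h5 := hfu _ hperm
    rw [← hxy] at hux
    rw [h4] at h5
    linarith
end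

section
/- For a point configuration A = (a_1, ..., a_n) in R^d with linear map φ_A : R^n → R^d sending e_i to a_i, the map sending an ordered partition I of [n] (given by the surjection p_I : [n] → [l]) to the sign vector X^I ∈ {+,-,0}^{E_n} with X^I_{(i,j)} = sign(p_I(j) - p_I(i)) is an order-preserving bijection (poset isomorphism) between the poset of sweeps of A ordered by refinement and the poset of covectors of the oriented matroid of the vector configuration (a_j - a_i)_{(i,j) ∈ E_n} ordered componentwise with 0 < +, 0 < -. -/
open scoped BigOperators

/-- An ordered partition of `[n]` with `parts` parts, given by the associated
surjection to `Fin parts`. -/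
structure OrderedPartition (n : ℕ) where
  parts : ℕ
  toFun : Fin n → Fin parts
  surj : Function.Surjective toFun

/-- `Refines I J` : `J` refines `I`, i.e. each part of `I` is a union of consecutive
parts of `J` (there is a monotone map collapsing `J` onto `I`). -/
def Refines {n : ℕ} (I J : OrderedPartition n) : Prop :=
  ∃ q : Fin J.parts → Fin I.parts, Monotone q ∧ ∀ i, I.toFun i = q (J.toFun i)

/-- The set `E_n = {(i,j) : 1 ≤ i < j ≤ n}`. -/
abbrev Pairs (n : ℕ) := {p : Fin n × Fin n // p.1 < p.2}

/-- The sign vector `X^I` associated to an ordered partition `I`. -/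
def toSign {n : ℕ} (I : OrderedPartition n) : Pairs n → SignType := fun e =>
  if I.toFun e.1.1 < I.toFun e.1.2 then 1
  else if I.toFun e.1.2 < I.toFun e.1.1 then -1 else 0

/-- Euclidean scalar product on `ℝ^d`. -/
def dotR {d : ℕ} (u v : Fin d → ℝ) : ℝ := ∑ i, u i * v i

/-- `I` is a sweep of the configuration `A`: `I` is the ordered partition induced by
the ordered level sets of some linear functional `⟪u, ·⟫`. -/
def IsSweep {n d : ℕ} (A : Fin n → Fin d → ℝ) (I : OrderedPartition n) : Prop :=
  ∃ u : Fin d → ℝ, ∀ i j : Fin n, I.toFun i ≤ I.toFun j ↔ dotR u (A i) ≤ dotR u (A j)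

/-- Covector of the realizable oriented matroid of the vector configuration
`(a_j - a_i)_{(i,j) ∈ E_n}`: the sign vector of evaluations of a linear functional. -/
def IsCovectorOfDiffs {n d : ℕ} (A : Fin n → Fin d → ℝ) (X : Pairs n → SignType) : Prop :=
  ∃ u : Fin d → ℝ, ∀ e : Pairs n,
    X e = if dotR u (A e.1.1) < dotR u (A e.1.2) then 1
      else if dotR u (A e.1.2) < dotR u (A e.1.1) then -1 else 0

/-- The componentwise partial order on sign vectors, induced by `0 ≺ +` and `0 ≺ -`. -/
def covLE {E : Type*} (X Y : E → SignType) : Prop := ∀ e, X e = 0 ∨ X e = Y e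

/-! ### Auxiliary lemmas -/

section Aux

variable {n d : ℕ}

lemma toSign_eq_one_iff (I : OrderedPartition n) (e : Pairs n) :
    toSign I e = 1 ↔ I.toFun e.1.1 < I.toFun e.1.2 := by
  unfold toSign; split_ifs with h1 h2
  · exact iff_of_true rfl h1
  · exact iff_of_false (by decide) h1
  · exact iff_of_false (by decide) h1

lemma toSign_eq_neg_iff (I : OrderedPartition n) (e : Pairs n) :
    toSign I e = -1 ↔ I.toFun e.1.2 < I.toFun e.1.1 := by
  unfold toSign; split_ifs with h1 h2
  · exact iff_of_false (by decide) (asymm h1)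
  · exact iff_of_true rfl h2
  · exact iff_of_false (by decide) h2

lemma toSign_eq_zero_iff (I : OrderedPartition n) (e : Pairs n) :
    toSign I e = 0 ↔ I.toFun e.1.1 = I.toFun e.1.2 := by
  unfold toSign; split_ifs with h1 h2
  · exact iff_of_false (by decide) h1.ne
  · exact iff_of_false (by decide) h2.ne'
  · exact iff_of_true rfl (le_antisymm (not_lt.1 h2) (not_lt.1 h1))

/-- A card-counting lemma: functions with the same fibers have images of equal size. -/
lemma card_image_eq_of_iff {α β γ : Type*} [DecidableEq β] [DecidableEq γ]
    (T : Finset α) (f : α → β) (g : α → γ)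
    (h : ∀ a ∈ T, ∀ b ∈ T, f a = f b ↔ g a = g b) :
    (T.image f).card = (T.image g).card := by
  have h1 : (T.image fun a => (f a, g a)).image Prod.fst = T.image f := by
    rw [Finset.image_image]; rfl
  have h2 : (T.image fun a => (f a, g a)).image Prod.snd = T.image g := by
    rw [Finset.image_image]; rfl
  have i1 : Set.InjOn (Prod.fst : β × γ → β) ((T.image fun a => (f a, g a)) : Finset (β × γ)) := by
    intro x hx y hy hxy
    simp only [Finset.coe_image, Set.mem_image, Finset.mem_coe] at hx hy
    obtain ⟨a, ha, rfl⟩ := hx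
    obtain ⟨b, hb, rfl⟩ := hy
    simp only at hxy ⊢
    exact Prod.ext hxy (((h a ha b hb).1 hxy))
  have i2 : Set.InjOn (Prod.snd : β × γ → γ) ((T.image fun a => (f a, g a)) : Finset (β × γ)) := by
    intro x hx y hy hxy
    simp only [Finset.coe_image, Set.mem_image, Finset.mem_coe] at hx hy
    obtain ⟨a, ha, rfl⟩ := hx
    obtain ⟨b, hb, rfl⟩ := hy
    simp only at hxy ⊢
    exact Prod.ext (((h a ha b hb).2 hxy)) hxy
  calc (T.image f).card = ((T.image fun a => (f a, g a)).image Prod.fst).card := by rw [h1]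
    _ = (T.image fun a => (f a, g a)).card := Finset.card_image_of_injOn i1
    _ = ((T.image fun a => (f a, g a)).image Prod.snd).card :=
        (Finset.card_image_of_injOn i2).symm
    _ = (T.image g).card := by rw [h2]

/-- An ordered partition is determined by the comparison relation of its surjection. -/
lemma op_ext {I J : OrderedPartition n}
    (h : ∀ i j, I.toFun i ≤ I.toFun j ↔ J.toFun i ≤ J.toFun j) : I = J := by
  have hlt : ∀ i j, I.toFun i < I.toFun j ↔ J.toFun i < J.toFun j := fun i j => by
    rw [lt_iff_not_ge, lt_iff_not_ge, h]
  have heq : ∀ i j, I.toFun i = I.toFun j ↔ J.toFun i = J.toFun j := fun i j => by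
    rw [le_antisymm_iff, le_antisymm_iff, h, h]
  have hp : I.parts = J.parts := by
    have e1 : (Finset.univ.image I.toFun) = Finset.univ := by
      ext v; simp only [Finset.mem_image, Finset.mem_univ, iff_true, true_and]
      exact I.surj v
    have e2 : (Finset.univ.image J.toFun) = Finset.univ := by
      ext v; simp only [Finset.mem_image, Finset.mem_univ, iff_true, true_and]
      exact J.surj v
    have := card_image_eq_of_iff (Finset.univ : Finset (Fin n)) I.toFun J.toFun
      (fun a _ b _ => heq a b)
    rw [e1, e2, Finset.card_univ, Finset.card_univ, Fintype.card_fin, Fintype.card_fin] at this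
    exact this
  have hv : ∀ i, (I.toFun i : ℕ) = (J.toFun i : ℕ) := by
    intro i
    have e1 : Finset.Iio (I.toFun i) =
        Finset.image I.toFun (Finset.univ.filter fun j => J.toFun j < J.toFun i) := by
      ext v
      simp only [Finset.mem_Iio, Finset.mem_image, Finset.mem_filter, Finset.mem_univ]
      constructor
      · intro hv
        obtain ⟨j, rfl⟩ := I.surj v
        exact ⟨j, by simpa using (hlt j i).1 hv, rfl⟩
      · rintro ⟨j, hj, rfl⟩
        exact (hlt j i).2 (by simpa using hj)
    have e2 : Finset.Iio (J.toFun i) =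
        Finset.image J.toFun (Finset.univ.filter fun j => J.toFun j < J.toFun i) := by
      ext v
      simp only [Finset.mem_Iio, Finset.mem_image, Finset.mem_filter, Finset.mem_univ]
      constructor
      · intro hv
        obtain ⟨j, rfl⟩ := J.surj v
        exact ⟨j, by simpa using hv, rfl⟩
      · rintro ⟨j, hj, rfl⟩
        simpa using hj
    have hc := card_image_eq_of_iff (Finset.univ.filter fun j => J.toFun j < J.toFun i)
      I.toFun J.toFun (fun a _ b _ => heq a b)
    rw [← Fin.card_Iio (I.toFun i), ← Fin.card_Iio (J.toFun i), e1, e2]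
    exact hc
  obtain ⟨p, f, hf⟩ := I
  obtain ⟨p', g, hg⟩ := J
  dsimp only at hp hv
  subst hp
  have : f = g := funext fun i => Fin.ext (hv i)
  subst this
  rfl

/-- The canonical ordered partition of the level sets of `u`. -/
noncomputable def partOf (A : Fin n → Fin d → ℝ) (u : Fin d → ℝ) : OrderedPartition n where
  parts := (Finset.univ.image fun i => dotR u (A i)).card
  toFun i := ((Finset.univ.image fun i => dotR u (A i)).orderIsoOfFin rfl).symm
    ⟨dotR u (A i), Finset.mem_image_of_mem _ (Finset.mem_univ i)⟩
  surj := by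
    intro v
    have hv := (((Finset.univ.image fun i => dotR u (A i)).orderIsoOfFin rfl) v).2
    simp only [Finset.mem_image, Finset.mem_univ, true_and] at hv
    obtain ⟨i, hi⟩ := hv
    refine ⟨i, ?_⟩
    have : (⟨dotR u (A i), Finset.mem_image_of_mem _ (Finset.mem_univ i)⟩ :
        {x // x ∈ (Finset.univ.image fun i => dotR u (A i))}) =
        ((Finset.univ.image fun i => dotR u (A i)).orderIsoOfFin rfl) v := Subtype.ext hi
    simp only [this, OrderIso.symm_apply_apply]

lemma partOf_le_iff (A : Fin n → Fin d → ℝ) (u : Fin d → ℝ) (i j : Fin n) :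
    (partOf A u).toFun i ≤ (partOf A u).toFun j ↔ dotR u (A i) ≤ dotR u (A j) := by
  show ((Finset.univ.image fun i => dotR u (A i)).orderIsoOfFin rfl).symm _ ≤
    ((Finset.univ.image fun i => dotR u (A i)).orderIsoOfFin rfl).symm _ ↔ _
  rw [OrderIso.le_iff_le]
  rfl

lemma isSweep_partOf (A : Fin n → Fin d → ℝ) (u : Fin d → ℝ) : IsSweep A (partOf A u) :=
  ⟨u, fun i j => partOf_le_iff A u i j⟩

lemma toSign_covector {I : OrderedPartition n} {A : Fin n → Fin d → ℝ} {u : Fin d → ℝ}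
    (hu : ∀ i j : Fin n, I.toFun i ≤ I.toFun j ↔ dotR u (A i) ≤ dotR u (A j)) (e : Pairs n) :
    toSign I e = if dotR u (A e.1.1) < dotR u (A e.1.2) then 1
      else if dotR u (A e.1.2) < dotR u (A e.1.1) then -1 else 0 := by
  have h1 : I.toFun e.1.1 < I.toFun e.1.2 ↔ dotR u (A e.1.1) < dotR u (A e.1.2) := by
    rw [lt_iff_not_ge, lt_iff_not_ge, hu]
  have h2 : I.toFun e.1.2 < I.toFun e.1.1 ↔ dotR u (A e.1.2) < dotR u (A e.1.1) := by
    rw [lt_iff_not_ge, lt_iff_not_ge, hu]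
  unfold toSign
  simp only [h1, h2]

lemma refines_iff_covLE (I J : OrderedPartition n) :
    Refines I J ↔ covLE (toSign I) (toSign J) := by
  constructor
  · rintro ⟨q, hq, hIJ⟩ e
    obtain ⟨⟨i, j⟩, hij⟩ := e
    rcases lt_trichotomy (J.toFun i) (J.toFun j) with h | h | h
    · have hle : I.toFun i ≤ I.toFun j := by rw [hIJ, hIJ]; exact hq h.le
      rcases lt_or_eq_of_le hle with h' | h'
      · right
        rw [(toSign_eq_one_iff I ⟨(i, j), hij⟩).2 h', (toSign_eq_one_iff J ⟨(i, j), hij⟩).2 h]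
      · left; exact (toSign_eq_zero_iff I ⟨(i, j), hij⟩).2 h'
    · left
      refine (toSign_eq_zero_iff I ⟨(i, j), hij⟩).2 ?_
      rw [hIJ, hIJ, h]
    · have hle : I.toFun j ≤ I.toFun i := by rw [hIJ, hIJ]; exact hq h.le
      rcases lt_or_eq_of_le hle with h' | h'
      · right
        rw [(toSign_eq_neg_iff I ⟨(i, j), hij⟩).2 h', (toSign_eq_neg_iff J ⟨(i, j), hij⟩).2 h]
      · left; exact (toSign_eq_zero_iff I ⟨(i, j), hij⟩).2 h'.symm
  · intro h
    have key : ∀ i j : Fin n, J.toFun i ≤ J.toFun j → I.toFun i ≤ I.toFun j := by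
      intro i j hij
      rcases lt_trichotomy i j with hlt | heq | hgt
      · rcases h ⟨(i, j), hlt⟩ with h0 | he
        · exact ((toSign_eq_zero_iff I ⟨(i, j), hlt⟩).1 h0).le
        · rcases lt_or_eq_of_le hij with hj | hj
          · rw [(toSign_eq_one_iff J ⟨(i, j), hlt⟩).2 hj] at he
            exact ((toSign_eq_one_iff I ⟨(i, j), hlt⟩).1 he).le
          · rw [(toSign_eq_zero_iff J ⟨(i, j), hlt⟩).2 hj] at he
            exact ((toSign_eq_zero_iff I ⟨(i, j), hlt⟩).1 he).le
      · rw [heq]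
      · rcases h ⟨(j, i), hgt⟩ with h0 | he
        · exact ((toSign_eq_zero_iff I ⟨(j, i), hgt⟩).1 h0).ge
        · rcases lt_or_eq_of_le hij with hj | hj
          · rw [(toSign_eq_neg_iff J ⟨(j, i), hgt⟩).2 hj] at he
            exact ((toSign_eq_neg_iff I ⟨(j, i), hgt⟩).1 he).le
          · rw [(toSign_eq_zero_iff J ⟨(j, i), hgt⟩).2 hj.symm] at he
            exact ((toSign_eq_zero_iff I ⟨(j, i), hgt⟩).1 he).ge
    refine ⟨fun v => I.toFun (Function.surjInv J.surj v), ?_, ?_⟩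
    · intro v w hvw
      refine key _ _ ?_
      rw [Function.surjInv_eq J.surj v, Function.surjInv_eq J.surj w]
      exact hvw
    · intro i
      have hs : J.toFun (Function.surjInv J.surj (J.toFun i)) = J.toFun i :=
        Function.surjInv_eq J.surj (J.toFun i)
      exact le_antisymm (key _ _ hs.ge) (key _ _ hs.le)

lemma le_iff_of_toSign_eq {I J : OrderedPartition n} (h : toSign I = toSign J) :
    ∀ i j, I.toFun i ≤ I.toFun j ↔ J.toFun i ≤ J.toFun j := by
  intro i j
  rcases lt_trichotomy i j with hlt | heq | hgt
  · have := congrFun h ⟨(i, j), hlt⟩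
    rw [← not_lt, ← not_lt, not_iff_not, ← toSign_eq_neg_iff I ⟨(i, j), hlt⟩,
      ← toSign_eq_neg_iff J ⟨(i, j), hlt⟩, this]
  · simp [heq]
  · have := congrFun h ⟨(j, i), hgt⟩
    rw [← not_lt, ← not_lt, not_iff_not, ← toSign_eq_one_iff I ⟨(j, i), hgt⟩,
      ← toSign_eq_one_iff J ⟨(j, i), hgt⟩, this]

end Aux

/-- The map `I ↦ X^I` is a poset isomorphism between the poset of sweeps of `A`
ordered by refinement and the poset of covectors of the oriented matroid of the
differences `(a_j - a_i)` ordered componentwise. -/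
theorem sweeps_orderIso_covectors {n d : ℕ} (A : Fin n → Fin d → ℝ) :
    ∃ φ : {I : OrderedPartition n // IsSweep A I} ≃
        {X : Pairs n → SignType // IsCovectorOfDiffs A X},
      (∀ I, (φ I).1 = toSign I.1) ∧
      (∀ I J, Refines I.1 J.1 ↔ covLE ((φ I).1) ((φ J).1)) := by
  have hF : ∀ I : {I : OrderedPartition n // IsSweep A I}, IsCovectorOfDiffs A (toSign I.1) := by
    rintro ⟨I, u, hu⟩
    exact ⟨u, toSign_covector hu⟩
  have hbij : Function.Bijective
      (fun I : {I : OrderedPartition n // IsSweep A I} =>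
        (⟨toSign I.1, hF I⟩ : {X : Pairs n → SignType // IsCovectorOfDiffs A X})) := by
    constructor
    · rintro I J hIJ
      have hts : toSign I.1 = toSign J.1 := congrArg Subtype.val hIJ
      exact Subtype.ext (op_ext (le_iff_of_toSign_eq hts))
    · rintro ⟨X, u, hX⟩
      refine ⟨⟨partOf A u, isSweep_partOf A u⟩, Subtype.ext ?_⟩
      funext e
      show toSign (partOf A u) e = X e
      rw [toSign_covector (fun i j => partOf_le_iff A u i j) e, hX e]
  exact ⟨Equiv.ofBijective _ hbij, fun I => rfl, fun I J => refines_iff_covLE I.1 J.1⟩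
end

section
/- Let M be an oriented matroid on the ground set E_n = {(i,j) : 1 ≤ i < j ≤ n}. Every covector of M is a covector of the braid oriented matroid (the oriented matroid of the vectors e_j - e_i for (i,j) ∈ E_n) if and only if for every covector X of M and every triple 1 ≤ i < j < k ≤ n, the triple (X_{(i,j)}, X_{(j,k)}, X_{(i,k)}) is orthogonal to the sign vector (+,+,-), i.e., it avoids the fourteen patterns (+,+,-), (-,-,+), (0,+,-), (0,-,+), (+,0,-), (-,0,+), (+,+,0), (-,-,0), (0,0,-), (0,0,+), (0,+,0), (0,-,0), (+,0,0), (-,0,0). -/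
/-- Composition of sign vectors: `(X ∘ Y)_e = X_e` if `X_e ≠ 0`, else `Y_e`. -/
def signComp {E : Type*} (X Y : E → SignType) : E → SignType :=
  fun e => if X e = 0 then Y e else X e

/-- The covector axioms for oriented matroids: (V0) the zero vector belongs, (V1)
closure under negation, (V2) closure under composition, (V3) covector elimination. -/
def IsOrientedMatroid {E : Type*} (C : Set (E → SignType)) : Prop :=
  (fun _ => 0) ∈ C ∧
  (∀ X ∈ C, -X ∈ C) ∧
  (∀ X ∈ C, ∀ Y ∈ C, signComp X Y ∈ C) ∧
  (∀ X ∈ C, ∀ Y ∈ C, ∀ e, X e ≠ 0 → X e = -Y e →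
    ∃ Z ∈ C, Z e = 0 ∧ ∀ f, ¬(X f ≠ 0 ∧ X f = -Y f) → Z f = signComp X Y f)

/-- A covector of the braid oriented matroid on `E_n`: the sign vector obtained from
an ordered partition of `[n]` (given by a surjection `p`) via
`X_{(i,j)} = sign (p j - p i)`. -/
def IsBraidCovector {n : ℕ} (X : Pairs n → SignType) : Prop :=
  ∃ (l : ℕ) (p : Fin n → Fin l), Function.Surjective p ∧
    ∀ e : Pairs n, X e =
      if p e.1.1 < p e.1.2 then 1 else if p e.1.2 < p e.1.1 then -1 else 0

/-- The covectors `X^k` of the big oriented matroid of a sweep oriented matroid, on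
the ground set `[n] ∪ E_n`: for each covector `X`, with associated surjection
`p : [n] → [l]` (values of `p` are shifted by one to match the paper's `p_X : [n] → [l]`),
and each `1 ≤ k ≤ 2l+1`, the sign vector which is `-` on `i` with `p_X(i) ≤ ⌊(k-1)/2⌋`,
`+` on `i` with `p_X(i) > ⌊k/2⌋`, `0` on the remaining `i` (only for `k` even, where
`p_X(i) = k/2`), and agrees with `X` on `E_n`. -/
def BigCovectors {n : ℕ} (C : Set (Pairs n → SignType)) :
    Set ((Fin n ⊕ Pairs n) → SignType) :=
  { Z | ∃ X ∈ C, ∃ (l : ℕ) (p : Fin n → Fin l), Function.Surjective p ∧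
      (∀ e : Pairs n, X e =
        if p e.1.1 < p e.1.2 then 1 else if p e.1.2 < p e.1.1 then -1 else 0) ∧
      ∃ k : ℕ, 1 ≤ k ∧ k ≤ 2 * l + 1 ∧
        (∀ i : Fin n, Z (Sum.inl i) =
          if (p i : ℕ) + 1 ≤ (k - 1) / 2 then -1
          else if k / 2 < (p i : ℕ) + 1 then 1 else 0) ∧
        (∀ e : Pairs n, Z (Sum.inr e) = X e) }

/-- The little oriented matroid of a sweep oriented matroid: the restriction of its
big oriented matroid to the ground set `[n]`. -/
def LittleCovectors {n : ℕ} (C : Set (Pairs n → SignType)) : Set (Fin n → SignType) :=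
  { Y | ∃ Z ∈ BigCovectors C, ∀ i, Y i = Z (Sum.inl i) }

/-- There is a chain of `r+1` distinct covectors in the conformal order. -/
def HasChain {E : Type*} (C : Set (E → SignType)) (r : ℕ) : Prop :=
  ∃ c : Fin (r + 1) → (E → SignType), (∀ i, c i ∈ C) ∧
    ∀ i j : Fin (r + 1), i < j → covLE (c i) (c j) ∧ c i ≠ c j

/-- The set of covectors has rank `r`: maximal chains in the poset of covectors have
length `r`. -/
def HasRank {E : Type*} (C : Set (E → SignType)) (r : ℕ) : Prop :=
  HasChain C r ∧ ¬ HasChain C (r + 1)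

/-- Restriction of a set of covectors to a subset `F` of the ground set. -/
def restrictSet {E : Type*} (C : Set (E → SignType)) (F : Set E) : Set (F → SignType) :=
  { Y | ∃ X ∈ C, ∀ e : F, Y e = X e.1 }

/-- A flat of an oriented matroid: the zero set of a covector. -/
def IsFlat {E : Type*} (C : Set (E → SignType)) (F : Set E) : Prop :=
  ∃ X ∈ C, F = {e | X e = 0}

/-- Orthogonality of sign vectors: supports disjoint, or the restrictions to the common
support are neither equal nor opposite (there are coordinates where they agree and
coordinates where they are opposite, both nonzero). -/
def SignOrth {α : Type*} (f g : α → SignType) : Prop :=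
  (∀ a, f a = 0 ∨ g a = 0) ∨
  ((∃ a, f a ≠ 0 ∧ f a = g a) ∧ (∃ a, g a ≠ 0 ∧ f a = -g a))

/-- Covector of the braid oriented matroid realized by the vectors `e_j - e_i`,
`(i,j) ∈ E_n`: the sign vector `(sign(u_j - u_i))_{(i,j)}` of some `u ∈ ℝ^n`. -/
def IsRealizableBraidCovector {n : ℕ} (X : Pairs n → SignType) : Prop :=
  ∃ u : Fin n → ℝ, ∀ e : Pairs n,
    X e = if u e.1.1 < u e.1.2 then 1 else if u e.1.2 < u e.1.1 then -1 else 0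

/-! ### Auxiliary material for the proof -/

/-- The key "local transitivity" condition on a triple of signs `(a,b,c)`:
exactly the triples `(sgn p, sgn q, sgn (p+q))` for reals `p, q`. -/
def SweepAllowed (a b c : SignType) : Prop :=
  (a = 0 → c = b) ∧ (b = 0 → c = a) ∧ (a = 1 → b = 1 → c = 1) ∧ (a = -1 → b = -1 → c = -1)

lemma signOrth_iff_sweepAllowed (a b c : SignType) :
    SignOrth ![a, b, c] ![1, 1, -1] ↔ SweepAllowed a b c := by
  revert a b c; unfold SignOrth SweepAllowed; decide

lemma sweepAllowed_permA : ∀ a b c : SignType, SweepAllowed a b c → SweepAllowed c (-b) a := by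
  unfold SweepAllowed; decide
lemma sweepAllowed_permB : ∀ a b c : SignType, SweepAllowed a b c → SweepAllowed b (-c) (-a) := by
  unfold SweepAllowed; decide
lemma sweepAllowed_permC : ∀ a b c : SignType, SweepAllowed a b c → SweepAllowed (-a) c b := by
  unfold SweepAllowed; decide
lemma sweepAllowed_permD : ∀ a b c : SignType, SweepAllowed a b c → SweepAllowed (-c) a (-b) := by
  unfold SweepAllowed; decide
lemma sweepAllowed_permE : ∀ a b c : SignType, SweepAllowed a b c → SweepAllowed (-b) (-a) (-c) := by
  unfold SweepAllowed; decide
lemma sweepAllowed_triv1 : ∀ b : SignType, SweepAllowed 0 b b := by unfold SweepAllowed; decide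
lemma sweepAllowed_triv2 : ∀ a : SignType, SweepAllowed a 0 a := by unfold SweepAllowed; decide
lemma sweepAllowed_triv3 : ∀ a : SignType, SweepAllowed a (-a) 0 := by unfold SweepAllowed; decide
lemma sweepAllowed_mixed1 : ∀ c : SignType, SweepAllowed 1 (-1) c := by unfold SweepAllowed; decide
lemma sweepAllowed_mixed2 : ∀ c : SignType, SweepAllowed (-1) 1 c := by unfold SweepAllowed; decide

/-- The sign of `y - x` for reals, written with `if`s. -/
noncomputable def sweepSif (x y : ℝ) : SignType := if x < y then 1 else if y < x then -1 else 0

lemma sweepSif_pos {x y : ℝ} (h : x < y) : sweepSif x y = 1 := if_pos h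
lemma sweepSif_neg {x y : ℝ} (h : y < x) : sweepSif x y = -1 := by
  rw [sweepSif, if_neg (asymm h), if_pos h]
lemma sweepSif_self (x : ℝ) : sweepSif x x = 0 := by simp [sweepSif]

lemma sweepAllowed_sif (x y z : ℝ) :
    SweepAllowed (sweepSif x y) (sweepSif y z) (sweepSif x z) := by
  rcases lt_trichotomy x y with h | rfl | h
  · rcases lt_trichotomy y z with h' | rfl | h'
    · rw [sweepSif_pos h, sweepSif_pos h', sweepSif_pos (h.trans h')]
      exact ⟨by simp, by simp, fun _ _ => rfl, by simp⟩
    · rw [sweepSif_pos h, sweepSif_self]; exact sweepAllowed_triv2 _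
    · rw [sweepSif_pos h, sweepSif_neg h']; exact sweepAllowed_mixed1 _
  · rw [sweepSif_self]; exact sweepAllowed_triv1 _
  · rcases lt_trichotomy y z with h' | rfl | h'
    · rw [sweepSif_neg h, sweepSif_pos h']; exact sweepAllowed_mixed2 _
    · rw [sweepSif_neg h, sweepSif_self]; exact sweepAllowed_triv2 _
    · rw [sweepSif_neg h, sweepSif_neg h', sweepSif_neg (h'.trans h)]
      exact ⟨by simp, by simp, by simp, fun _ _ => rfl⟩

/-- The skew-symmetric extension of a sign vector on `E_n` to all pairs. -/
def sweepSgn {n : ℕ} (X : Pairs n → SignType) (i j : Fin n) : SignType :=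
  if h : i < j then X ⟨(i, j), h⟩ else if h' : j < i then -X ⟨(j, i), h'⟩ else 0

lemma sweepSgn_irrefl {n : ℕ} (X : Pairs n → SignType) (i : Fin n) : sweepSgn X i i = 0 := by
  simp [sweepSgn]

lemma sweepSgn_neg {n : ℕ} (X : Pairs n → SignType) (i j : Fin n) :
    -sweepSgn X i j = sweepSgn X j i := by
  unfold sweepSgn
  rcases lt_trichotomy i j with h | rfl | h
  · rw [dif_pos h, dif_neg (asymm h), dif_pos h]
  · simp
  · rw [dif_neg (asymm h), dif_pos h, dif_pos h, neg_neg]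

lemma sweepSgn_allowed {n : ℕ} (X : Pairs n → SignType)
    (hX : ∀ i j k : Fin n, ∀ hij : i < j, ∀ hjk : j < k,
      SignOrth
        ![X ⟨(i, j), hij⟩, X ⟨(j, k), hjk⟩, X ⟨(i, k), lt_trans hij hjk⟩]
        ![1, 1, -1]) :
    ∀ i j k : Fin n, SweepAllowed (sweepSgn X i j) (sweepSgn X j k) (sweepSgn X i k) := by
  have base : ∀ i j k : Fin n, ∀ hij : i < j, ∀ hjk : j < k,
      SweepAllowed (sweepSgn X i j) (sweepSgn X j k) (sweepSgn X i k) := by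
    intro i j k hij hjk
    have h := (signOrth_iff_sweepAllowed _ _ _).1 (hX i j k hij hjk)
    simpa [sweepSgn, hij, hjk, lt_trans hij hjk] using h
  intro i j k
  rcases lt_trichotomy i j with hij | rfl | hji
  · rcases lt_trichotomy j k with hjk | rfl | hkj
    · exact base i j k hij hjk
    · rw [sweepSgn_irrefl]; exact sweepAllowed_triv2 _
    · rcases lt_trichotomy i k with hik | rfl | hki
      · have h := sweepAllowed_permA _ _ _ (base i k j hik hkj)
        rwa [sweepSgn_neg] at h
      · have h := sweepAllowed_triv3 (sweepSgn X i j)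
        rw [sweepSgn_neg] at h
        rw [sweepSgn_irrefl]; exact h
      · have h := sweepAllowed_permB _ _ _ (base k i j hki hij)
        rwa [sweepSgn_neg, sweepSgn_neg] at h
  · rw [sweepSgn_irrefl]; exact sweepAllowed_triv1 _
  · rcases lt_trichotomy i k with hik | rfl | hki
    · have h := sweepAllowed_permC _ _ _ (base j i k hji hik)
      rwa [sweepSgn_neg] at h
    · have h := sweepAllowed_triv3 (sweepSgn X i j)
      rw [sweepSgn_neg] at h
      rw [sweepSgn_irrefl]; exact h
    · rcases lt_trichotomy j k with hjk | rfl | hkj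
      · have h := sweepAllowed_permD _ _ _ (base j k i hjk hki)
        rwa [sweepSgn_neg, sweepSgn_neg] at h
      · rw [sweepSgn_irrefl]; exact sweepAllowed_triv2 _
      · have h := sweepAllowed_permE _ _ _ (base k j i hkj hji)
        rwa [sweepSgn_neg, sweepSgn_neg, sweepSgn_neg] at h

/-- An oriented matroid `M` on `E_n` is a sweep oriented matroid (all covectors are
braid covectors) iff every covector satisfies the transitivity condition: for all
`i < j < k` the triple `(X_{(i,j)}, X_{(j,k)}, X_{(i,k)})` is orthogonal to `(+,+,-)`. -/
theorem sweepOM_iff_transitivity {n : ℕ} (C : Set (Pairs n → SignType))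
    (hC : IsOrientedMatroid C) :
    (∀ X ∈ C, IsRealizableBraidCovector X) ↔
    (∀ X ∈ C, ∀ i j k : Fin n, ∀ hij : i < j, ∀ hjk : j < k,
      SignOrth
        ![X ⟨(i, j), hij⟩, X ⟨(j, k), hjk⟩, X ⟨(i, k), lt_trans hij hjk⟩]
        ![1, 1, -1]) := by
  constructor
  · intro h X hXC i j k hij hjk
    obtain ⟨u, hu⟩ := h X hXC
    rw [hu ⟨(i, j), hij⟩, hu ⟨(j, k), hjk⟩, hu ⟨(i, k), lt_trans hij hjk⟩,
      signOrth_iff_sweepAllowed]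
    exact sweepAllowed_sif (u i) (u j) (u k)
  · intro h X hXC
    have hA := sweepSgn_allowed X (h X hXC)
    set u : Fin n → ℝ :=
      fun i => ((Finset.univ.filter fun c => sweepSgn X c i = 1).card : ℝ) with hudef
    have mono : ∀ a b : Fin n, sweepSgn X a b = 1 → u a < u b := by
      intro a b hab
      have hsubset : (Finset.univ.filter fun c => sweepSgn X c a = 1) ⊆
          (Finset.univ.filter fun c => sweepSgn X c b = 1) := by
        intro c hc
        rw [Finset.mem_filter] at hc ⊢
        exact ⟨hc.1, (hA c a b).2.2.1 hc.2 hab⟩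
      have hss : (Finset.univ.filter fun c => sweepSgn X c a = 1) ⊂
          (Finset.univ.filter fun c => sweepSgn X c b = 1) := by
        rw [Finset.ssubset_iff_of_subset hsubset]
        refine ⟨a, ?_, ?_⟩
        · rw [Finset.mem_filter]; exact ⟨Finset.mem_univ a, hab⟩
        · rw [Finset.mem_filter]
          intro hmem
          rw [sweepSgn_irrefl] at hmem
          exact absurd hmem.2 (by decide)
      have := Finset.card_lt_card hss
      show ((Finset.univ.filter fun c => sweepSgn X c a = 1).card : ℝ) <
        ((Finset.univ.filter fun c => sweepSgn X c b = 1).card : ℝ)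
      exact_mod_cast this
    have eqc : ∀ a b : Fin n, sweepSgn X a b = 0 → u a = u b := by
      intro a b hab
      have : (Finset.univ.filter fun c => sweepSgn X c a = 1) =
          (Finset.univ.filter fun c => sweepSgn X c b = 1) := by
        apply Finset.filter_congr
        intro c _
        rw [(hA c a b).2.1 hab]
      show ((Finset.univ.filter fun c => sweepSgn X c a = 1).card : ℝ) =
        ((Finset.univ.filter fun c => sweepSgn X c b = 1).card : ℝ)
      rw [this]
    refine ⟨u, ?_⟩
    rintro ⟨⟨i, j⟩, hij⟩
    have hx : X ⟨(i, j), hij⟩ = sweepSgn X i j := by rw [sweepSgn, dif_pos hij]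
    cases hs : sweepSgn X i j with
    | zero =>
      have heq : u i = u j := eqc i j hs
      rw [hx, hs]
      simp only [heq, lt_irrefl, if_false]
      rfl
    | pos =>
      have hlt : u i < u j := mono i j hs
      rw [hx, hs]
      simp only [if_pos hlt]
      rfl
    | neg =>
      have hji : sweepSgn X j i = 1 := by rw [← sweepSgn_neg, hs]; rfl
      have hlt : u j < u i := mono j i hji
      rw [hx, hs]
      simp only [if_neg (asymm hlt), if_pos hlt]
      rfl
end

section
/- Let C be the set of covectors of a sweep oriented matroid on E_n (each covector X corresponding to an ordered partition with surjection p_X : [n] → [l_X]). For each X ∈ C and 1 ≤ k ≤ 2·l_X + 1, define the sign vector X^k ∈ {+,-,0}^{[n] ∪ E_n} by: X^k_i = - if p_X(i) ≤ ⌊(k-1)/2⌋, X^k_i = + if p_X(i) > ⌊k/2⌋, X^k_i = 0 if k is even and p_X(i) = k/2; and X^k_{(i,j)} = X_{(i,j)}. Then the collection {X^k : X ∈ C, 1 ≤ k ≤ 2·l_X + 1} satisfies the covector axioms of an oriented matroid (contains the zero vector, is closed under negation and composition, and satisfies covector elimination). -/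
namespace SweepAux

/-- sign of comparison of naturals -/
def sgn (a b : ℕ) : SignType := if a < b then 1 else if b < a then -1 else 0

lemma sgn_eq_one_iff {a b : ℕ} : sgn a b = 1 ↔ a < b := by
  unfold sgn; split_ifs with h1 h2
  · exact ⟨fun _ => h1, fun _ => rfl⟩
  · exact ⟨fun h => absurd h (by decide), fun h => absurd h h1⟩
  · exact ⟨fun h => absurd h (by decide), fun h => absurd h h1⟩

lemma sgn_eq_neg_one_iff {a b : ℕ} : sgn a b = -1 ↔ b < a := by
  unfold sgn; split_ifs with h1 h2
  · exact ⟨fun h => absurd h (by decide), fun h => absurd h1 (by omega)⟩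
  · exact ⟨fun _ => h2, fun _ => rfl⟩
  · exact ⟨fun h => absurd h (by decide), fun h => absurd h h2⟩

lemma sgn_eq_zero_iff {a b : ℕ} : sgn a b = 0 ↔ a = b := by
  unfold sgn; split_ifs with h1 h2
  · exact ⟨fun h => absurd h (by decide), fun h => absurd h1 (by omega)⟩
  · exact ⟨fun h => absurd h (by decide), fun h => absurd h2 (by omega)⟩
  · exact ⟨fun _ => by omega, fun _ => rfl⟩

lemma sgn_swap (a b : ℕ) : sgn b a = -sgn a b := by
  unfold sgn; split_ifs <;> first | rfl | omega

variable {n : ℕ}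

/-- the full relation on `Fin n` induced by a sign vector on pairs -/
def xrel (X : Pairs n → SignType) (i j : Fin n) : SignType :=
  if h : i < j then X ⟨(i, j), h⟩ else if h' : j < i then -X ⟨(j, i), h'⟩ else 0

lemma xrel_swap (X : Pairs n → SignType) (i j : Fin n) : xrel X j i = -xrel X i j := by
  unfold xrel
  rcases lt_trichotomy i j with h | h | h
  · rw [dif_neg (asymm h), dif_pos h, dif_pos h]
  · subst h; simp
  · rw [dif_pos h, dif_neg (asymm h), dif_pos h, neg_neg]

lemma xrel_self (X : Pairs n → SignType) (i : Fin n) : xrel X i i = 0 := by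
  unfold xrel; rw [dif_neg (lt_irrefl i), dif_neg (lt_irrefl i)]

lemma xrel_pair (X : Pairs n → SignType) (f : Pairs n) :
    xrel X f.1.1 f.1.2 = X f := by
  unfold xrel
  rw [dif_pos f.2]

/-- a representation of a braid covector -/
def IsRep (X : Pairs n → SignType) {l : ℕ} (p : Fin n → Fin l) : Prop :=
  ∀ e : Pairs n, X e =
    if p e.1.1 < p e.1.2 then 1 else if p e.1.2 < p e.1.1 then -1 else 0

lemma IsRep.xrel_eq {X : Pairs n → SignType} {l : ℕ} {p : Fin n → Fin l}
    (h : IsRep X p) (i j : Fin n) : xrel X i j = sgn (p i) (p j) := by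
  have key : ∀ (f : Pairs n), X f = sgn (p f.1.1) (p f.1.2) := by
    intro f
    rw [h f]
    unfold sgn
    simp only [Fin.lt_def]
  unfold xrel
  rcases lt_trichotomy i j with hij | hij | hij
  · rw [dif_pos hij, key ⟨(i,j), hij⟩]
  · subst hij; rw [dif_neg (lt_irrefl i), dif_neg (lt_irrefl i)]
    rw [eq_comm, sgn_eq_zero_iff]
  · rw [dif_neg (asymm hij), dif_pos hij, key ⟨(j,i), hij⟩]
    show -(sgn ((p j : ℕ)) (p i)) = _
    rw [sgn_swap, neg_neg]

/-- compatibility of a sign vector on `[n]` with a braid covector -/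
def Compat (X : Pairs n → SignType) (w : Fin n → SignType) : Prop :=
  ∀ i j : Fin n, (w i < w j → xrel X i j = 1) ∧
    (w i = 0 → w j = 0 → xrel X i j = 0)

lemma Compat.lt {X : Pairs n → SignType} {w : Fin n → SignType} (h : Compat X w)
    {i j : Fin n} (hw : w i < w j) : xrel X i j = 1 := (h i j).1 hw

lemma Compat.gt {X : Pairs n → SignType} {w : Fin n → SignType} (h : Compat X w)
    {i j : Fin n} (hw : w j < w i) : xrel X i j = -1 := by
  have := (h j i).1 hw
  rw [xrel_swap] at this
  rw [← neg_neg (xrel X i j), this]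

lemma Compat.zero {X : Pairs n → SignType} {w : Fin n → SignType} (h : Compat X w)
    {i j : Fin n} (hi : w i = 0) (hj : w j = 0) : xrel X i j = 0 := (h i j).2 hi hj


lemma isRep_of_braid {X : Pairs n → SignType} (h : IsBraidCovector X) :
    ∃ (l : ℕ) (p : Fin n → Fin l), Function.Surjective p ∧ IsRep X p := h

/-- characterization of membership in `BigCovectors` -/
lemma mem_big_iff {C : Set (Pairs n → SignType)} (hsweep : ∀ X ∈ C, IsBraidCovector X)
    (Z : (Fin n ⊕ Pairs n) → SignType) :
    Z ∈ BigCovectors C ↔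
      ∃ X ∈ C, (∀ e, Z (Sum.inr e) = X e) ∧ Compat X (fun i => Z (Sum.inl i)) := by
  constructor
  · rintro ⟨X, hXC, l, p, hsurj, hrep, k, hk1, hk2, hw, hE⟩
    refine ⟨X, hXC, hE, ?_⟩
    have hx := IsRep.xrel_eq (X := X) (p := p) hrep
    intro i j
    constructor
    · intro hlt
      rw [hx i j, sgn_eq_one_iff]
      simp only [hw i, hw j] at hlt
      split_ifs at hlt <;> first | exact absurd hlt (by decide) | omega
    · intro hzi hzj
      simp only at hzi hzj
      rw [hw i] at hzi; rw [hw j] at hzj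
      rw [hx i j, sgn_eq_zero_iff]
      split_ifs at hzi <;> split_ifs at hzj <;>
        first | exact absurd hzi (by decide) | exact absurd hzj (by decide) | omega
  · rintro ⟨X, hXC, hE, hcompat⟩
    obtain ⟨l, p, hsurj, hrep⟩ := isRep_of_braid (hsweep X hXC)
    set w : Fin n → SignType := fun i => Z (Sum.inl i) with hwdef
    have hx := IsRep.xrel_eq (X := X) (p := p) hrep
    have hord1 : ∀ i j, w i < w j → (p i : ℕ) < (p j : ℕ) := by
      intro i j h
      have := hcompat.lt h
      rw [hx i j, sgn_eq_one_iff] at this; exact this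
    have hord0 : ∀ i j, w i = 0 → w j = 0 → (p i : ℕ) = (p j : ℕ) := by
      intro i j hi hj
      have := hcompat.zero hi hj
      rw [hx i j, sgn_eq_zero_iff] at this; exact this
    refine ⟨X, hXC, l, p, hsurj, hrep, ?_⟩
    by_cases hz : ∃ i, w i = 0
    · obtain ⟨i₀, hi₀⟩ := hz
      refine ⟨2 * (p i₀ : ℕ) + 2, by omega, by have := (p i₀).isLt; omega, ?_, hE⟩
      intro i
      show w i = _
      have e1 : (2 * (p i₀ : ℕ) + 2 - 1) / 2 = (p i₀ : ℕ) := by omega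
      have e2 : (2 * (p i₀ : ℕ) + 2) / 2 = (p i₀ : ℕ) + 1 := by omega
      rw [e1, e2]
      cases hwi : w i with
      | neg =>
        have : (p i : ℕ) < (p i₀ : ℕ) := hord1 i i₀ (by rw [hwi, hi₀]; decide)
        rw [if_pos (by omega)]; rfl
      | zero =>
        have : (p i : ℕ) = (p i₀ : ℕ) := hord0 i i₀ hwi hi₀
        rw [if_neg (by omega), if_neg (by omega)]; rfl
      | pos =>
        have : (p i₀ : ℕ) < (p i : ℕ) := hord1 i₀ i (by rw [hwi, hi₀]; decide)
        rw [if_neg (by omega), if_pos (by omega)]; rfl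
    · push_neg at hz
      classical
      set T : Finset (Fin l) := Finset.univ.filter (fun v => ∀ i, p i = v → w i = SignType.neg)
        with hT
      -- membership: v ∈ T ↔ all (equivalently some) preimages have sign neg
      have hmemT : ∀ v : Fin l, v ∈ T ↔ ∀ i, p i = v → w i = SignType.neg := by
        intro v; simp [hT]
      have hdown : ∀ v v' : Fin l, v' ≤ v → v ∈ T → v' ∈ T := by
        intro v v' hle hv
        rw [hmemT] at hv ⊢
        intro i hpi
        cases hwi : w i with
        | neg => rfl
        | zero => exact absurd hwi (hz i)
        | pos =>
          obtain ⟨j, hj⟩ := hsurj v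
          have hwj : w j = SignType.neg := hv j hj
          have : (p j : ℕ) < (p i : ℕ) := hord1 j i (by rw [hwi, hwj]; decide)
          rw [hpi, hj] at this
          exact absurd this (by exact Nat.not_lt.mpr (Fin.le_def.mp hle))
      have hcardIic : ∀ v : Fin l, (Finset.Iic v).card = (v : ℕ) + 1 := by
        intro v; simp
      have hcardIio : ∀ v : Fin l, (Finset.Iio v).card = (v : ℕ) := by
        intro v; simp
      have hiff : ∀ v : Fin l, v ∈ T ↔ (v : ℕ) < T.card := by
        intro v
        constructor
        · intro hv
          have hsub : Finset.Iic v ⊆ T := fun u hu => hdown v u (Finset.mem_Iic.mp hu) hv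
          have := Finset.card_le_card hsub
          rw [hcardIic] at this; omega
        · intro hlt
          by_contra hv
          have hsub : T ⊆ Finset.Iio v := by
            intro u hu
            rw [Finset.mem_Iio]
            by_contra hge
            exact hv (hdown u v (le_of_not_gt hge) hu)
          have := Finset.card_le_card hsub
          rw [hcardIio] at this; omega
      refine ⟨2 * T.card + 1, by omega, ?_, ?_, hE⟩
      · have : T.card ≤ l := by
          simpa using Finset.card_le_card (Finset.subset_univ T)
        omega
      intro i
      show w i = _
      have e1 : (2 * T.card + 1 - 1) / 2 = T.card := by omega
      have e2 : (2 * T.card + 1) / 2 = T.card := by omega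
      rw [e1, e2]
      cases hwi : w i with
      | zero => exact absurd hwi (hz i)
      | neg =>
        have hv : p i ∈ T := by
          rw [hmemT]
          intro j hpj
          cases hwj : w j with
          | neg => rfl
          | zero => exact absurd hwj (hz j)
          | pos =>
            have : (p i : ℕ) < (p j : ℕ) := hord1 i j (by rw [hwi, hwj]; decide)
            rw [hpj] at this; omega
        rw [hiff] at hv
        rw [if_pos (by omega)]; rfl
      | pos =>
        have hv : p i ∉ T := by
          rw [hmemT]
          intro hall
          exact absurd (hall i rfl) (by rw [hwi]; decide)
        rw [hiff] at hv
        rw [if_neg (by omega), if_pos (by omega)]; rfl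


lemma xrel_neg (X : Pairs n → SignType) (i j : Fin n) :
    xrel (-X) i j = -xrel X i j := by
  unfold xrel
  rcases lt_trichotomy i j with h | h | h
  · rw [dif_pos h, dif_pos h]; rfl
  · subst h; rw [dif_neg (lt_irrefl i), dif_neg (lt_irrefl i), dif_neg (lt_irrefl i),
      dif_neg (lt_irrefl i), neg_zero]
  · rw [dif_neg (asymm h), dif_pos h, dif_neg (asymm h), dif_pos h]; rfl

lemma xrel_comp (X Y : Pairs n → SignType) (i j : Fin n) :
    xrel (signComp X Y) i j = if xrel X i j = 0 then xrel Y i j else xrel X i j := by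
  have hnz : ∀ a : SignType, (-a = 0) ↔ a = 0 := by decide
  unfold xrel signComp
  rcases lt_trichotomy i j with h | h | h
  · rw [dif_pos h, dif_pos h, dif_pos h]
  · subst h
    simp only [dif_neg (lt_irrefl i)]
    simp
  · simp only [dif_neg (asymm h), dif_pos h]
    rcases eq_or_ne (X ⟨(j, i), h⟩) 0 with h0 | h0
    · rw [h0]; simp
    · rw [if_neg h0, if_neg (fun hh => h0 ((hnz _).mp hh))]

lemma zero_mem_big {C : Set (Pairs n → SignType)} (hOM : IsOrientedMatroid C)
    (hsweep : ∀ X ∈ C, IsBraidCovector X) :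
    (fun _ => 0) ∈ BigCovectors C := by
  rw [mem_big_iff hsweep]
  refine ⟨fun _ => 0, hOM.1, fun e => rfl, ?_⟩
  intro i j
  constructor
  · intro h; exact absurd h (lt_irrefl 0)
  · intro _ _
    unfold xrel
    rcases lt_trichotomy i j with h | h | h
    · rw [dif_pos h]
    · subst h; rw [dif_neg (lt_irrefl i), dif_neg (lt_irrefl i)]
    · rw [dif_neg (asymm h), dif_pos h, neg_zero]

lemma neg_mem_big {C : Set (Pairs n → SignType)} (hOM : IsOrientedMatroid C)
    (hsweep : ∀ X ∈ C, IsBraidCovector X) {Z : (Fin n ⊕ Pairs n) → SignType}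
    (hZ : Z ∈ BigCovectors C) : -Z ∈ BigCovectors C := by
  rw [mem_big_iff hsweep] at hZ ⊢
  obtain ⟨X, hXC, hE, hc⟩ := hZ
  refine ⟨-X, hOM.2.1 X hXC, fun e => by simp [hE e], ?_⟩
  intro i j
  constructor
  · intro hlt
    simp only [Pi.neg_apply] at hlt
    have h1 : Z (Sum.inl j) < Z (Sum.inl i) := by
      revert hlt
      generalize Z (Sum.inl i) = a; generalize Z (Sum.inl j) = b
      revert a b; decide
    have := hc.gt h1
    rw [xrel_neg, this]; rfl
  · intro hi hj
    simp only [Pi.neg_apply] at hi hj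
    have hi' : Z (Sum.inl i) = 0 := by
      revert hi; generalize Z (Sum.inl i) = a; revert a; decide
    have hj' : Z (Sum.inl j) = 0 := by
      revert hj; generalize Z (Sum.inl j) = a; revert a; decide
    rw [xrel_neg, hc.zero hi' hj', neg_zero]

lemma comp_mem_big {C : Set (Pairs n → SignType)} (hOM : IsOrientedMatroid C)
    (hsweep : ∀ X ∈ C, IsBraidCovector X) {Z W : (Fin n ⊕ Pairs n) → SignType}
    (hZ : Z ∈ BigCovectors C) (hW : W ∈ BigCovectors C) :
    signComp Z W ∈ BigCovectors C := by
  rw [mem_big_iff hsweep] at hZ hW ⊢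
  obtain ⟨X, hXC, hEX, hcX⟩ := hZ
  obtain ⟨Y, hYC, hEY, hcY⟩ := hW
  refine ⟨signComp X Y, hOM.2.2.1 X hXC Y hYC, fun e => by
    show (if Z (Sum.inr e) = 0 then W (Sum.inr e) else Z (Sum.inr e)) = _
    rw [hEX e, hEY e]; rfl, ?_⟩
  set w : Fin n → SignType := fun i => Z (Sum.inl i)
  set w' : Fin n → SignType := fun i => W (Sum.inl i)
  intro i j
  have hcomp : ∀ i' : Fin n, signComp Z W (Sum.inl i') =
      (if w i' = 0 then w' i' else w i') := fun _ => rfl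
  have hlow : ∀ a : SignType, ¬ a < SignType.neg := by decide
  have hhigh : ∀ a : SignType, ¬ SignType.pos < a := by decide
  constructor
  · intro hlt
    simp only [hcomp] at hlt
    rw [xrel_comp]
    cases hwi : w i with
    | neg =>
      rw [if_neg (show w i ≠ 0 by rw [hwi]; decide)] at hlt
      cases hwj : w j with
      | neg =>
        rw [if_neg (show w j ≠ 0 by rw [hwj]; decide), hwi, hwj] at hlt
        exact absurd hlt (by decide)
      | zero =>
        have h1 : xrel X i j = 1 := hcX.lt (by rw [hwi, hwj]; decide)
        rw [if_neg (by rw [h1]; decide), h1]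
      | pos =>
        have h1 : xrel X i j = 1 := hcX.lt (by rw [hwi, hwj]; decide)
        rw [if_neg (by rw [h1]; decide), h1]
    | zero =>
      rw [if_pos (show w i = 0 from hwi)] at hlt
      cases hwj : w j with
      | neg =>
        rw [if_neg (show w j ≠ 0 by rw [hwj]; decide), hwj] at hlt
        exact absurd hlt (hlow _)
      | zero =>
        rw [if_pos (show w j = 0 from hwj)] at hlt
        have h0 : xrel X i j = 0 := hcX.zero hwi hwj
        have h1 : xrel Y i j = 1 := hcY.lt hlt
        rw [if_pos h0, h1]
      | pos =>
        have h1 : xrel X i j = 1 := hcX.lt (by rw [hwi, hwj]; decide)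
        rw [if_neg (by rw [h1]; decide), h1]
    | pos =>
      rw [if_neg (show w i ≠ 0 by rw [hwi]; decide), hwi] at hlt
      cases hwj : w j with
      | neg =>
        rw [if_neg (show w j ≠ 0 by rw [hwj]; decide), hwj] at hlt
        exact absurd hlt (by decide)
      | zero =>
        rw [if_pos (show w j = 0 from hwj)] at hlt
        exact absurd hlt (hhigh _)
      | pos =>
        rw [if_neg (show w j ≠ 0 by rw [hwj]; decide), hwj] at hlt
        exact absurd hlt (by decide)
  · intro hi hj
    simp only [hcomp] at hi hj
    have hwi : w i = 0 := by
      by_contra hne; rw [if_neg hne] at hi; exact hne hi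
    have hwj : w j = 0 := by
      by_contra hne; rw [if_neg hne] at hj; exact hne hj
    rw [if_pos hwi] at hi; rw [if_pos hwj] at hj
    rw [xrel_comp, hcX.zero hwi hwj, if_pos rfl, hcY.zero hi hj]


/-! ### infrastructure for elimination -/

def SepP (X Y : Pairs n → SignType) (f : Pairs n) : Prop := X f ≠ 0 ∧ X f = -Y f

instance {X Y : Pairs n → SignType} {f : Pairs n} : Decidable (SepP X Y f) :=
  inferInstanceAs (Decidable (X f ≠ 0 ∧ X f = -Y f))

def SepRel (X Y : Pairs n → SignType) (i j : Fin n) : Prop :=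
  xrel X i j ≠ 0 ∧ xrel X i j = -(xrel Y i j)

def AgreeP (X Y V : Pairs n → SignType) : Prop :=
  ∀ f, ¬ SepP X Y f → V f = signComp X Y f

lemma st_opp : ∀ a b : SignType, (a ≠ 0 ∧ a = -b) ↔ (-a ≠ 0 ∧ -a = -(-b)) := by decide

lemma st_neg_zero : ∀ a : SignType, -a = 0 ↔ a = 0 := by decide

lemma st_self_neg : ∀ a : SignType, a = -a → a = 0 := by decide

lemma st_two_nonzero : ∀ a b : SignType, a ≠ 0 → b ≠ 0 → a ≠ -b → a = b := by decide

lemma sepRel_symm {X Y : Pairs n → SignType} {i j : Fin n} (h : SepRel X Y i j) :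
    SepRel X Y j i := by
  obtain ⟨h1, h2⟩ := h
  constructor
  · rw [xrel_swap X i j]
    exact fun hh => h1 ((st_neg_zero _).mp hh)
  · rw [xrel_swap X i j, xrel_swap Y i j, h2]

lemma sepRel_pair_iff {X Y : Pairs n → SignType} (f : Pairs n) :
    SepRel X Y f.1.1 f.1.2 ↔ SepP X Y f := by
  rw [SepRel, SepP, xrel_pair, xrel_pair]

lemma agree_xrel {X Y V : Pairs n → SignType} (hag : AgreeP X Y V) {i j : Fin n}
    (hns : ¬ SepRel X Y i j) : xrel V i j = xrel (signComp X Y) i j := by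
  rcases lt_trichotomy i j with h | h | h
  · have := hag ⟨(i, j), h⟩ (fun hc => hns ((sepRel_pair_iff ⟨(i, j), h⟩).mpr hc))
    unfold xrel
    rw [dif_pos h, dif_pos h, this]
  · subst h
    unfold xrel
    rw [dif_neg (lt_irrefl i), dif_neg (lt_irrefl i), dif_neg (lt_irrefl i),
      dif_neg (lt_irrefl i)]
  · have hns' : ¬ SepRel X Y j i := fun hc => hns (sepRel_symm hc)
    have := hag ⟨(j, i), h⟩ (fun hc => hns' ((sepRel_pair_iff ⟨(j, i), h⟩).mpr hc))
    unfold xrel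
    rw [dif_neg (asymm h), dif_pos h, dif_neg (asymm h), dif_pos h, this]

/-- elimination in `C`, phrased with `xrel` -/
lemma elim_xrel {C : Set (Pairs n → SignType)} (hOM : IsOrientedMatroid C)
    {X Y : Pairs n → SignType} (hX : X ∈ C) (hY : Y ∈ C) {i j : Fin n}
    (hxv : xrel X i j = 1) (hyv : xrel Y i j = -1) :
    ∃ V ∈ C, xrel V i j = 0 ∧ AgreeP X Y V := by
  rcases lt_trichotomy i j with h | h | h
  · have hx' : X ⟨(i, j), h⟩ = 1 := by rw [← xrel_pair X ⟨(i, j), h⟩]; exact hxv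
    have hy' : Y ⟨(i, j), h⟩ = -1 := by rw [← xrel_pair Y ⟨(i, j), h⟩]; exact hyv
    obtain ⟨V, hVC, hV0, hVa⟩ := hOM.2.2.2 X hX Y hY ⟨(i, j), h⟩
      (by rw [hx']; decide) (by rw [hx', hy']; decide)
    exact ⟨V, hVC, by unfold xrel; rw [dif_pos h]; exact hV0, hVa⟩
  · subst h; rw [xrel_self] at hxv; exact absurd hxv (by decide)
  · have hx' : X ⟨(j, i), h⟩ = -1 := by
      have h1 := xrel_swap X i j; rw [hxv] at h1
      rw [← xrel_pair X ⟨(j, i), h⟩]; exact h1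
    have hy' : Y ⟨(j, i), h⟩ = 1 := by
      have h1 := xrel_swap Y i j; rw [hyv, neg_neg] at h1
      rw [← xrel_pair Y ⟨(j, i), h⟩]; exact h1
    obtain ⟨V, hVC, hV0, hVa⟩ := hOM.2.2.2 X hX Y hY ⟨(j, i), h⟩
      (by rw [hx']; decide) (by rw [hx', hy'])
    refine ⟨V, hVC, ?_, hVa⟩
    unfold xrel
    rw [dif_neg (asymm h), dif_pos h, hV0, neg_zero]

lemma signComp_eq_zero {X Y : Pairs n → SignType} {f : Pairs n}
    (h : signComp X Y f = 0) : X f = 0 ∧ Y f = 0 := by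
  unfold signComp at h
  by_cases h0 : X f = 0
  · rw [if_pos h0] at h; exact ⟨h0, h⟩
  · rw [if_neg h0] at h; exact absurd h h0

lemma signComp_comm_off {X Y : Pairs n → SignType} {f : Pairs n} (h : ¬ SepP X Y f) :
    signComp Y X f = signComp X Y f := by
  unfold signComp
  by_cases hx : X f = 0
  · rw [if_pos hx, hx]
    by_cases hy : Y f = 0
    · rw [if_pos hy, hy]
    · rw [if_neg hy]
  · rw [if_neg hx]
    by_cases hy : Y f = 0
    · rw [if_pos hy]
    · rw [if_neg hy]
      exact st_two_nonzero _ _ hy hx (fun hc => h ⟨hx, by rw [hc, neg_neg]⟩)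

lemma agree_trans_P {X Y P' V : Pairs n → SignType} (hP' : P' = signComp X Y)
    (hag : AgreeP P' (signComp Y X) V) : AgreeP X Y V := by
  intro f hns
  have h1 : ¬ SepP P' (signComp Y X) f := by
    rintro ⟨ha, hb⟩
    rw [hP'] at ha hb
    rw [signComp_comm_off hns] at hb
    exact ha (st_self_neg _ hb)
  have hV := hag f h1
  rw [hV]
  show (if P' f = 0 then signComp Y X f else P' f) = signComp X Y f
  rw [hP', signComp_comm_off hns]
  split_ifs <;> rfl


def OffS (w w' : Fin n → SignType) (i : Fin n) : Prop := ¬(w i ≠ 0 ∧ w i = -w' i)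

section OffSepLemmas

variable {X Y : Pairs n → SignType} {w w' : Fin n → SignType}

lemma val_neg {i : Fin n} (h : w i = SignType.neg) : signComp w w' i = SignType.neg := by
  show (if w i = 0 then w' i else w i) = _
  rw [if_neg (by rw [h]; decide), h]

lemma val_pos {i : Fin n} (h : w i = SignType.pos) : signComp w w' i = SignType.pos := by
  show (if w i = 0 then w' i else w i) = _
  rw [if_neg (by rw [h]; decide), h]

lemma val_zero {i : Fin n} (h : w i = SignType.zero) : signComp w w' i = w' i := by
  show (if w i = 0 then w' i else w i) = _
  rw [if_pos (show w i = 0 from h)]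

lemma comp_zero_split {i : Fin n} (h : signComp w w' i = 0) :
    w i = 0 ∧ w' i = 0 := by
  have h' : (if w i = 0 then w' i else w i) = 0 := h
  by_cases h0 : w i = 0
  · rw [if_pos h0] at h'; exact ⟨h0, h'⟩
  · rw [if_neg h0] at h'; exact absurd h' h0

lemma off_neg {i : Fin n} (hi : OffS w w' i) (hwi : w i = SignType.neg) :
    w' i ≠ SignType.pos :=
  fun hc => hi ⟨by rw [hwi]; decide, by rw [hwi, hc]; decide⟩

lemma off_pos {i : Fin n} (hi : OffS w w' i) (hwi : w i = SignType.pos) :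
    w' i ≠ SignType.neg :=
  fun hc => hi ⟨by rw [hwi]; decide, by rw [hwi, hc]; decide⟩

lemma offsep_lt (hcX : Compat X w) (hcY : Compat Y w') {i j : Fin n}
    (hi : OffS w w' i) (hj : OffS w w' j)
    (hlt : signComp w w' i < signComp w w' j) :
    ¬ SepRel X Y i j ∧ xrel (signComp X Y) i j = 1 := by
  have hYopp : xrel Y i j = -1 → (w' i < w' j ∨ (w' i = 0 ∧ w' j = 0)) → False := by
    rintro hy (hlt' | ⟨h0i, h0j⟩)
    · rw [hcY.lt hlt'] at hy; exact absurd hy (by decide)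
    · rw [hcY.zero h0i h0j] at hy; exact absurd hy (by decide)
  have hkey : ∀ a b : SignType, a ≠ SignType.pos → b ≠ SignType.neg →
      (a < b ∨ (a = 0 ∧ b = 0)) := by decide
  have hone : ∀ y : SignType, (1 : SignType) = -y → y = -1 := by decide
  have hnltn : ∀ a : SignType, ¬ a < SignType.neg := by decide
  have hpltn : ∀ a : SignType, ¬ SignType.pos < a := by decide
  have mk : xrel X i j = 1 → (xrel Y i j = -1 → False) →
      ¬ SepRel X Y i j ∧ xrel (signComp X Y) i j = 1 := by
    intro x1 hy
    refine ⟨?_, ?_⟩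
    · rintro ⟨hne, heq⟩
      rw [x1] at heq
      exact hy (hone _ heq)
    · rw [xrel_comp, if_neg (by rw [x1]; decide), x1]
  cases hwi : w i with
  | neg =>
    cases hwj : w j with
    | neg =>
      rw [val_neg hwi, val_neg hwj] at hlt
      exact absurd hlt (by decide)
    | zero =>
      rw [val_neg hwi, val_zero hwj] at hlt
      have hx1 : xrel X i j = 1 := hcX.lt (by rw [hwi, hwj]; decide)
      refine mk hx1 (fun hy => hYopp hy ?_)
      exact hkey _ _ (off_neg hi hwi) (fun hc => absurd hlt (by rw [hc]; decide))
    | pos =>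
      have hx1 : xrel X i j = 1 := hcX.lt (by rw [hwi, hwj]; decide)
      refine mk hx1 (fun hy => hYopp hy ?_)
      exact hkey _ _ (off_neg hi hwi) (off_pos hj hwj)
  | zero =>
    cases hwj : w j with
    | neg =>
      rw [val_zero hwi, val_neg hwj] at hlt
      exact absurd hlt (hnltn _)
    | zero =>
      rw [val_zero hwi, val_zero hwj] at hlt
      have hx0 : xrel X i j = 0 := hcX.zero hwi hwj
      have hy1 : xrel Y i j = 1 := hcY.lt hlt
      refine ⟨fun hc => hc.1 hx0, ?_⟩
      rw [xrel_comp, if_pos hx0, hy1]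
    | pos =>
      rw [val_zero hwi, val_pos hwj] at hlt
      have hx1 : xrel X i j = 1 := hcX.lt (by rw [hwi, hwj]; decide)
      refine mk hx1 (fun hy => hYopp hy ?_)
      exact hkey _ _ (fun hc => absurd hlt (by rw [hc]; decide)) (off_pos hj hwj)
  | pos =>
    rw [val_pos hwi] at hlt
    exact absurd hlt (hpltn _)

lemma offsep_zero (hcX : Compat X w) (hcY : Compat Y w') {i j : Fin n}
    (hi0 : signComp w w' i = 0) (hj0 : signComp w w' j = 0) :
    ¬ SepRel X Y i j ∧ xrel (signComp X Y) i j = 0 := by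
  obtain ⟨hwi, hw'i⟩ := comp_zero_split hi0
  obtain ⟨hwj, hw'j⟩ := comp_zero_split hj0
  have hx0 : xrel X i j = 0 := hcX.zero hwi hwj
  have hy0 : xrel Y i j = 0 := hcY.zero hw'i hw'j
  exact ⟨fun hc => hc.1 hx0, by rw [xrel_comp, if_pos hx0, hy0]⟩

variable {i₀ : Fin n}

lemma F1 (hcY : Compat Y w') (hw'i₀ : w' i₀ = SignType.pos) {b : Fin n}
    (hb : OffS w w' b) (hvb : signComp w w' b = SignType.neg) :
    xrel Y b i₀ = 1 := by
  have hlp : ∀ a : SignType, a ≠ SignType.pos → a < SignType.pos := by decide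
  cases hwb : w b with
  | neg =>
    exact hcY.lt (by rw [hw'i₀]; exact hlp _ (off_neg hb hwb))
  | zero =>
    rw [val_zero hwb] at hvb
    exact hcY.lt (by rw [hvb, hw'i₀]; decide)
  | pos =>
    rw [val_pos hwb] at hvb
    exact absurd hvb (by decide)

lemma F2 (hcX : Compat X w) (hwi₀ : w i₀ = SignType.neg) {a : Fin n}
    (hva : signComp w w' a = SignType.pos) :
    xrel X i₀ a = 1 := by
  cases hwa : w a with
  | neg => rw [val_neg hwa] at hva; exact absurd hva (by decide)
  | zero => exact hcX.lt (by rw [hwi₀, hwa]; decide)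
  | pos => exact hcX.lt (by rw [hwi₀, hwa]; decide)

lemma F3 (hcX : Compat X w) (hcY : Compat Y w') (hwi₀ : w i₀ = SignType.neg)
    (hw'i₀ : w' i₀ = SignType.pos) {j : Fin n}
    (hvj : signComp w w' j = 0) :
    xrel X i₀ j = 1 ∧ xrel Y j i₀ = 1 := by
  obtain ⟨hwj, hw'j⟩ := comp_zero_split hvj
  exact ⟨hcX.lt (by rw [hwi₀, hwj]; decide), hcY.lt (by rw [hw'j, hw'i₀]; decide)⟩

end OffSepLemmas


/-- extend a partially forced sign vector on `[n]` to one compatible with a braid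
covector -/
lemma ext_lemma {V : Pairs n → SignType} (hbraid : IsBraidCovector V)
    (F : Fin n → Prop) (φ : Fin n → SignType)
    (hcons1 : ∀ i j, F i → F j → φ i < φ j → xrel V i j = 1)
    (hcons0 : ∀ i j, F i → F j → φ i = 0 → φ j = 0 → xrel V i j = 0) :
    ∃ w'' : Fin n → SignType, Compat V w'' ∧ ∀ i, F i → w'' i = φ i := by
  classical
  obtain ⟨l, p, hsurj, hrep⟩ := hbraid
  have hx := IsRep.xrel_eq (X := V) (p := p) hrep
  have hp1 : ∀ i j, F i → F j → φ i < φ j → (p i : ℕ) < (p j : ℕ) := by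
    intro i j hFi hFj hφ
    have := hcons1 i j hFi hFj hφ
    rw [hx i j, sgn_eq_one_iff] at this; exact this
  have hp0 : ∀ i j, F i → F j → φ i = 0 → φ j = 0 → (p i : ℕ) = (p j : ℕ) := by
    intro i j hFi hFj h1 h2
    have := hcons0 i j hFi hFj h1 h2
    rw [hx i j, sgn_eq_zero_iff] at this; exact this
  set C1 : Fin n → Prop := fun i => ∃ a, F a ∧
      ((φ a = SignType.neg ∧ (p i : ℕ) ≤ (p a : ℕ)) ∨
       (φ a = 0 ∧ (p i : ℕ) < (p a : ℕ))) with hC1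
  set C0 : Fin n → Prop := fun i => ∃ a, F a ∧ φ a = 0 ∧ (p i : ℕ) = (p a : ℕ) with hC0
  set w'' : Fin n → SignType := fun i =>
    if C1 i then SignType.neg else if C0 i then 0 else SignType.pos with hw''
  have hval : ∀ i, (C1 i ∧ w'' i = SignType.neg) ∨
      (¬ C1 i ∧ C0 i ∧ w'' i = 0) ∨ (¬ C1 i ∧ ¬ C0 i ∧ w'' i = SignType.pos) := by
    intro i
    by_cases h1 : C1 i
    · exact Or.inl ⟨h1, by rw [hw'']; simp only [if_pos h1]⟩
    · by_cases h0 : C0 i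
      · exact Or.inr (Or.inl ⟨h1, h0, by rw [hw'']; simp only [if_neg h1, if_pos h0]⟩)
      · exact Or.inr (Or.inr ⟨h1, h0, by rw [hw'']; simp only [if_neg h1, if_neg h0]⟩)
  refine ⟨w'', ?_, ?_⟩
  · -- compatibility
    intro i j
    constructor
    · intro hlt
      rw [hx i j, sgn_eq_one_iff]
      rcases hval i with ⟨h1i, hvi⟩ | ⟨h1i, h0i, hvi⟩ | ⟨h1i, h0i, hvi⟩
      · -- w'' i = -1, so w'' j ≠ -1, hence ¬ C1 j
        have h1j : ¬ C1 j := by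
          intro hc
          rcases hval j with ⟨_, hvj⟩ | ⟨hnc, _, _⟩ | ⟨hnc, _, _⟩
          · rw [hvi, hvj] at hlt; exact absurd hlt (by decide)
          · exact hnc hc
          · exact hnc hc
        obtain ⟨a, hFa, hor⟩ := h1i
        rcases hor with ⟨hφa, hle⟩ | ⟨hφa, hltp⟩
        · have : ¬ ((p j : ℕ) ≤ (p a : ℕ)) := fun hc => h1j ⟨a, hFa, Or.inl ⟨hφa, hc⟩⟩
          omega
        · have : ¬ ((p j : ℕ) < (p a : ℕ)) := fun hc => h1j ⟨a, hFa, Or.inr ⟨hφa, hc⟩⟩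
          omega
      · -- w'' i = 0, so w'' j = 1, hence ¬ C1 j and ¬ C0 j
        have hj' : ¬ C1 j ∧ ¬ C0 j := by
          rcases hval j with ⟨_, hvj⟩ | ⟨_, _, hvj⟩ | ⟨hnc1, hnc0, _⟩
          · rw [hvi, hvj] at hlt; exact absurd hlt (by decide)
          · rw [hvi, hvj] at hlt; exact absurd hlt (by decide)
          · exact ⟨hnc1, hnc0⟩
        obtain ⟨a, hFa, hφa, heq⟩ := h0i
        have hna : ¬ ((p j : ℕ) < (p a : ℕ)) := fun hc => hj'.1 ⟨a, hFa, Or.inr ⟨hφa, hc⟩⟩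
        have hne : ¬ ((p j : ℕ) = (p a : ℕ)) := fun hc => hj'.2 ⟨a, hFa, hφa, hc⟩
        omega
      · rw [hvi] at hlt
        exact absurd hlt (by revert hlt; generalize w'' j = b; revert b; decide)
    · intro h0i h0j
      rw [hx i j, sgn_eq_zero_iff]
      have geti : ∀ i' : Fin n, w'' i' = 0 → ∃ a, F a ∧ φ a = 0 ∧ (p i' : ℕ) = (p a : ℕ) := by
        intro i' h
        rcases hval i' with ⟨_, hv⟩ | ⟨_, hc0, _⟩ | ⟨_, _, hv⟩
        · rw [hv] at h; exact absurd h (by decide)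
        · exact hc0
        · rw [hv] at h; exact absurd h (by decide)
      obtain ⟨a, hFa, hφa, ha⟩ := geti i h0i
      obtain ⟨b, hFb, hφb, hb⟩ := geti j h0j
      have := hp0 a b hFa hFb hφa hφb
      omega
  · -- forced values
    intro i hFi
    cases hφi : φ i with
    | neg =>
      have h1 : C1 i := ⟨i, hFi, Or.inl ⟨hφi, le_refl _⟩⟩
      rw [hw'']; simp only [if_pos h1]
    | zero =>
      have h1 : ¬ C1 i := by
        rintro ⟨a, hFa, ⟨hφa, hle⟩ | ⟨hφa, hlt⟩⟩
        · have := hp1 a i hFa hFi (by rw [hφa, hφi]; decide)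
          omega
        · have := hp0 i a hFi hFa hφi hφa
          omega
      have h0 : C0 i := ⟨i, hFi, hφi, rfl⟩
      rw [hw'']; simp only [if_neg h1, if_pos h0]; rfl
    | pos =>
      have h1 : ¬ C1 i := by
        rintro ⟨a, hFa, ⟨hφa, hle⟩ | ⟨hφa, hlt⟩⟩
        · have := hp1 a i hFa hFi (by rw [hφa, hφi]; decide)
          omega
        · have := hp1 a i hFa hFi (by rw [hφa, hφi]; decide)
          omega
      have h0 : ¬ C0 i := by
        rintro ⟨a, hFa, hφa, heq⟩
        have := hp1 a i hFa hFi (by rw [hφa, hφi]; decide)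
        omega
      rw [hw'']; simp only [if_neg h1, if_neg h0]


lemma exists_pair {i j : Fin n} (hne : i ≠ j) :
    ∃ f : Pairs n, ∀ A B : Pairs n → SignType,
      (SepP A B f ↔ SepRel A B i j) ∧ (A f = 0 ↔ xrel A i j = 0) := by
  rcases lt_trichotomy i j with h | h | h
  · refine ⟨⟨(i, j), h⟩, fun A B => ⟨(sepRel_pair_iff _).symm, ?_⟩⟩
    show A ⟨(i, j), h⟩ = 0 ↔ xrel A i j = 0
    rw [← xrel_pair A ⟨(i, j), h⟩]
  · exact absurd h hne
  · refine ⟨⟨(j, i), h⟩, fun A B => ⟨?_, ?_⟩⟩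
    · rw [← sepRel_pair_iff]
      exact ⟨fun hc => sepRel_symm hc, fun hc => sepRel_symm hc⟩
    · rw [← xrel_pair A ⟨(j, i), h⟩]
      show _ ↔ xrel A i j = 0
      rw [xrel_swap A i j, st_neg_zero]

section MainElim

variable {C : Set (Pairs n → SignType)} {X Y : Pairs n → SignType}
  {w w' : Fin n → SignType} {i₀ : Fin n}

/-- one step of the sweeping induction -/
lemma lemE_step (hOM : IsOrientedMatroid C) (hsweep : ∀ V ∈ C, IsBraidCovector V)
    (hXC : X ∈ C) (hYC : Y ∈ C) (hcX : Compat X w) (hcY : Compat Y w')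
    (hw'i₀ : w' i₀ = SignType.pos)
    (V : Pairs n → SignType) (hV : V ∈ C) (hAg : AgreeP X Y V)
    (hA : ∀ a, OffS w w' a → signComp w w' a = SignType.pos → xrel V i₀ a = 1) :
    (∃ V' ∈ C, AgreeP X Y V' ∧
      (∀ a, OffS w w' a → signComp w w' a = SignType.pos → xrel V' i₀ a = 1) ∧
      (∀ b, OffS w w' b → signComp w w' b = SignType.neg → xrel V' b i₀ = 1)) ∨
    (∃ Z ∈ C, AgreeP X Y Z ∧
      (∀ a, OffS w w' a → signComp w w' a = SignType.pos → xrel Z i₀ a = 1) ∧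
      (Finset.univ.filter (fun f : Pairs n => SepP Z (signComp Y X) f)).card + 1 ≤
        (Finset.univ.filter (fun f : Pairs n => SepP V (signComp Y X) f)).card) := by
  classical
  set Q : Pairs n → SignType := signComp Y X with hQdef
  have hQC : Q ∈ C := hOM.2.2.1 Y hYC X hXC
  set V1 : Pairs n → SignType := signComp V Y with hV1def
  have hV1C : V1 ∈ C := hOM.2.2.1 V hV Y hYC
  have hAg1 : AgreeP X Y V1 := by
    intro f hns
    have h := hAg f hns
    show (if V f = 0 then Y f else V f) = signComp X Y f
    rw [h]
    by_cases h0 : signComp X Y f = 0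
    · obtain ⟨hx0, hy0⟩ := signComp_eq_zero h0
      rw [if_pos h0, hy0, h0]
    · rw [if_neg h0]
  have hA1 : ∀ a, OffS w w' a → signComp w w' a = SignType.pos → xrel V1 i₀ a = 1 := by
    intro a ho hv
    have h := hA a ho hv
    rw [hV1def, xrel_comp, if_neg (by rw [h]; decide), h]
  by_cases hall : ∀ b, OffS w w' b → signComp w w' b = SignType.neg → xrel V1 b i₀ = 1
  · exact Or.inl ⟨V1, hV1C, hAg1, hA1, hall⟩
  · push_neg at hall
    obtain ⟨b, hob, hvb, hbne⟩ := hall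
    have hY1 : xrel Y b i₀ = 1 := F1 hcY hw'i₀ hob hvb
    have hvne : xrel V1 b i₀ = -1 := by
      have hbne' := hbne
      rw [hV1def, xrel_comp] at hbne' ⊢
      by_cases h0 : xrel V b i₀ = 0
      · rw [if_pos h0, hY1] at hbne'
        exact absurd rfl hbne'
      · rw [if_neg h0] at hbne' ⊢
        exact (by decide : ∀ a : SignType, a ≠ 0 → a ≠ 1 → a = -1) _ h0 hbne'
    have h1 : xrel V1 i₀ b = 1 := by
      have hs := xrel_swap V1 i₀ b
      rw [hvne] at hs
      exact (by decide : ∀ a : SignType, (-1 : SignType) = -a → a = 1) _ hs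
    have hQ1 : xrel Q i₀ b = -1 := by
      have hqb : xrel Q b i₀ = 1 := by
        rw [hQdef, xrel_comp, if_neg (by rw [hY1]; decide), hY1]
      have hs := xrel_swap Q i₀ b
      rw [hqb] at hs
      exact (by decide : ∀ a : SignType, (1 : SignType) = -a → a = -1) _ hs
    obtain ⟨Z, hZC, hZ0, hZag⟩ := elim_xrel hOM hV1C hQC h1 hQ1
    have hAgZ : AgreeP X Y Z := by
      intro f hns
      have hQP : Q f = signComp X Y f := signComp_comm_off hns
      have hV1P : V1 f = signComp X Y f := hAg1 f hns
      have hnsep : ¬ SepP V1 Q f := by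
        rintro ⟨ha, hb⟩
        rw [hV1P, hQP] at hb
        rw [hV1P] at ha
        exact ha (st_self_neg _ hb)
      have h := hZag f hnsep
      rw [h]
      show (if V1 f = 0 then Q f else V1 f) = signComp X Y f
      rw [hV1P, hQP]
      split_ifs <;> rfl
    have hAZ : ∀ a, OffS w w' a → signComp w w' a = SignType.pos → xrel Z i₀ a = 1 := by
      intro a hoa hva
      have hg := offsep_lt (i := b) (j := a) hcX hcY hob hoa (by rw [hvb, hva]; decide)
      have hZba : xrel Z b a = 1 := by rw [agree_xrel hAgZ hg.1]; exact hg.2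
      obtain ⟨l, p, hsurj, hrep⟩ := hsweep Z hZC
      have hx := IsRep.xrel_eq (X := Z) (p := p) hrep
      rw [hx, sgn_eq_zero_iff] at hZ0
      rw [hx, sgn_eq_one_iff] at hZba
      rw [hx, sgn_eq_one_iff]
      omega
    refine Or.inr ⟨Z, hZC, hAgZ, hAZ, ?_⟩
    -- measure decrease
    have hne : i₀ ≠ b := by
      intro hc
      rw [hc, xrel_self] at h1
      exact absurd h1 (by decide)
    obtain ⟨f₀, hf₀⟩ := exists_pair hne
    have hsub1 : ∀ f, SepP V1 Q f → SepP V Q f := by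
      rintro f ⟨ha, hb⟩
      by_cases hv0 : V f = 0
      · have hv1 : V1 f = Y f := by
          show (if V f = 0 then Y f else V f) = Y f
          rw [if_pos hv0]
        by_cases hy0 : Y f = 0
        · rw [hv1, hy0] at ha; exact absurd rfl ha
        · have hq : Q f = Y f := by
            show (if Y f = 0 then X f else Y f) = Y f
            rw [if_neg hy0]
          rw [hv1, hq] at hb
          rw [hv1] at ha
          exact absurd (st_self_neg _ hb) hy0
      · have hv1 : V1 f = V f := by
          show (if V f = 0 then Y f else V f) = V f
          rw [if_neg hv0]
        rw [hv1] at ha hb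
        exact ⟨ha, hb⟩
    have hsub2 : ∀ f, ¬ SepP V1 Q f → ¬ SepP Z Q f := by
      intro f hns hsep
      obtain ⟨ha, hb⟩ := hsep
      have h := hZag f hns
      rw [h] at ha hb
      have h' : (if V1 f = 0 then Q f else V1 f) ≠ 0 ∧
          (if V1 f = 0 then Q f else V1 f) = -Q f := ⟨ha, hb⟩
      by_cases h10 : V1 f = 0
      · rw [if_pos h10] at h'
        exact h'.1 (st_self_neg _ h'.2)
      · rw [if_neg h10] at h'
        exact hns ⟨h'.1, h'.2⟩
    have hmemV : f₀ ∈ Finset.univ.filter (fun f : Pairs n => SepP V Q f) := by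
      rw [Finset.mem_filter]
      refine ⟨Finset.mem_univ _, hsub1 f₀ ?_⟩
      rw [(hf₀ V1 Q).1]
      exact ⟨by rw [h1]; decide, by rw [h1, hQ1]; decide⟩
    have hZf₀ : ¬ SepP Z Q f₀ := by
      rintro ⟨ha, _⟩
      exact ha ((hf₀ Z Q).2.mpr hZ0)
    have hsubZ : Finset.univ.filter (fun f : Pairs n => SepP Z Q f) ⊆
        (Finset.univ.filter (fun f : Pairs n => SepP V Q f)).erase f₀ := by
      intro f hf
      rw [Finset.mem_filter] at hf
      rw [Finset.mem_erase, Finset.mem_filter]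
      refine ⟨?_, Finset.mem_univ _, ?_⟩
      · intro hc; subst hc; exact hZf₀ hf.2
      · by_contra hns
        have hns1 : ¬ SepP V1 Q f := fun hc => hns (hsub1 f hc)
        exact hsub2 f hns1 hf.2
    have hcards := Finset.card_le_card hsubZ
    rw [Finset.card_erase_of_mem hmemV] at hcards
    have hpos : 0 < (Finset.univ.filter (fun f : Pairs n => SepP V Q f)).card :=
      Finset.card_pos.mpr ⟨f₀, hmemV⟩
    omega


lemma lemE (hOM : IsOrientedMatroid C) (hsweep : ∀ V ∈ C, IsBraidCovector V)
    (hXC : X ∈ C) (hYC : Y ∈ C) (hcX : Compat X w) (hcY : Compat Y w')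
    (hw'i₀ : w' i₀ = SignType.pos) :
    ∀ (m : ℕ) (V : Pairs n → SignType), V ∈ C → AgreeP X Y V →
    (∀ a, OffS w w' a → signComp w w' a = SignType.pos → xrel V i₀ a = 1) →
    (Finset.univ.filter (fun f : Pairs n => SepP V (signComp Y X) f)).card ≤ m →
    ∃ V' ∈ C, AgreeP X Y V' ∧
      (∀ a, OffS w w' a → signComp w w' a = SignType.pos → xrel V' i₀ a = 1) ∧
      (∀ b, OffS w w' b → signComp w w' b = SignType.neg → xrel V' b i₀ = 1) := by
  intro m
  induction m with
  | zero =>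
    intro V hV hAg hA hm
    rcases lemE_step hOM hsweep hXC hYC hcX hcY hw'i₀ V hV hAg hA with h | ⟨Z, _, _, _, hc⟩
    · exact h
    · omega
  | succ m ih =>
    intro V hV hAg hA hm
    rcases lemE_step hOM hsweep hXC hYC hcX hcY hw'i₀ V hV hAg hA with h | ⟨Z, hZC, hZag, hZA, hc⟩
    · exact h
    · exact ih Z hZC hZag hZA (by omega)

/-- main construction for elimination at an element `i₀` of `[n]` -/
lemma elim_inl_main (hOM : IsOrientedMatroid C) (hsweep : ∀ V ∈ C, IsBraidCovector V)
    (hXC : X ∈ C) (hYC : Y ∈ C) (hcX : Compat X w) (hcY : Compat Y w')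
    (hwi₀ : w i₀ = SignType.neg) (hw'i₀ : w' i₀ = SignType.pos) :
    ∃ V ∈ C, AgreeP X Y V ∧
      (∀ b, OffS w w' b → signComp w w' b = SignType.neg → xrel V b i₀ = 1) ∧
      (∀ j, OffS w w' j → signComp w w' j = 0 → xrel V j i₀ = 0) ∧
      (∀ a, OffS w w' a → signComp w w' a = SignType.pos → xrel V i₀ a = 1) := by
  classical
  set P : Pairs n → SignType := signComp X Y with hPdef
  set Q : Pairs n → SignType := signComp Y X with hQdef
  have hPC : P ∈ C := hOM.2.2.1 X hXC Y hYC
  have hQC : Q ∈ C := hOM.2.2.1 Y hYC X hXC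
  by_cases hM : ∃ j, OffS w w' j ∧ signComp w w' j = 0
  · obtain ⟨j₁, hoj₁, hvj₁⟩ := hM
    obtain ⟨hX1, hY1⟩ := F3 hcX hcY hwi₀ hw'i₀ hvj₁
    have hP1 : xrel P i₀ j₁ = 1 := by
      rw [hPdef, xrel_comp, if_neg (by rw [hX1]; decide), hX1]
    have hQ1 : xrel Q i₀ j₁ = -1 := by
      have hqb : xrel Q j₁ i₀ = 1 := by
        rw [hQdef, xrel_comp, if_neg (by rw [hY1]; decide), hY1]
      have hs := xrel_swap Q i₀ j₁
      rw [hqb] at hs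
      exact (by decide : ∀ a : SignType, (1 : SignType) = -a → a = -1) _ hs
    obtain ⟨V, hVC, hV0, hVag⟩ := elim_xrel hOM hPC hQC hP1 hQ1
    have hAgV : AgreeP X Y V := agree_trans_P hPdef hVag
    obtain ⟨l, p, hsurj, hrep⟩ := hsweep V hVC
    have hx := IsRep.xrel_eq (X := V) (p := p) hrep
    rw [hx, sgn_eq_zero_iff] at hV0
    refine ⟨V, hVC, hAgV, ?_, ?_, ?_⟩
    · intro b hob hvb
      have hg := offsep_lt (i := b) (j := j₁) hcX hcY hob hoj₁ (by rw [hvb, hvj₁]; decide)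
      have h1 : xrel V b j₁ = 1 := by rw [agree_xrel hAgV hg.1]; exact hg.2
      rw [hx, sgn_eq_one_iff] at h1
      rw [hx, sgn_eq_one_iff]
      omega
    · intro j hoj hvj
      have hg := offsep_zero (i := j) (j := j₁) hcX hcY hvj hvj₁
      have h1 : xrel V j j₁ = 0 := by rw [agree_xrel hAgV hg.1]; exact hg.2
      rw [hx, sgn_eq_zero_iff] at h1
      rw [hx, sgn_eq_zero_iff]
      omega
    · intro a hoa hva
      have hg := offsep_lt (i := j₁) (j := a) hcX hcY hoj₁ hoa (by rw [hva, hvj₁]; decide)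
      have h1 : xrel V j₁ a = 1 := by rw [agree_xrel hAgV hg.1]; exact hg.2
      rw [hx, sgn_eq_one_iff] at h1
      rw [hx, sgn_eq_one_iff]
      omega
  · push_neg at hM
    have hAP : ∀ a, OffS w w' a → signComp w w' a = SignType.pos → xrel P i₀ a = 1 := by
      intro a hoa hva
      have h := F2 (w' := w') hcX hwi₀ hva
      rw [hPdef, xrel_comp, if_neg (by rw [h]; decide), h]
    obtain ⟨V, hVC, hAgV, hA, hB⟩ := lemE hOM hsweep hXC hYC hcX hcY hw'i₀
      (Finset.univ.filter (fun f : Pairs n => SepP P (signComp Y X) f)).card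
      P hPC (fun f _ => rfl) hAP (le_refl _)
    exact ⟨V, hVC, hAgV, hB, fun j hoj hvj => absurd hvj (hM j hoj), hA⟩

end MainElim


lemma signComp_neg_neg {E : Type*} (Z W : E → SignType) (f : E) :
    signComp (-Z) (-W) f = -(signComp Z W f) := by
  show (if -(Z f) = 0 then -(W f) else -(Z f)) = -(if Z f = 0 then W f else Z f)
  by_cases h0 : Z f = 0
  · rw [if_pos (by show -(Z f) = 0; rw [h0, neg_zero]), if_pos h0]
  · rw [if_neg (fun hc => h0 ((st_neg_zero (Z f)).mp hc)), if_neg h0]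

/-- elimination for big covectors, when the eliminated element is a pair, or is an
element of `[n]` on which `Z` is negative -/
lemma elim_big_core {C : Set (Pairs n → SignType)} (hOM : IsOrientedMatroid C)
    (hsweep : ∀ V ∈ C, IsBraidCovector V) {Z W : (Fin n ⊕ Pairs n) → SignType}
    (hZ : Z ∈ BigCovectors C) (hW : W ∈ BigCovectors C) (e : Fin n ⊕ Pairs n)
    (hZe : Z e ≠ 0) (hZW : Z e = -W e)
    (hcore : ∀ i₀ : Fin n, e = Sum.inl i₀ → Z e = SignType.neg) :
    ∃ U ∈ BigCovectors C, U e = 0 ∧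
      ∀ f, ¬(Z f ≠ 0 ∧ Z f = -W f) → U f = signComp Z W f := by
  rw [mem_big_iff hsweep] at hZ hW
  obtain ⟨X, hXC, hEX, hcX⟩ := hZ
  obtain ⟨Y, hYC, hEY, hcY⟩ := hW
  set w : Fin n → SignType := fun i => Z (Sum.inl i) with hwdef
  set w' : Fin n → SignType := fun i => W (Sum.inl i) with hw'def
  cases e with
  | inl i₀ =>
    have hwi₀ : w i₀ = SignType.neg := hcore i₀ rfl
    have hw'i₀ : w' i₀ = SignType.pos := by
      have h : w i₀ = -(w' i₀) := hZW
      rw [hwi₀] at h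
      exact (by decide : ∀ a : SignType, SignType.neg = -a → a = SignType.pos) _ h
    obtain ⟨V, hVC, hAgV, hBcond, hMcond, hAcond⟩ :=
      elim_inl_main hOM hsweep hXC hYC hcX hcY hwi₀ hw'i₀
    obtain ⟨w'', hcomp, hforced⟩ := ext_lemma (hsweep V hVC)
      (fun j => OffS w w' j ∨ j = i₀)
      (fun j => if j = i₀ then 0 else signComp w w' j)
      (by
        intro i j hFi hFj hφ
        change (if i = i₀ then (0 : SignType) else signComp w w' i) <
          (if j = i₀ then (0 : SignType) else signComp w w' j) at hφ
        by_cases hii : i = i₀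
        · rw [if_pos hii] at hφ
          by_cases hjj : j = i₀
          · rw [if_pos hjj] at hφ
            exact absurd hφ (by decide)
          · rw [if_neg hjj] at hφ
            have hoj : OffS w w' j := hFj.resolve_right hjj
            have hv : signComp w w' j = SignType.pos :=
              (by decide : ∀ a : SignType, (0 : SignType) < a → a = SignType.pos) _ hφ
            rw [hii]
            exact hAcond j hoj hv
        · rw [if_neg hii] at hφ
          by_cases hjj : j = i₀
          · rw [if_pos hjj] at hφ
            have hoi : OffS w w' i := hFi.resolve_right hii
            have hv : signComp w w' i = SignType.neg :=
              (by decide : ∀ a : SignType, a < (0 : SignType) → a = SignType.neg) _ hφ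
            rw [hjj]
            exact hBcond i hoi hv
          · rw [if_neg hjj] at hφ
            have hoi : OffS w w' i := hFi.resolve_right hii
            have hoj : OffS w w' j := hFj.resolve_right hjj
            have hg := offsep_lt hcX hcY hoi hoj hφ
            rw [agree_xrel hAgV hg.1]
            exact hg.2)
      (by
        intro i j hFi hFj h0i h0j
        change (if i = i₀ then (0 : SignType) else signComp w w' i) = 0 at h0i
        change (if j = i₀ then (0 : SignType) else signComp w w' j) = 0 at h0j
        by_cases hii : i = i₀
        · by_cases hjj : j = i₀
          · rw [hii, hjj, xrel_self]
          · rw [if_neg hjj] at h0j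
            have hoj : OffS w w' j := hFj.resolve_right hjj
            have hm : xrel V j i₀ = 0 := hMcond j hoj h0j
            have hs := xrel_swap V i₀ j
            rw [hm] at hs
            rw [hii]
            exact (by decide : ∀ a : SignType, (0 : SignType) = -a → a = 0) _ hs
        · by_cases hjj : j = i₀
          · rw [if_neg hii] at h0i
            have hoi : OffS w w' i := hFi.resolve_right hii
            rw [hjj]
            exact hMcond i hoi h0i
          · rw [if_neg hii] at h0i
            rw [if_neg hjj] at h0j
            have hg := offsep_zero hcX hcY h0i h0j
            rw [agree_xrel hAgV hg.1]
            exact hg.2)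
    refine ⟨Sum.elim w'' V, ?_, ?_, ?_⟩
    · rw [mem_big_iff hsweep]
      exact ⟨V, hVC, fun e => rfl, hcomp⟩
    · show w'' i₀ = 0
      rw [hforced i₀ (Or.inr rfl), if_pos rfl]
    · intro f hns
      cases f with
      | inl j =>
        by_cases hji : j = i₀
        · exfalso
          apply hns
          subst hji
          exact ⟨hZe, hZW⟩
        · show w'' j = signComp Z W (Sum.inl j)
          rw [hforced j (Or.inl hns), if_neg hji]
          rfl
      | inr g =>
        have hns' : ¬ SepP X Y g := by
          rintro ⟨h1, h2⟩
          exact hns ⟨by rw [hEX g]; exact h1, by rw [hEX g, hEY g]; exact h2⟩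
        show V g = (if Z (Sum.inr g) = 0 then W (Sum.inr g) else Z (Sum.inr g))
        rw [hEX g, hEY g]
        exact hAgV g hns'
  | inr e₀ =>
    have hX0 : X e₀ ≠ 0 := by rw [← hEX e₀]; exact hZe
    have hXY : X e₀ = -Y e₀ := by rw [← hEX e₀, ← hEY e₀]; exact hZW
    obtain ⟨X', hX'C, hX'0, hag⟩ := hOM.2.2.2 X hXC Y hYC e₀ hX0 hXY
    have hAgX' : AgreeP X Y X' := hag
    obtain ⟨w'', hcomp, hforced⟩ := ext_lemma (hsweep X' hX'C) (OffS w w') (signComp w w')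
      (fun i j hFi hFj hφ => by
        have hg := offsep_lt hcX hcY hFi hFj hφ
        rw [agree_xrel hAgX' hg.1]; exact hg.2)
      (fun i j hFi hFj h0i h0j => by
        have hg := offsep_zero hcX hcY h0i h0j
        rw [agree_xrel hAgX' hg.1]; exact hg.2)
    refine ⟨Sum.elim w'' X', ?_, hX'0, ?_⟩
    · rw [mem_big_iff hsweep]
      exact ⟨X', hX'C, fun e => rfl, hcomp⟩
    · intro f hns
      cases f with
      | inl j =>
        show w'' j = signComp Z W (Sum.inl j)
        rw [hforced j hns]
        rfl
      | inr g =>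
        have hns' : ¬ SepP X Y g := by
          rintro ⟨h1, h2⟩
          exact hns ⟨by rw [hEX g]; exact h1, by rw [hEX g, hEY g]; exact h2⟩
        show X' g = (if Z (Sum.inr g) = 0 then W (Sum.inr g) else Z (Sum.inr g))
        rw [hEX g, hEY g]
        exact hAgX' g hns'

end SweepAux


/-- If `C` is the set of covectors of a sweep oriented matroid on `E_n` (an oriented
matroid all of whose covectors are braid covectors), then the collection
`{X^k : X ∈ C, 1 ≤ k ≤ 2 l_X + 1}` of sign vectors on `[n] ∪ E_n` satisfies the
covector axioms of an oriented matroid. -/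
theorem bigCovectors_isOrientedMatroid {n : ℕ} (C : Set (Pairs n → SignType))
    (hOM : IsOrientedMatroid C) (hsweep : ∀ X ∈ C, IsBraidCovector X) :
    IsOrientedMatroid (BigCovectors C) := by
  refine ⟨SweepAux.zero_mem_big hOM hsweep,
    fun Z hZ => SweepAux.neg_mem_big hOM hsweep hZ,
    fun Z hZ W hW => SweepAux.comp_mem_big hOM hsweep hZ hW,
    ?_⟩
  intro Z hZ W hW e hZe hZW
  cases hv : Z e with
  | zero => exact absurd hv hZe
  | neg => exact SweepAux.elim_big_core hOM hsweep hZ hW e hZe hZW (fun i₀ _ => hv)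
  | pos =>
    have hZ' := SweepAux.neg_mem_big hOM hsweep hZ
    have hW' := SweepAux.neg_mem_big hOM hsweep hW
    have hZe' : (-Z) e ≠ 0 := by
      show -(Z e) ≠ 0
      rw [hv]; decide
    have hZW' : (-Z) e = -(-W) e := by
      show -(Z e) = -(-(W e))
      rw [hZW]
    have hcore : ∀ i₀ : Fin n, e = Sum.inl i₀ → (-Z) e = SignType.neg := by
      intro i₀ _
      show -(Z e) = SignType.neg
      rw [hv]; rfl
    obtain ⟨U', hU'big, hU'0, hU'ag⟩ :=
      SweepAux.elim_big_core hOM hsweep hZ' hW' e hZe' hZW' hcore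
    refine ⟨-U', SweepAux.neg_mem_big hOM hsweep hU'big, ?_, ?_⟩
    · show -(U' e) = 0
      rw [hU'0, neg_zero]
    · intro f hns
      have hns' : ¬((-Z) f ≠ 0 ∧ (-Z) f = -(-W) f) := by
        intro hc
        exact hns ((SweepAux.st_opp (Z f) (W f)).mpr hc)
      have h := hU'ag f hns'
      show -(U' f) = signComp Z W f
      rw [h, SweepAux.signComp_neg_neg, neg_neg]
end

section
/- Let L be the little oriented matroid of a sweep oriented matroid M on E_n. If I ⊆ [n] is a flat of L of rank at least 2, and J is the minimal flat of M containing {(i,j) ∈ E_n : i, j ∈ I}, then the rank of J in M equals the rank of I in L minus 1. -/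
/- ========== Auxiliary lemmas ========== -/

lemma covLE_refl' {E : Type*} (X : E → SignType) : covLE X X := fun _ => Or.inr rfl

lemma covLE_trans' {E : Type*} {X Y Z : E → SignType} (h1 : covLE X Y) (h2 : covLE Y Z) :
    covLE X Z := by
  intro e
  rcases h1 e with h | h
  · exact Or.inl h
  · rcases h2 e with h' | h'
    · exact Or.inl (h.trans h')
    · exact Or.inr (h.trans h')

lemma covLE_comp_left' {E : Type*} (X Y : E → SignType) : covLE X (signComp X Y) := by
  intro e
  unfold signComp
  split_ifs with h
  · exact Or.inl h
  · exact Or.inr rfl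

lemma covLE_zero_of' {E : Type*} {X Y : E → SignType} (h : covLE X Y) {e : E}
    (he : Y e = 0) : X e = 0 := by
  rcases h e with h' | h'
  · exact h'
  · rw [h', he]

lemma signComp_zero_left' {E : Type*} {X Y : E → SignType} {e : E} (h : X e = 0) :
    signComp X Y e = Y e := by
  unfold signComp; rw [if_pos h]

/-- A family of sign vectors indexed by `Fin m`, padded by zero to all of `ℕ`. -/
def padFam {E : Type*} {m : ℕ} (X : Fin m → E → SignType) : ℕ → E → SignType :=
  fun t => if h : t < m then X ⟨t, h⟩ else fun _ => 0

lemma padFam_eq {E : Type*} {m : ℕ} (X : Fin m → E → SignType) (t : ℕ) (h : t < m) :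
    padFam X t = X ⟨t, h⟩ := dif_pos h

lemma padFam_mem {E : Type*} {m : ℕ} {C : Set (E → SignType)} {X : Fin m → E → SignType}
    (h0 : (fun _ => 0) ∈ C) (hX : ∀ s, X s ∈ C) (t : ℕ) : padFam X t ∈ C := by
  unfold padFam
  split_ifs with h
  · exact hX _
  · exact h0

/-- Iterated composition: `compFam F t = F 1 ∘ ⋯ ∘ F t`, and `compFam F 0 = 0`. -/
def compFam {E : Type*} (F : ℕ → E → SignType) : ℕ → E → SignType
  | 0 => fun _ => 0
  | t + 1 => signComp (compFam F t) (F (t + 1))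

lemma compFam_mem {E : Type*} {C : Set (E → SignType)} {F : ℕ → E → SignType}
    (h0 : (fun _ => 0) ∈ C)
    (hcomp : ∀ X ∈ C, ∀ Y ∈ C, signComp X Y ∈ C)
    (hF : ∀ t, F t ∈ C) (t : ℕ) : compFam F t ∈ C := by
  induction t with
  | zero => exact h0
  | succ t ih => exact hcomp _ ih _ (hF (t + 1))

lemma compFam_mono {E : Type*} (F : ℕ → E → SignType) {t u : ℕ} (h : t ≤ u) :
    covLE (compFam F t) (compFam F u) := by
  induction u, h using Nat.le_induction with
  | base => exact covLE_refl' _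
  | succ u hu ih => exact covLE_trans' ih (covLE_comp_left' _ _)

lemma compFam_zero {E : Type*} (F : ℕ → E → SignType) (t : ℕ) (e : E)
    (h : ∀ r, 1 ≤ r → r ≤ t → F r e = 0) : compFam F t e = 0 := by
  induction t with
  | zero => rfl
  | succ t ih =>
    show signComp (compFam F t) (F (t + 1)) e = 0
    rw [signComp_zero_left' (ih (fun r h1 h3 => h r h1 (by omega)))]
    exact h (t + 1) (by omega) le_rfl

lemma compFam_step {E : Type*} (F : ℕ → E → SignType) (t : ℕ) (e : E)
    (h : compFam F t e = 0) : compFam F (t + 1) e = F (t + 1) e := by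
  show signComp (compFam F t) (F (t + 1)) e = _
  exact signComp_zero_left' h

lemma compFam_keep {E : Type*} (F : ℕ → E → SignType) {t u : ℕ} (h : t ≤ u) (e : E)
    (hne : compFam F t e ≠ 0) : compFam F u e = compFam F t e := by
  induction u, h using Nat.le_induction with
  | base => rfl
  | succ u hu ih =>
    show signComp (compFam F u) (F (u + 1)) e = _
    unfold signComp
    rw [if_neg (by rw [ih]; exact hne)]
    exact ih

def clOf {E : Type*} (C : Set (E → SignType)) (B : Set E) : Set E :=
  {e | ∀ Z ∈ C, (∀ b ∈ B, Z b = 0) → Z e = 0}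

lemma subset_clOf {E : Type*} (C : Set (E → SignType)) (B : Set E) : B ⊆ clOf C B :=
  fun e he Z _ hZ => hZ e he

lemma clOf_mono {E : Type*} (C : Set (E → SignType)) {B B' : Set E} (h : B ⊆ B') :
    clOf C B ⊆ clOf C B' :=
  fun e he Z hZ hz => he Z hZ (fun b hb => hz b (h hb))

lemma clOf_trans {E : Type*} (C : Set (E → SignType)) {S T : Set E} (h : S ⊆ clOf C T) :
    clOf C S ⊆ clOf C T := by
  intro e he Z hZ hz
  exact he Z hZ (fun b hb => h hb Z hZ hz)

lemma signType_eq_or_neg (x y : SignType) (hx : x ≠ 0) (hy : y ≠ 0) : x = y ∨ x = -y := by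
  revert hx hy; revert x y; decide

lemma signType_neg_eq_zero (x : SignType) : -x = 0 ↔ x = 0 := by
  revert x; decide

lemma coe_erase_union_self {E : Type*} [DecidableEq E] {A : Finset E} {a : E} (ha : a ∈ A) :
    ((A.erase a : Finset E) : Set E) ∪ {a} = (A : Set E) := by
  ext x
  simp only [Set.mem_union, Finset.coe_erase, Set.mem_diff, Set.mem_singleton_iff,
    Finset.mem_coe]
  constructor
  · rintro (⟨h, _⟩ | rfl)
    · exact h
    · exact ha
  · intro h
    by_cases hx : x = a
    · exact Or.inr hx
    · exact Or.inl ⟨h, hx⟩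

lemma coe_insert_erase_ne {E : Type*} [DecidableEq E] {A : Finset E} {a e : E} (hane : a ≠ e) :
    (((insert e A).erase a : Finset E) : Set E) = ((A.erase a : Finset E) : Set E) ∪ {e} := by
  ext x
  simp only [Finset.coe_erase, Finset.coe_insert, Set.mem_diff, Set.mem_insert_iff,
    Set.mem_union, Set.mem_singleton_iff, Finset.mem_coe, Finset.coe_union]
  constructor
  · rintro ⟨(rfl | hx), hxa⟩
    · exact Or.inr rfl
    · exact Or.inl ⟨hx, hxa⟩
  · rintro (⟨hx, hxa⟩ | rfl)
    · exact ⟨Or.inr hx, hxa⟩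
    · exact ⟨Or.inl rfl, fun h => hane h.symm⟩

/-- The exchange property for `clOf`, via covector elimination. -/
lemma clOf_exchange {E : Type*} {C : Set (E → SignType)}
    (hneg : ∀ X ∈ C, -X ∈ C)
    (helim : ∀ X ∈ C, ∀ Y ∈ C, ∀ e, X e ≠ 0 → X e = -Y e →
      ∃ Z ∈ C, Z e = 0 ∧ ∀ f, ¬(X f ≠ 0 ∧ X f = -Y f) → Z f = signComp X Y f)
    {B : Set E} {e f : E} (hf : f ∉ clOf C B) (hfe : f ∈ clOf C (B ∪ {e})) :
    e ∈ clOf C (B ∪ {f}) := by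
  intro V hV hVz
  by_contra hVe
  simp only [clOf, Set.mem_setOf_eq] at hf
  push_neg at hf
  obtain ⟨W, hW, hWB, hWf⟩ := hf
  have hWe : W e ≠ 0 := by
    intro hWe0
    exact hWf (hfe W hW (by
      intro b hb
      rcases hb with hb | hb
      · exact hWB b hb
      · rw [Set.mem_singleton_iff] at hb; rw [hb]; exact hWe0))
  have hVB : ∀ b ∈ B, V b = 0 := fun b hb => hVz b (Or.inl hb)
  have hVf : V f = 0 := hVz f (Or.inr rfl)
  rcases signType_eq_or_neg (V e) (W e) hVe hWe with hsgn | hsgn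
  · -- V e = W e : use W' := -W
    obtain ⟨Z, hZ, hZe, hZf⟩ := helim V hV (-W) (hneg W hW) e hVe (by
      show V e = -(-W) e
      simpa using hsgn)
    have hZB : ∀ b ∈ B, Z b = 0 := by
      intro b hb
      have h := hZf b (fun hc => hc.1 (hVB b hb))
      rw [h]
      unfold signComp
      rw [if_pos (hVB b hb)]
      simp [hWB b hb]
    have hZff : Z f ≠ 0 := by
      have h := hZf f (fun hc => hc.1 hVf)
      intro h0
      rw [h] at h0
      unfold signComp at h0
      rw [if_pos hVf] at h0
      rw [show (-W) f = -(W f) from rfl, signType_neg_eq_zero] at h0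
      exact hWf h0
    exact hZff (hfe Z hZ (by
      intro b hb
      rcases hb with hb | hb
      · exact hZB b hb
      · rw [Set.mem_singleton_iff] at hb; rw [hb]; exact hZe))
  · -- V e = -W e directly
    obtain ⟨Z, hZ, hZe, hZf⟩ := helim V hV W hW e hVe hsgn
    have hZB : ∀ b ∈ B, Z b = 0 := by
      intro b hb
      have h := hZf b (fun hc => hc.1 (hVB b hb))
      rw [h]
      unfold signComp
      rw [if_pos (hVB b hb)]
      exact hWB b hb
    have hZff : Z f ≠ 0 := by
      have h := hZf f (fun hc => hc.1 hVf)
      rw [h]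
      unfold signComp
      rw [if_pos hVf]
      exact hWf
    exact hZff (hfe Z hZ (by
      intro b hb
      rcases hb with hb | hb
      · exact hZB b hb
      · rw [Set.mem_singleton_iff] at hb; rw [hb]; exact hZe))

/-- Independence with respect to `clOf`. -/
def IndepOf {E : Type*} [DecidableEq E] (C : Set (E → SignType)) (A : Finset E) : Prop :=
  ∀ a ∈ A, a ∉ clOf C ↑(A.erase a)

lemma indepOf_empty {E : Type*} [DecidableEq E] (C : Set (E → SignType)) : IndepOf C ∅ := by
  intro a ha; simp at ha

lemma indepOf_insert {E : Type*} [DecidableEq E] {C : Set (E → SignType)}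
    (hneg : ∀ X ∈ C, -X ∈ C)
    (helim : ∀ X ∈ C, ∀ Y ∈ C, ∀ e, X e ≠ 0 → X e = -Y e →
      ∃ Z ∈ C, Z e = 0 ∧ ∀ f, ¬(X f ≠ 0 ∧ X f = -Y f) → Z f = signComp X Y f)
    {A : Finset E} {e : E} (hA : IndepOf C A) (he : e ∉ clOf C ↑A) :
    IndepOf C (insert e A) := by
  have heA : e ∉ A := fun h => he (subset_clOf C ↑A h)
  intro a ha
  rcases Finset.mem_insert.mp ha with rfl | haA
  · rw [Finset.erase_insert heA]
    exact he
  · intro hcl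
    have hane : a ≠ e := fun h => heA (h ▸ haA)
    have h1 : a ∉ clOf C ↑(A.erase a) := hA a haA
    have h2 : a ∈ clOf C (↑(A.erase a) ∪ {e}) := by
      rwa [coe_insert_erase_ne hane] at hcl
    have h3 := clOf_exchange hneg helim h1 h2
    rw [coe_erase_union_self haA] at h3
    exact he h3

/-- Steinitz exchange: an independent set contained in the closure of `P` has at most
`|P|` elements. -/
lemma indepOf_card_le {E : Type*} [DecidableEq E] {C : Set (E → SignType)}
    (hneg : ∀ X ∈ C, -X ∈ C)
    (helim : ∀ X ∈ C, ∀ Y ∈ C, ∀ e, X e ≠ 0 → X e = -Y e →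
      ∃ Z ∈ C, Z e = 0 ∧ ∀ f, ¬(X f ≠ 0 ∧ X f = -Y f) → Z f = signComp X Y f)
    {A P : Finset E} (hA : IndepOf C A) (hAP : ↑A ⊆ clOf C ↑P) :
    A.card ≤ P.card := by
  classical
  generalize hd : (A \ P).card = d
  induction d using Nat.strong_induction_on generalizing P with
  | _ d ih =>
    by_cases hsub : A ⊆ P
    · exact Finset.card_le_card hsub
    · obtain ⟨a₀, ha₀A, ha₀P⟩ := Finset.not_subset.mp hsub
      have ha₀cl : a₀ ∈ clOf C ↑P := hAP (by exact_mod_cast ha₀A)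
      set Pfam : Finset (Finset E) := P.powerset.filter (fun Q => a₀ ∈ clOf C ((Q : Finset E) : Set E)) with hPfam
      have hne : Pfam.Nonempty := ⟨P, by simp [hPfam, ha₀cl]⟩
      obtain ⟨P', hP'mem, hP'min⟩ := Finset.exists_min_image Pfam Finset.card hne
      rw [hPfam] at hP'mem hP'min
      rw [Finset.mem_filter, Finset.mem_powerset] at hP'mem
      obtain ⟨hP'sub, hP'cl⟩ := hP'mem
      have hnsub : ¬ (P' ⊆ A.erase a₀) := by
        intro hcon
        exact hA a₀ ha₀A (clOf_mono C (by exact_mod_cast hcon) hP'cl)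
      obtain ⟨q, hqP', hqA⟩ := Finset.not_subset.mp hnsub
      have hqa₀ : q ≠ a₀ := fun h => ha₀P (h ▸ (hP'sub hqP'))
      have hqnA : q ∉ A := by
        intro h
        exact hqA (Finset.mem_erase.mpr ⟨hqa₀, h⟩)
      have hmin : a₀ ∉ clOf C ↑(P'.erase q) := by
        intro hcon
        have hmem : P'.erase q ∈ P.powerset.filter (fun Q => a₀ ∈ clOf C ((Q : Finset E) : Set E)) := by
          rw [Finset.mem_filter, Finset.mem_powerset]
          exact ⟨(Finset.erase_subset _ _).trans hP'sub, hcon⟩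
        have h1 := hP'min _ hmem
        have hlt : (P'.erase q).card < P'.card := Finset.card_erase_lt_of_mem hqP'
        omega
      have hexch : q ∈ clOf C (↑(P'.erase q) ∪ {a₀}) := by
        apply clOf_exchange hneg helim hmin
        rw [coe_erase_union_self hqP']
        exact hP'cl
      set P₁ : Finset E := insert a₀ (P.erase q) with hP₁
      have hqcl : q ∈ clOf C ↑P₁ := by
        refine clOf_mono C ?_ hexch
        intro x hx
        rcases hx with hx | hx
        · simp only [Finset.coe_erase, Set.mem_diff, Finset.mem_coe] at hx
          rw [hP₁]
          push_cast
          exact Or.inr ⟨hP'sub hx.1, hx.2⟩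
        · rw [Set.mem_singleton_iff] at hx
          rw [hP₁, hx]
          push_cast
          exact Or.inl rfl
      have hPcl : (↑P : Set E) ⊆ clOf C ↑P₁ := by
        intro x hx
        by_cases hxq : x = q
        · rw [hxq]; exact hqcl
        · apply subset_clOf
          rw [hP₁]
          push_cast
          exact Or.inr ⟨by exact_mod_cast hx, hxq⟩
      have hAP₁ : ↑A ⊆ clOf C ↑P₁ := fun x hx => clOf_trans C hPcl (hAP hx)
      have hcard : P₁.card = P.card := by
        rw [hP₁, Finset.card_insert_of_notMem (by
          intro h
          exact ha₀P (Finset.mem_of_mem_erase h)),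
          Finset.card_erase_of_mem (hP'sub hqP')]
        have hpos : 0 < P.card := Finset.card_pos.mpr ⟨q, hP'sub hqP'⟩
        omega
      have hdlt : (A \ P₁).card < d := by
        have hsub2 : A \ P₁ ⊆ (A \ P).erase a₀ := by
          intro x hx
          rw [Finset.mem_sdiff] at hx
          rw [Finset.mem_erase, Finset.mem_sdiff]
          constructor
          · intro h
            apply hx.2
            rw [hP₁, h]
            exact Finset.mem_insert_self _ _
          · refine ⟨hx.1, ?_⟩
            intro hxP
            apply hx.2
            rw [hP₁]
            by_cases hxq : x = q
            · exact absurd (hxq ▸ hx.1) hqnA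
            · exact Finset.mem_insert_of_mem (Finset.mem_erase.mpr ⟨hxq, hxP⟩)
        have h1 : ((A \ P).erase a₀).card < (A \ P).card :=
          Finset.card_erase_lt_of_mem (Finset.mem_sdiff.mpr ⟨ha₀A, ha₀P⟩)
        have h2 := Finset.card_le_card hsub2
        omega
      have := ih (A \ P₁).card (by omega) hAP₁ rfl
      omega


/-- `e` is the pair with endpoints `x` and `y`. -/
def PairCovers {n : ℕ} (e : Pairs n) (x y : Fin n) : Prop :=
  (e.1.1 = x ∧ e.1.2 = y) ∨ (e.1.1 = y ∧ e.1.2 = x)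

lemma pairCovers_exists {n : ℕ} {x y : Fin n} (h : x ≠ y) : ∃ e : Pairs n, PairCovers e x y := by
  rcases lt_or_gt_of_ne h with hlt | hgt
  · exact ⟨⟨(x, y), hlt⟩, Or.inl ⟨rfl, rfl⟩⟩
  · exact ⟨⟨(y, x), hgt⟩, Or.inr ⟨rfl, rfl⟩⟩

lemma pairCovers_symm {n : ℕ} {e : Pairs n} {x y : Fin n} (h : PairCovers e x y) :
    PairCovers e y x := h.symm

lemma braid_zero_iff {n l : ℕ} {Z : Pairs n → SignType} {q : Fin n → Fin l}
    (hbr : ∀ e : Pairs n, Z e =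
      if q e.1.1 < q e.1.2 then 1 else if q e.1.2 < q e.1.1 then -1 else 0)
    (e : Pairs n) : Z e = 0 ↔ (q e.1.1 : ℕ) = (q e.1.2 : ℕ) := by
  rw [hbr e]
  simp only [Fin.lt_def]
  split_ifs with h1 h2
  · exact iff_of_false (by decide) (by omega)
  · exact iff_of_false (by decide) (by omega)
  · exact iff_of_true rfl (by omega)

lemma braid_one_iff {n l : ℕ} {Z : Pairs n → SignType} {q : Fin n → Fin l}
    (hbr : ∀ e : Pairs n, Z e =
      if q e.1.1 < q e.1.2 then 1 else if q e.1.2 < q e.1.1 then -1 else 0)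
    (e : Pairs n) : Z e = 1 ↔ (q e.1.1 : ℕ) < (q e.1.2 : ℕ) := by
  rw [hbr e]
  simp only [Fin.lt_def]
  split_ifs with h1 h2
  · exact iff_of_true rfl h1
  · exact iff_of_false (by decide) h1
  · exact iff_of_false (by decide) h1

lemma braid_negone_iff {n l : ℕ} {Z : Pairs n → SignType} {q : Fin n → Fin l}
    (hbr : ∀ e : Pairs n, Z e =
      if q e.1.1 < q e.1.2 then 1 else if q e.1.2 < q e.1.1 then -1 else 0)
    (e : Pairs n) : Z e = -1 ↔ (q e.1.2 : ℕ) < (q e.1.1 : ℕ) := by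
  rw [hbr e]
  simp only [Fin.lt_def]
  split_ifs with h1 h2
  · exact iff_of_false (by decide) (by omega)
  · exact iff_of_true rfl h2
  · exact iff_of_false (by decide) h2

lemma braid_covers_zero_iff {n l : ℕ} {Z : Pairs n → SignType} {q : Fin n → Fin l}
    (hbr : ∀ e : Pairs n, Z e =
      if q e.1.1 < q e.1.2 then 1 else if q e.1.2 < q e.1.1 then -1 else 0)
    {e : Pairs n} {x y : Fin n} (hc : PairCovers e x y) :
    Z e = 0 ↔ (q x : ℕ) = (q y : ℕ) := by
  rcases hc with ⟨h1, h2⟩ | ⟨h1, h2⟩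
  · rw [braid_zero_iff hbr e, h1, h2]
  · rw [braid_zero_iff hbr e, h1, h2]
    exact eq_comm

lemma braid_cmp_transfer {n : ℕ} {V V' : Pairs n → SignType} {l l' : ℕ}
    {q : Fin n → Fin l} {q' : Fin n → Fin l'}
    (hbr : ∀ e : Pairs n, V e =
      if q e.1.1 < q e.1.2 then 1 else if q e.1.2 < q e.1.1 then -1 else 0)
    (hbr' : ∀ e : Pairs n, V' e =
      if q' e.1.1 < q' e.1.2 then 1 else if q' e.1.2 < q' e.1.1 then -1 else 0)
    (hle : covLE V V') {x y : Fin n} (hxy : x ≠ y) (h : (q x : ℕ) < (q y : ℕ)) :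
    (q' x : ℕ) < (q' y : ℕ) := by
  obtain ⟨e, hc⟩ := pairCovers_exists hxy
  rcases hc with ⟨h1, h2⟩ | ⟨h1, h2⟩
  · have hv : V e = 1 := (braid_one_iff hbr e).mpr (by rw [h1, h2]; exact h)
    have hv' : V' e = 1 := by
      rcases hle e with h0 | heq
      · rw [hv] at h0; exact absurd h0 (by decide)
      · exact heq.symm.trans hv
    have := (braid_one_iff hbr' e).mp hv'
    rwa [h1, h2] at this
  · have hv : V e = -1 := (braid_negone_iff hbr e).mpr (by rw [h1, h2]; exact h)
    have hv' : V' e = -1 := by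
      rcases hle e with h0 | heq
      · rw [hv] at h0; exact absurd h0 (by decide)
      · exact heq.symm.trans hv
    have := (braid_negone_iff hbr' e).mp hv'
    rwa [h1, h2] at this


/- ========== Main theorem ========== -/

/-- Let `L` be the little oriented matroid of a sweep oriented matroid `M` on `E_n`.
If `I ⊆ [n]` is a flat of `L` of rank `rI ≥ 2` (rank of a subset being the rank of
the restriction), and `J` is the minimal flat of `M` containing all pairs with both
endpoints in `I`, then the rank of `J` in `M` equals `rI - 1`. -/
theorem rank_flat_little_sweep {n : ℕ} (C : Set (Pairs n → SignType))
    (hOM : IsOrientedMatroid C) (hsweep : ∀ X ∈ C, IsBraidCovector X)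
    (I : Set (Fin n)) (hIflat : IsFlat (LittleCovectors C) I)
    (rI : ℕ) (hrI : HasRank (restrictSet (LittleCovectors C) I) rI) (h2 : 2 ≤ rI)
    (J : Set (Pairs n)) (hJflat : IsFlat C J)
    (hJcont : {e : Pairs n | e.1.1 ∈ I ∧ e.1.2 ∈ I} ⊆ J)
    (hJmin : ∀ J' : Set (Pairs n), IsFlat C J' →
      {e : Pairs n | e.1.1 ∈ I ∧ e.1.2 ∈ I} ⊆ J' → J ⊆ J') :
    HasRank (restrictSet C J) (rI - 1) := by
  classical
  obtain ⟨⟨c, hc, hchain⟩, hno⟩ := hrI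
  -- extract the witnesses for each little covector in the chain
  have hext : ∀ s : Fin (rI + 1), ∃ (X : Pairs n → SignType) (l : ℕ)
      (p : Fin n → Fin l) (k : ℕ),
      X ∈ C ∧
      (∀ e : Pairs n, X e =
        if p e.1.1 < p e.1.2 then 1 else if p e.1.2 < p e.1.1 then -1 else 0) ∧
      (∀ x : I, c s x = if (p x.1 : ℕ) + 1 ≤ (k - 1) / 2 then -1
          else if k / 2 < (p x.1 : ℕ) + 1 then 1 else 0) := by
    intro s
    obtain ⟨Y, hY, hcY⟩ := hc s
    obtain ⟨Zb, hZb, hYZ⟩ := hY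
    obtain ⟨X, hX, l, p, hsurj, hbraid, k, hk1, hk2, hinl, hinr⟩ := hZb
    exact ⟨X, l, p, k, hX, hbraid, fun x => by rw [hcY x, hYZ x.1, hinl x.1]⟩
  choose X l p k hXmem hbraid hcut using hext
  -- the zero set of a little covector pins the level of the partition
  have pins : ∀ (s : Fin (rI + 1)) (x : I), c s x = 0 → (p s x.1 : ℕ) + 1 = k s / 2 := by
    intro s x h
    rw [hcut s x] at h
    split_ifs at h with h1 h2
    omega
  have pinned : ∀ (s : Fin (rI + 1)) (x y : I), c s x = 0 → c s y = 0 →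
      (p s x.1 : ℕ) = (p s y.1 : ℕ) := by
    intro s x y hx hy
    have h1 := pins s x hx
    have h2 := pins s y hy
    omega
  have val_det : ∀ (s : Fin (rI + 1)) (x y : I), (p s x.1 : ℕ) = (p s y.1 : ℕ) →
      c s x = c s y := by
    intro s x y h
    rw [hcut s x, hcut s y, h]
  have braid_zero : ∀ (s : Fin (rI + 1)) (e : Pairs n),
      (p s e.1.1 : ℕ) = (p s e.1.2 : ℕ) → X s e = 0 := by
    intro s e h
    rw [hbraid s e]
    simp only [Fin.lt_def]
    split_ifs with h1 h2
    · omega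
    · omega
    · rfl
  have braid_ne : ∀ (s : Fin (rI + 1)) (e : Pairs n),
      (p s e.1.1 : ℕ) ≠ (p s e.1.2 : ℕ) → X s e ≠ 0 := by
    intro s e h
    rw [hbraid s e]
    simp only [Fin.lt_def]
    split_ifs with h1 h2
    · decide
    · decide
    · omega
  -- monotonicity / drops for the little chain
  have czero_mono : ∀ ii jj : Fin (rI + 1), ii ≤ jj → ∀ x : I, c jj x = 0 → c ii x = 0 := by
    intro ii jj h x h0
    rcases h.lt_or_eq with hlt | h'
    · exact covLE_zero_of' (hchain ii jj hlt).1 h0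
    · rw [h']; exact h0
  have exdrop : ∀ ii jj : Fin (rI + 1), ii < jj → ∃ x : I, c ii x = 0 ∧ c jj x ≠ 0 := by
    intro ii jj h
    obtain ⟨hle, hne⟩ := hchain ii jj h
    by_contra hcon
    push_neg at hcon
    apply hne
    funext x
    rcases hle x with h0 | heq
    · rw [h0, hcon x h0]
    · exact heq
  constructor
  · -- HasChain (restrictSet C J) (rI - 1)
    refine ⟨fun s => fun e => compFam (padFam X) s.val e.1,
      fun s => ⟨compFam (padFam X) s.val,
        compFam_mem hOM.1 hOM.2.2.1 (padFam_mem hOM.1 hXmem) s.val, fun _ => rfl⟩, ?_⟩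
    intro i j hij
    have hij' : (i : ℕ) < (j : ℕ) := hij
    have hjlt : (j : ℕ) < rI - 1 + 1 := j.isLt
    constructor
    · intro e
      exact compFam_mono (padFam X) (le_of_lt hij') e.1
    · -- distinctness
      intro hbij
      have hiv : i.val + 1 < rI + 1 := by omega
      let σ : Fin (rI + 1) := ⟨i.val, by omega⟩
      let σ' : Fin (rI + 1) := ⟨i.val + 1, hiv⟩
      let τ : Fin (rI + 1) := ⟨rI - 1, by omega⟩
      let τ' : Fin (rI + 1) := ⟨rI, by omega⟩
      obtain ⟨x, hx0, hx1⟩ := exdrop σ σ' (by show i.val < i.val + 1; omega)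
      obtain ⟨y, hy0, hy1⟩ := exdrop τ τ' (by show rI - 1 < rI; omega)
      have hyσ' : c σ' y = 0 := czero_mono σ' τ (by show i.val + 1 ≤ rI - 1; omega) y hy0
      have hxyne : (x : Fin n) ≠ (y : Fin n) := by
        intro h
        apply hx1
        rw [show x = y from Subtype.ext h]
        exact hyσ'
      obtain ⟨e, he⟩ : ∃ e : Pairs n,
          (e.1.1 = (x : Fin n) ∧ e.1.2 = (y : Fin n)) ∨
          (e.1.1 = (y : Fin n) ∧ e.1.2 = (x : Fin n)) := by
        rcases lt_or_gt_of_ne hxyne with hlt | hgt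
        · exact ⟨⟨((x : Fin n), (y : Fin n)), hlt⟩, Or.inl ⟨rfl, rfl⟩⟩
        · exact ⟨⟨((y : Fin n), (x : Fin n)), hgt⟩, Or.inr ⟨rfl, rfl⟩⟩
      have heJ : e ∈ J := by
        apply hJcont
        rcases he with ⟨ha, hb⟩ | ⟨ha, hb⟩
        · exact ⟨by rw [ha]; exact x.2, by rw [hb]; exact y.2⟩
        · exact ⟨by rw [ha]; exact y.2, by rw [hb]; exact x.2⟩
      -- the composite at stage i.val vanishes at e
      have hWi : compFam (padFam X) i.val e = 0 := by
        apply compFam_zero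
        intro r h1 h3
        have hr : r < rI + 1 := by omega
        rw [padFam_eq X r hr]
        have hρx : c ⟨r, hr⟩ x = 0 :=
          czero_mono ⟨r, hr⟩ σ (by show r ≤ i.val; omega) x hx0
        have hρy : c ⟨r, hr⟩ y = 0 :=
          czero_mono ⟨r, hr⟩ σ' (by show r ≤ i.val + 1; omega) y hyσ'
        have hval := pinned ⟨r, hr⟩ x y hρx hρy
        rcases he with ⟨ha, hb⟩ | ⟨ha, hb⟩
        · exact braid_zero ⟨r, hr⟩ e (by rw [ha, hb]; exact hval)
        · exact braid_zero ⟨r, hr⟩ e (by rw [ha, hb]; exact hval.symm)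
      -- X σ' does not vanish at e
      have hXσ' : X σ' e ≠ 0 := by
        have hval : (p σ' (x : Fin n) : ℕ) ≠ (p σ' (y : Fin n) : ℕ) := by
          intro h
          apply hx1
          rw [val_det σ' x y h]
          exact hyσ'
        rcases he with ⟨ha, hb⟩ | ⟨ha, hb⟩
        · exact braid_ne σ' e (by rw [ha, hb]; exact hval)
        · exact braid_ne σ' e (by rw [ha, hb]; exact hval.symm)
      have hWσ'e : compFam (padFam X) (i.val + 1) e = X σ' e := by
        rw [compFam_step (padFam X) i.val e hWi, padFam_eq X (i.val + 1) hiv]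
      have hWj : compFam (padFam X) j.val e ≠ 0 := by
        rw [compFam_keep (padFam X) (show i.val + 1 ≤ j.val by omega) e
          (by rw [hWσ'e]; exact hXσ'), hWσ'e]
        exact hXσ'
      apply hWj
      have hcf := congrFun hbij ⟨e, heJ⟩
      exact hcf.symm.trans hWi
  · -- ¬ HasChain (restrictSet C J) (rI - 1 + 1)
    intro hK
    obtain ⟨b, hbmem, hbchain⟩ := hK
    choose Yw hYwmem hYweq using hbmem
    -- monotonicity / drops of the chain b
    have bzero_mono : ∀ ii jj : Fin (rI - 1 + 1 + 1), ii ≤ jj → ∀ x, b jj x = 0 →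
        b ii x = 0 := by
      intro ii jj h x h0
      rcases h.lt_or_eq with hlt | h'
      · exact covLE_zero_of' (hbchain ii jj hlt).1 h0
      · rw [h']; exact h0
    have bexdrop : ∀ ii jj : Fin (rI - 1 + 1 + 1), ii < jj →
        ∃ x, b ii x = 0 ∧ b jj x ≠ 0 := by
      intro ii jj h
      obtain ⟨hle, hne⟩ := hbchain ii jj h
      by_contra hcon
      push_neg at hcon
      apply hne
      funext x
      rcases hle x with h0 | heq
      · rw [h0, hcon x h0]
      · exact heq
    have hdrop : ∀ t : Fin (rI - 1 + 1), ∃ e : Pairs n, e ∈ J ∧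
        (∀ r : Fin (rI - 1 + 1 + 1), (r : ℕ) ≤ (t : ℕ) → Yw r e = 0) ∧
        Yw ⟨(t : ℕ) + 1, by omega⟩ e ≠ 0 := by
      intro t
      obtain ⟨x, hx0, hx1⟩ := bexdrop ⟨(t : ℕ), by omega⟩ ⟨(t : ℕ) + 1, by omega⟩
        (by show (t : ℕ) < (t : ℕ) + 1; omega)
      refine ⟨x.1, x.2, ?_, ?_⟩
      · intro r hr
        have hb : b r x = 0 :=
          bzero_mono r ⟨(t : ℕ), by omega⟩ (by show (r : ℕ) ≤ (t : ℕ); exact hr) x hx0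
        rw [← hYweq r x]
        exact hb
      · intro hcon
        apply hx1
        rw [hYweq ⟨(t : ℕ) + 1, by omega⟩ x]
        exact hcon
    choose eP hePJ hePzero hePpos using hdrop
    -- composites of the witnesses
    have hRmem : ∀ t : ℕ, compFam (padFam Yw) t ∈ C :=
      compFam_mem hOM.1 hOM.2.2.1 (padFam_mem hOM.1 hYwmem)
    have hRzero : ∀ (t : ℕ) (s : Fin (rI - 1 + 1)), t ≤ (s : ℕ) →
        compFam (padFam Yw) t (eP s) = 0 := by
      intro t s hts
      apply compFam_zero
      intro r h1 h3
      have hr : r < rI - 1 + 1 + 1 := by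
        have := s.isLt
        omega
      rw [padFam_eq Yw r hr]
      exact hePzero s ⟨r, hr⟩ (by show r ≤ (s : ℕ); omega)
    have hRpos : ∀ (s : Fin (rI - 1 + 1)) (t : ℕ), (s : ℕ) + 1 ≤ t →
        compFam (padFam Yw) t (eP s) ≠ 0 := by
      intro s t hst
      have h0 : compFam (padFam Yw) (s : ℕ) (eP s) = 0 := hRzero (s : ℕ) s le_rfl
      have h1 : compFam (padFam Yw) ((s : ℕ) + 1) (eP s) = padFam Yw ((s : ℕ) + 1) (eP s) :=
        compFam_step _ _ _ h0
      have hr : (s : ℕ) + 1 < rI - 1 + 1 + 1 := by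
        have := s.isLt
        omega
      rw [padFam_eq Yw _ hr] at h1
      have hne : compFam (padFam Yw) ((s : ℕ) + 1) (eP s) ≠ 0 := by
        rw [h1]
        exact hePpos s
      rw [compFam_keep (padFam Yw) hst (eP s) hne]
      exact hne
    -- the drop pairs are pairwise distinct and form an independent set
    have hePinj : Function.Injective eP := by
      intro s t hst
      by_contra hne
      have hne' : (s : ℕ) ≠ (t : ℕ) := fun h => hne (Fin.ext h)
      rcases Nat.lt_or_ge (s : ℕ) (t : ℕ) with h | h
      · have h1 : compFam (padFam Yw) ((s : ℕ) + 1) (eP s) ≠ 0 := hRpos s _ le_rfl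
        have h2 : compFam (padFam Yw) ((s : ℕ) + 1) (eP t) = 0 := hRzero _ t (by omega)
        rw [hst] at h1
        exact h1 h2
      · have h' : (t : ℕ) < (s : ℕ) := by omega
        have h1 : compFam (padFam Yw) ((t : ℕ) + 1) (eP t) ≠ 0 := hRpos t _ le_rfl
        have h2 : compFam (padFam Yw) ((t : ℕ) + 1) (eP s) = 0 := hRzero _ s (by omega)
        rw [← hst] at h1
        exact h1 h2
    classical
    set A : Finset (Pairs n) := Finset.image eP Finset.univ with hAdef
    have hAcard : A.card = rI - 1 + 1 := by
      rw [hAdef, Finset.card_image_of_injective _ hePinj, Finset.card_univ,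
        Fintype.card_fin]
    have hAJ : ∀ a ∈ A, a ∈ J := by
      intro a ha
      rw [hAdef, Finset.mem_image] at ha
      obtain ⟨s, _, rfl⟩ := ha
      exact hePJ s
    -- independence of the drop pairs
    have hAt : ∀ (d t : ℕ), rI - 1 + 1 - t ≤ d →
        IndepOf C (Finset.image eP (Finset.univ.filter
          (fun s : Fin (rI - 1 + 1) => t ≤ (s : ℕ)))) := by
      intro d
      induction d with
      | zero =>
        intro t ht
        have hempty : (Finset.univ.filter (fun s : Fin (rI - 1 + 1) => t ≤ (s : ℕ)))
            = ∅ := by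
          apply Finset.eq_empty_of_forall_notMem
          intro s hs
          rw [Finset.mem_filter] at hs
          have := s.isLt
          omega
        rw [hempty]
        simpa using indepOf_empty C
      | succ d ih =>
        intro t ht
        by_cases hlt : t < rI - 1 + 1
        · have hset : (Finset.univ.filter (fun s : Fin (rI - 1 + 1) => t ≤ (s : ℕ)))
              = insert ⟨t, hlt⟩ (Finset.univ.filter
                (fun s : Fin (rI - 1 + 1) => t + 1 ≤ (s : ℕ))) := by
            ext s
            simp only [Finset.mem_filter, Finset.mem_univ, true_and, Finset.mem_insert]
            constructor
            · intro hs
              rcases Nat.eq_or_lt_of_le hs with h' | h'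
              · left
                exact Fin.ext h'.symm
              · right; omega
            · intro hs
              rcases hs with rfl | hs
              · exact le_rfl
              · omega
          rw [hset, Finset.image_insert]
          apply indepOf_insert hOM.2.1 hOM.2.2.2 (ih (t + 1) (by omega))
          intro hcl
          have hzero : ∀ a ∈ (Finset.image eP (Finset.univ.filter
              (fun s : Fin (rI - 1 + 1) => t + 1 ≤ (s : ℕ))) : Finset (Pairs n)),
              compFam (padFam Yw) (t + 1) a = 0 := by
            intro a ha
            rw [Finset.mem_image] at ha
            obtain ⟨s, hs, rfl⟩ := ha
            rw [Finset.mem_filter] at hs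
            exact hRzero (t + 1) s hs.2
          have := hcl (compFam (padFam Yw) (t + 1)) (hRmem _)
            (fun a ha => hzero a (by exact_mod_cast ha))
          exact hRpos ⟨t, hlt⟩ (t + 1) le_rfl this
        · have hempty : (Finset.univ.filter (fun s : Fin (rI - 1 + 1) => t ≤ (s : ℕ)))
              = ∅ := by
            apply Finset.eq_empty_of_forall_notMem
            intro s hs
            rw [Finset.mem_filter] at hs
            have := s.isLt
            omega
          rw [hempty]
          simpa using indepOf_empty C
    have hAindep : IndepOf C A := by
      have h0 := hAt (rI - 1 + 1) 0 (by omega)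
      have : (Finset.univ.filter (fun s : Fin (rI - 1 + 1) => 0 ≤ (s : ℕ)))
          = Finset.univ := by
        ext s; simp
      rw [this] at h0
      rw [hAdef]
      exact h0
    -- J is contained in the closure of the pairs inside I
    have hJcl : J ⊆ clOf C {e : Pairs n | e.1.1 ∈ I ∧ e.1.2 ∈ I} := by
      intro e he Z hZ hZv
      exact hJmin {f | Z f = 0} ⟨Z, hZ, rfl⟩ (fun f hf => hZv f hf) he
    -- a point of I
    obtain ⟨xI0, hxI0⟩ : ∃ x : Fin n, x ∈ I := by
      obtain ⟨x, _, _⟩ := exdrop ⟨0, by omega⟩ ⟨1, by omega⟩ (by show (0:ℕ) < 1; omega)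
      exact ⟨x.1, x.2⟩
    -- greedy construction of an independent sequence of points of I
    have hgreedy : ∀ i : ℕ, i ≤ rI - 1 + 1 → ∃ u : ℕ → Fin n,
        (∀ s, s ≤ i → u s ∈ I) ∧
        (∀ j, 1 ≤ j → j ≤ i → u j ≠ u 0) ∧
        (∀ j, 1 ≤ j → j ≤ i → ∃ W ∈ C,
          (∀ a b : ℕ, a < j → b < j → ∀ e : Pairs n, PairCovers e (u a) (u b) → W e = 0) ∧
          (∀ e : Pairs n, PairCovers e (u j) (u 0) → W e ≠ 0)) := by
      intro i
      induction i with
      | zero =>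
        intro _
        exact ⟨fun _ => xI0, fun s _ => hxI0,
          fun j h1 h2 => absurd (le_trans h1 h2) (by omega),
          fun j h1 h2 => absurd (le_trans h1 h2) (by omega)⟩
      | succ i ih =>
        intro hi
        obtain ⟨u, huI, hu0, huW⟩ := ih (by omega)
        have hz : ∃ z, z ∈ I ∧ ∃ W, W ∈ C ∧
            (∀ a b : ℕ, a ≤ i → b ≤ i → ∀ e : Pairs n,
              PairCovers e (u a) (u b) → W e = 0) ∧
            (∃ e : Pairs n, PairCovers e z (u 0) ∧ W e ≠ 0) := by
          by_contra hcon
          push_neg at hcon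
          have hconsec : ∀ r, r + 1 ≤ i → u r ≠ u (r + 1) := by
            intro r hr heq
            obtain ⟨W, hWc, hWwithin, hWne⟩ := huW (r + 1) (by omega) hr
            have hne0 : u (r + 1) ≠ u 0 := hu0 (r + 1) (by omega) hr
            obtain ⟨e, hc⟩ := pairCovers_exists hne0
            apply hWne e hc
            apply hWwithin r 0 (by omega) (by omega) e
            rw [← heq] at hc
            exact hc
          have hpath : ∀ r : Fin i, ∃ e : Pairs n,
              PairCovers e (u r.val) (u (r.val + 1)) :=
            fun r => pairCovers_exists (hconsec r.val (by omega))
          choose pathE hpathESpec using hpath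
          have hEIcl : {e : Pairs n | e.1.1 ∈ I ∧ e.1.2 ∈ I}
              ⊆ clOf C ↑(Finset.image pathE Finset.univ) := by
            intro f hf Z hZ hZv
            obtain ⟨l', q, hsurj, hbr⟩ := hsweep Z hZ
            have hqZeros : ∀ r : Fin i, Z (pathE r) = 0 := by
              intro r
              exact hZv _ (Finset.mem_coe.mpr
                (Finset.mem_image_of_mem pathE (Finset.mem_univ r)))
            have hqconst : ∀ r, r ≤ i → (q (u r) : ℕ) = (q (u 0) : ℕ) := by
              intro r
              induction r with
              | zero => intro _; rfl
              | succ r ihr =>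
                intro hri
                have h1 := ihr (by omega)
                have h2 : (q (u r) : ℕ) = (q (u (r + 1)) : ℕ) :=
                  (braid_covers_zero_iff hbr (hpathESpec ⟨r, by omega⟩)).mp
                    (hqZeros ⟨r, by omega⟩)
                omega
            have hwithin : ∀ a b : ℕ, a ≤ i → b ≤ i → ∀ e : Pairs n,
                PairCovers e (u a) (u b) → Z e = 0 := by
              intro a b ha hb e hc
              rw [braid_covers_zero_iff hbr hc, hqconst a ha, hqconst b hb]
            have hIconst : ∀ z, z ∈ I → (q z : ℕ) = (q (u 0) : ℕ) := by
              intro z hz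
              by_cases hzu : z = u 0
              · rw [hzu]
              · obtain ⟨e', hc'⟩ := pairCovers_exists hzu
                exact (braid_covers_zero_iff hbr hc').mp
                  (hcon z hz Z hZ hwithin e' hc')
            have hq : (q f.1.1 : ℕ) = (q f.1.2 : ℕ) := by
              rw [hIconst _ hf.1, hIconst _ hf.2]
            exact (braid_zero_iff hbr f).mpr hq
          have hAcl : ↑A ⊆ clOf C ↑(Finset.image pathE Finset.univ) := by
            intro a ha
            have haA : a ∈ A := by exact_mod_cast ha
            exact clOf_trans C hEIcl (hJcl (hAJ a haA))
          have hle := indepOf_card_le hOM.2.1 hOM.2.2.2 hAindep hAcl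
          have hPc : (Finset.image pathE Finset.univ).card ≤ i :=
            le_trans Finset.card_image_le (by simp)
          omega
        obtain ⟨z, hzI, W, hWC, hWwithin, e₀, hcov₀, hne₀⟩ := hz
        obtain ⟨lW, qW, hsurjW, hbrW⟩ := hsweep W hWC
        have hqz : (qW z : ℕ) ≠ (qW (u 0) : ℕ) := by
          intro h
          exact hne₀ ((braid_covers_zero_iff hbrW hcov₀).mpr h)
        have hzne : z ≠ u 0 := by
          intro h
          exact hqz (by rw [h])
        refine ⟨fun s => if s = i + 1 then z else u s, ?_, ?_, ?_⟩
        · intro s hs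
          by_cases h : s = i + 1
          · simp only [if_pos h]
            exact hzI
          · simp only [if_neg h]
            exact huI s (by omega)
        · intro j h1 hj
          by_cases h : j = i + 1
          · simp only [if_pos h, if_neg (show (0:ℕ) ≠ i + 1 by omega)]
            exact hzne
          · simp only [if_neg h, if_neg (show (0:ℕ) ≠ i + 1 by omega)]
            exact hu0 j h1 (by omega)
        · intro j h1 hj
          by_cases h : j = i + 1
          · refine ⟨W, hWC, ?_, ?_⟩
            · intro a b ha hb e hc
              rw [h] at ha hb
              simp only [if_neg (show a ≠ i + 1 by omega),
                if_neg (show b ≠ i + 1 by omega)] at hc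
              exact hWwithin a b (by omega) (by omega) e hc
            · intro e hc
              simp only [if_pos h, if_neg (show (0:ℕ) ≠ i + 1 by omega)] at hc
              intro h0
              exact hqz ((braid_covers_zero_iff hbrW hc).mp h0)
          · obtain ⟨W', hW'C, hW'within, hW'ne⟩ := huW j h1 (by omega)
            refine ⟨W', hW'C, ?_, ?_⟩
            · intro a b ha hb e hc
              simp only [if_neg (show a ≠ i + 1 by omega),
                if_neg (show b ≠ i + 1 by omega)] at hc
              exact hW'within a b ha hb e hc
            · intro e hc
              simp only [if_neg h, if_neg (show (0:ℕ) ≠ i + 1 by omega)] at hc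
              exact hW'ne e hc
    obtain ⟨u, huI, hu0, huW⟩ := hgreedy (rI - 1 + 1) le_rfl
    -- witnesses for the greedy sequence, accessed by natural number index
    have hWex : ∀ jn : ℕ, ∃ W, W ∈ C ∧
        (jn + 1 ≤ rI - 1 + 1 →
          (∀ a b : ℕ, a ≤ jn → b ≤ jn → ∀ e : Pairs n,
            PairCovers e (u a) (u b) → W e = 0) ∧
          (∀ e : Pairs n, PairCovers e (u (jn + 1)) (u 0) → W e ≠ 0)) := by
      intro jn
      by_cases h : jn + 1 ≤ rI - 1 + 1
      · obtain ⟨W, hWC, h1, h2⟩ := huW (jn + 1) (by omega) h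
        exact ⟨W, hWC, fun _ =>
          ⟨fun a b ha hb e hc => h1 a b (by omega) (by omega) e hc, h2⟩⟩
      · exact ⟨fun _ => 0, hOM.1, fun hcon => absurd hcon h⟩
    choose Wfun hWfunC hWfunSpec using hWex
    -- the reversed family:  famZ idx = W_{m+1-idx}  for 1 ≤ idx ≤ m,  m = rI - 1 + 1
    set famZ : ℕ → Pairs n → SignType := fun idx =>
      if 1 ≤ idx ∧ idx ≤ rI - 1 + 1 then Wfun (rI - 1 + 1 - idx) else (fun _ => 0)
      with hfamZ
    have hfamZmem : ∀ idx, famZ idx ∈ C := by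
      intro idx
      simp only [hfamZ]
      split_ifs with h
      · exact hWfunC _
      · exact hOM.1
    have hfamZeq : ∀ idx, 1 ≤ idx → idx ≤ rI - 1 + 1 →
        famZ idx = Wfun (rI - 1 + 1 - idx) := by
      intro idx h1 h2
      simp only [hfamZ]
      rw [if_pos ⟨h1, h2⟩]
    have hVmem : ∀ j : ℕ, compFam famZ j ∈ C :=
      compFam_mem hOM.1 hOM.2.2.1 hfamZmem
    have hVzero : ∀ (j t : ℕ), j ≤ rI - 1 + 1 → t ≤ rI - 1 + 1 - j →
        ∀ e : Pairs n, PairCovers e (u 0) (u t) → compFam famZ j e = 0 := by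
      intro j t hj ht e hc
      apply compFam_zero
      intro idx h1 h2
      rw [hfamZeq idx h1 (le_trans h2 hj)]
      exact ((hWfunSpec (rI - 1 + 1 - idx) (by omega)).1) 0 t (by omega) (by omega) e hc
    have hVpos : ∀ (j j' : ℕ), j + 1 ≤ j' → j' ≤ rI - 1 + 1 →
        ∀ e : Pairs n, PairCovers e (u 0) (u (rI - 1 + 1 - j)) →
        compFam famZ j' e ≠ 0 := by
      intro j j' hjj hj' e hc
      have h0 : compFam famZ j e = 0 := hVzero j (rI - 1 + 1 - j) (by omega) le_rfl e hc
      have h1 : compFam famZ (j + 1) e = famZ (j + 1) e := compFam_step famZ j e h0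
      have h2 : famZ (j + 1) e ≠ 0 := by
        rw [hfamZeq (j + 1) (by omega) (by omega)]
        have hspec := (hWfunSpec (rI - 1 + 1 - (j + 1)) (by omega)).2
        have hidx : rI - 1 + 1 - (j + 1) + 1 = rI - 1 + 1 - j := by omega
        rw [hidx] at hspec
        exact hspec e (pairCovers_symm hc)
      have hne : compFam famZ (j + 1) e ≠ 0 := by rw [h1]; exact h2
      rw [compFam_keep famZ hjj e hne]
      exact hne
    -- braid representations of the composites
    have hVrep : ∀ j : Fin (rI - 1 + 1 + 1), ∃ (l' : ℕ), ∃ q : Fin n → Fin l',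
        Function.Surjective q ∧ ∀ e : Pairs n, compFam famZ (j : ℕ) e =
          if q e.1.1 < q e.1.2 then 1 else if q e.1.2 < q e.1.1 then -1 else 0 :=
      fun j => hsweep _ (hVmem (j : ℕ))
    choose lV qV hsurjV hbrV using hVrep
    -- the little chain contradicting hno
    set jmf : Fin (rI + 1 + 1) → Fin (rI - 1 + 1 + 1) :=
      fun jj => ⟨min (jj : ℕ) (rI - 1 + 1), by omega⟩ with hjmf
    set kk : Fin (rI + 1 + 1) → ℕ := fun jj =>
      if (jj : ℕ) ≤ rI - 1 + 1 then 2 * ((qV (jmf jj) (u 0) : ℕ) + 1)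
      else 2 * (qV (jmf jj) (u 0) : ℕ) + 1 with hkk
    set dd : Fin (rI + 1 + 1) → Fin n → SignType := fun jj i =>
      if (qV (jmf jj) i : ℕ) + 1 ≤ (kk jj - 1) / 2 then -1
      else if kk jj / 2 < (qV (jmf jj) i : ℕ) + 1 then 1 else 0 with hdd
    have ddneg : ∀ (jj : Fin (rI + 1 + 1)) (i : Fin n),
        dd jj i = -1 ↔ (qV (jmf jj) i : ℕ) < (qV (jmf jj) (u 0) : ℕ) := by
      intro jj i
      simp only [hdd, hkk]
      by_cases h : (jj : ℕ) ≤ rI - 1 + 1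
      · rw [if_pos h]
        split_ifs with h1 h2
        · exact iff_of_true rfl (by omega)
        · exact iff_of_false (by decide) (by omega)
        · exact iff_of_false (by decide) (by omega)
      · rw [if_neg h]
        split_ifs with h1 h2
        · exact iff_of_true rfl (by omega)
        · exact iff_of_false (by decide) (by omega)
        · exact iff_of_false (by decide) (by omega)
    have ddpos_le : ∀ (jj : Fin (rI + 1 + 1)) (i : Fin n), (jj : ℕ) ≤ rI - 1 + 1 →
        (dd jj i = 1 ↔ (qV (jmf jj) (u 0) : ℕ) < (qV (jmf jj) i : ℕ)) := by
      intro jj i h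
      simp only [hdd, hkk]
      rw [if_pos h]
      split_ifs with h1 h2
      · exact iff_of_false (by decide) (by omega)
      · exact iff_of_true rfl (by omega)
      · exact iff_of_false (by decide) (by omega)
    have ddzero_le : ∀ (jj : Fin (rI + 1 + 1)) (i : Fin n), (jj : ℕ) ≤ rI - 1 + 1 →
        (dd jj i = 0 ↔ (qV (jmf jj) i : ℕ) = (qV (jmf jj) (u 0) : ℕ)) := by
      intro jj i h
      simp only [hdd, hkk]
      rw [if_pos h]
      split_ifs with h1 h2
      · exact iff_of_false (by decide) (by omega)
      · exact iff_of_false (by decide) (by omega)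
      · exact iff_of_true rfl (by omega)
    have ddpos_top : ∀ (jj : Fin (rI + 1 + 1)) (i : Fin n), ¬((jj : ℕ) ≤ rI - 1 + 1) →
        (dd jj i = 1 ↔ (qV (jmf jj) (u 0) : ℕ) ≤ (qV (jmf jj) i : ℕ)) := by
      intro jj i h
      simp only [hdd, hkk]
      rw [if_neg h]
      split_ifs with h1 h2
      · exact iff_of_false (by decide) (by omega)
      · exact iff_of_true rfl (by omega)
      · exact iff_of_false (by decide) (by omega)
    have ddne_top : ∀ (jj : Fin (rI + 1 + 1)) (i : Fin n), ¬((jj : ℕ) ≤ rI - 1 + 1) →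
        dd jj i ≠ 0 := by
      intro jj i h
      simp only [hdd, hkk]
      rw [if_neg h]
      split_ifs with h1 h2
      · decide
      · decide
      · exfalso; omega
    -- membership
    have hccmem : ∀ jj : Fin (rI + 1 + 1),
        (fun x : I => dd jj x.1) ∈ restrictSet (LittleCovectors C) I := by
      intro jj
      refine ⟨dd jj, ?_, fun x => rfl⟩
      refine ⟨Sum.elim (dd jj) (compFam famZ ((jmf jj) : ℕ)), ?_, fun i => rfl⟩
      refine ⟨compFam famZ ((jmf jj) : ℕ), hVmem _, lV (jmf jj), qV (jmf jj),
        hsurjV (jmf jj), hbrV (jmf jj), kk jj, ?_, ?_, ?_, fun e => rfl⟩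
      · simp only [hkk]
        split_ifs <;> omega
      · have hv : (qV (jmf jj) (u 0) : ℕ) < lV (jmf jj) := (qV (jmf jj) (u 0)).isLt
        simp only [hkk]
        split_ifs <;> omega
      · intro i
        simp only [Sum.elim_inl, hdd]
    -- the chain conditions
    apply hno
    refine ⟨fun jj => fun x : I => dd jj x.1, hccmem, ?_⟩
    intro jj jj' hlt
    have hlt' : (jj : ℕ) < (jj' : ℕ) := hlt
    have hjjle : (jj : ℕ) ≤ rI - 1 + 1 := by
      have := jj'.isLt
      omega
    have hmono : covLE (compFam famZ ((jmf jj) : ℕ)) (compFam famZ ((jmf jj') : ℕ)) := by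
      apply compFam_mono
      show ((jmf jj) : Fin (rI - 1 + 1 + 1)).val ≤ ((jmf jj') : Fin (rI - 1 + 1 + 1)).val
      simp only [hjmf]
      omega
    constructor
    · intro x
      rcases Nat.lt_trichotomy ((qV (jmf jj) x.1 : ℕ)) ((qV (jmf jj) (u 0) : ℕ))
        with hc | hc | hc
      · right
        have h1 : dd jj x.1 = -1 := (ddneg jj x.1).mpr hc
        have hne : x.1 ≠ u 0 := by
          intro h
          rw [h] at hc
          omega
        have hc' := braid_cmp_transfer (hbrV (jmf jj)) (hbrV (jmf jj')) hmono hne hc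
        have h2 : dd jj' x.1 = -1 := (ddneg jj' x.1).mpr hc'
        show dd jj x.1 = dd jj' x.1
        rw [h1, h2]
      · left
        show dd jj x.1 = 0
        exact (ddzero_le jj x.1 hjjle).mpr hc
      · right
        have h1 : dd jj x.1 = 1 := (ddpos_le jj x.1 hjjle).mpr hc
        have hne : u 0 ≠ x.1 := by
          intro h
          rw [← h] at hc
          omega
        have hc' := braid_cmp_transfer (hbrV (jmf jj)) (hbrV (jmf jj')) hmono hne hc
        by_cases htop : (jj' : ℕ) ≤ rI - 1 + 1
        · have h2 : dd jj' x.1 = 1 := (ddpos_le jj' x.1 htop).mpr hc'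
          show dd jj x.1 = dd jj' x.1
          rw [h1, h2]
        · have h2 : dd jj' x.1 = 1 := (ddpos_top jj' x.1 htop).mpr (le_of_lt hc')
          show dd jj x.1 = dd jj' x.1
          rw [h1, h2]
    · intro heq
      by_cases htop : (jj' : ℕ) ≤ rI - 1 + 1
      · have ht1 : 1 ≤ rI - 1 + 1 - (jj : ℕ) := by omega
        have htm : rI - 1 + 1 - (jj : ℕ) ≤ rI - 1 + 1 := by omega
        have hwI : u (rI - 1 + 1 - (jj : ℕ)) ∈ I := huI _ htm
        have hne0 : u 0 ≠ u (rI - 1 + 1 - (jj : ℕ)) := Ne.symm (hu0 _ ht1 htm)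
        obtain ⟨e, hc⟩ := pairCovers_exists hne0
        have hjmval : ((jmf jj) : Fin (rI - 1 + 1 + 1)).val = (jj : ℕ) := by
          simp only [hjmf]
          omega
        have hV0 : compFam famZ ((jmf jj) : ℕ) e = 0 := by
          rw [hjmval]
          exact hVzero (jj : ℕ) _ hjjle le_rfl e hc
        have hq0 : (qV (jmf jj) (u 0) : ℕ) = (qV (jmf jj) (u (rI - 1 + 1 - (jj : ℕ))) : ℕ) :=
          (braid_covers_zero_iff (hbrV (jmf jj)) hc).mp hV0
        have hd0 : dd jj (u (rI - 1 + 1 - (jj : ℕ))) = 0 :=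
          (ddzero_le jj _ hjjle).mpr hq0.symm
        have hjm'val : ((jmf jj') : Fin (rI - 1 + 1 + 1)).val = (jj' : ℕ) := by
          simp only [hjmf]
          omega
        have hVne : compFam famZ ((jmf jj') : ℕ) e ≠ 0 := by
          rw [hjm'val]
          exact hVpos (jj : ℕ) (jj' : ℕ) (by omega) htop e hc
        have hqne : (qV (jmf jj') (u 0) : ℕ) ≠ (qV (jmf jj') (u (rI - 1 + 1 - (jj : ℕ))) : ℕ) := by
          intro h
          exact hVne ((braid_covers_zero_iff (hbrV (jmf jj')) hc).mpr h)
        have hdne : dd jj' (u (rI - 1 + 1 - (jj : ℕ))) ≠ 0 := by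
          intro h
          exact hqne (((ddzero_le jj' _ htop).mp h).symm)
        have hcf : dd jj (u (rI - 1 + 1 - (jj : ℕ))) = dd jj' (u (rI - 1 + 1 - (jj : ℕ))) :=
          congrFun heq (⟨u (rI - 1 + 1 - (jj : ℕ)), hwI⟩ : I)
        rw [hd0] at hcf
        exact hdne hcf.symm
      · have hwI : u 0 ∈ I := huI 0 (by omega)
        have hd0 : dd jj (u 0) = 0 := (ddzero_le jj (u 0) hjjle).mpr rfl
        have hdne : dd jj' (u 0) ≠ 0 := ddne_top jj' (u 0) htop
        have hcf : dd jj (u 0) = dd jj' (u 0) := congrFun heq (⟨u 0, hwI⟩ : I)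
        rw [hd0] at hcf
        exact hdne hcf.symm
end

section
/- Let M be a sweep oriented matroid on E_n with little oriented matroid L. Then there is a weak map from the first Dilworth truncation of the underlying matroid of L to the underlying matroid of M; that is, for every subset G ⊆ E_n, the rank of G in the underlying matroid of M is at most the rank of G in the first Dilworth truncation of the underlying matroid of L. -/
namespace SweepDev

lemma covLE_trans {E : Type*} {X Y Z : E → SignType} (h1 : covLE X Y) (h2 : covLE Y Z) :
    covLE X Z := by
  intro e
  rcases h1 e with h | h
  · exact Or.inl h
  · rcases h2 e with h' | h'
    · exact Or.inl (h.trans h')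
    · exact Or.inr (h.trans h')

lemma covLE_comp {E : Type*} (X Y : E → SignType) : covLE X (signComp X Y) := by
  intro e
  by_cases h : X e = 0
  · exact Or.inl h
  · exact Or.inr (by simp [signComp, h])

lemma signComp_eq_zero {E : Type*} (X Y : E → SignType) (e : E) :
    signComp X Y e = 0 ↔ X e = 0 ∧ Y e = 0 := by
  by_cases h : X e = 0 <;> simp [signComp, h]

lemma sneg0 {s : SignType} : -s = 0 ↔ s = 0 := by
  cases s <;> simp

lemma sign_cases {s : SignType} (h : s ≠ 0) : s = 1 ∨ s = -1 := by
  cases s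
  · exact absurd rfl h
  · exact Or.inr rfl
  · exact Or.inl rfl

variable {n : ℕ} (C : Set (Pairs n → SignType))

/-- closure operator from covector zero sets -/
def zcl (A : Set (Pairs n)) : Set (Pairs n) :=
  {e | ∀ Y ∈ C, (∀ a ∈ A, Y a = 0) → Y e = 0}

lemma subset_zcl (A : Set (Pairs n)) : A ⊆ zcl C A := by
  intro a ha Y _ hYA
  exact hYA a ha

lemma zcl_closed {A B : Set (Pairs n)} (h : A ⊆ zcl C B) : zcl C A ⊆ zcl C B := by
  intro e he Y hY hYB
  exact he Y hY (fun a ha => h ha Y hY hYB)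

lemma zcl_mono {A B : Set (Pairs n)} (h : A ⊆ B) : zcl C A ⊆ zcl C B :=
  zcl_closed C (h.trans (subset_zcl C B))

lemma zcl_exchange (hOM : IsOrientedMatroid C) {A : Set (Pairs n)} {a b : Pairs n}
    (ha : a ∉ zcl C A) (hab : a ∈ zcl C (insert b A)) : b ∈ zcl C (insert a A) := by
  -- get V ∈ C zero on A with V a ≠ 0
  simp only [zcl, Set.mem_setOf_eq, not_forall] at ha
  obtain ⟨V, hVC, hVA, hVa⟩ := ha
  intro W hWC hWA
  by_contra hWb
  have hWA' : ∀ q ∈ A, W q = 0 := fun q hq => hWA q (Set.mem_insert_of_mem _ hq)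
  have hWa : W a = 0 := hWA a (Set.mem_insert _ _)
  -- V b cases
  by_cases hVb : V b = 0
  · -- V zero on insert b A, so V a = 0, contradiction
    exact hVa (hab V hVC (by
      intro q hq
      rcases Set.mem_insert_iff.mp hq with h | h
      · exact h ▸ hVb
      · exact hVA q h))
  · -- replace V by -V if needed so that V b = -W b
    have key : ∀ V' ∈ C, (∀ q ∈ A, V' q = 0) → V' a ≠ 0 → V' b = -W b → False := by
      intro V' hV'C hV'A hV'a hV'b
      obtain ⟨Z, hZC, hZb, hZf⟩ := hOM.2.2.2 V' hV'C W hWC b (by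
          rw [hV'b]; intro h; exact hWb (sneg0.mp h)) hV'b
      -- Z vanishes on insert b A
      have hZins : ∀ q ∈ insert b A, Z q = 0 := by
        intro q hq
        rcases Set.mem_insert_iff.mp hq with h | h
        · exact h ▸ hZb
        · have hnotsep : ¬(V' q ≠ 0 ∧ V' q = -W q) := by
            intro ⟨h1, _⟩; exact h1 (hV'A q h)
          rw [hZf q hnotsep, signComp, if_pos (hV'A q h)]
          exact hWA' q h
      -- hence Z a = 0
      have hZa : Z a = 0 := hab Z hZC hZins
      -- but Z a = V' a ≠ 0
      have hnotsep : ¬(V' a ≠ 0 ∧ V' a = -W a) := by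
        intro ⟨_, h2⟩
        rw [hWa] at h2
        simp at h2
        exact hV'a h2
      rw [hZf a hnotsep, signComp, if_neg hV'a] at hZa
      exact hV'a hZa
    rcases sign_cases hVb with h1 | h1 <;> rcases sign_cases (show W b ≠ 0 from hWb) with h2 | h2
    · -- V b = 1, W b = 1 : use -V
      exact key (-V) (hOM.2.1 V hVC) (fun q hq => by simp [hVA q hq])
        (fun h => hVa (sneg0.mp (by simpa using h))) (by simp [h1, h2])
    · exact key V hVC hVA hVa (by rw [h1, h2]; decide)
    · exact key V hVC hVA hVa (by rw [h1, h2])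
    · exact key (-V) (hOM.2.1 V hVC) (fun q hq => by simp [hVA q hq])
        (fun h => hVa (sneg0.mp (by simpa using h))) (by simp [h1, h2])

end SweepDev

namespace SweepDev

section Abstract

variable {α : Type*} [DecidableEq α] (cl : Set α → Set α)

/-- triangular list w.r.t. an accumulated base set. -/
def Tri : Set α → List α → Prop
  | _, [] => True
  | E, x :: xs => x ∉ cl E ∧ Tri (insert x E) xs

lemma clmono (h1 : ∀ A, A ⊆ cl A) (h2 : ∀ A B, A ⊆ cl B → cl A ⊆ cl B)
    {A B : Set α} (h : A ⊆ B) : cl A ⊆ cl B := h2 A B (h.trans (h1 B))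

lemma cons_toFinset_union (y : α) (ys : List α) (E : Set α) :
    (↑(y :: ys).toFinset ∪ E : Set α) = ↑ys.toFinset ∪ insert y E := by
  ext z
  simp only [List.toFinset_cons, Finset.coe_insert, Set.mem_union, Set.mem_insert_iff,
    Finset.mem_coe, List.mem_toFinset]
  tauto

lemma Tri_append (x : α) : ∀ (L : List α) (E : Set α), Tri cl E L →
    x ∉ cl (↑L.toFinset ∪ E) → Tri cl E (L ++ [x]) := by
  intro L
  induction L with
  | nil =>
    intro E _ hx
    exact ⟨by simpa using hx, trivial⟩
  | cons y ys ih =>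
    intro E hT hx
    obtain ⟨hy, hys⟩ := hT
    refine ⟨hy, ih (insert y E) hys ?_⟩
    rw [← cons_toFinset_union]
    exact hx

lemma Tri_get : ∀ (L : List α) (E : Set α), Tri cl E L →
    ∀ (i : ℕ) (h : i < L.length), L[i] ∉ cl (↑(L.take i).toFinset ∪ E) := by
  intro L
  induction L with
  | nil => intro E _ i h; simp at h
  | cons y ys ih =>
    intro E hT i h
    obtain ⟨hy, hys⟩ := hT
    match i with
    | 0 => simpa using hy
    | (i+1) =>
      have hind := ih (insert y E) hys i (by simpa using h)
      show (y :: ys)[i+1] ∉ cl (↑((y :: ys).take (i+1)).toFinset ∪ E)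
      rw [List.getElem_cons_succ, List.take_succ_cons, cons_toFinset_union]
      exact hind

lemma Tri_card (h1 : ∀ A, A ⊆ cl A) (h2 : ∀ A B, A ⊆ cl B → cl A ⊆ cl B)
    (hex : ∀ (A : Set α) (a b : α), a ∉ cl A → a ∈ cl (insert b A) →
      b ∈ cl (insert a A)) :
    ∀ (L : List α) (E : Set α) (B : Finset α), Tri cl E L →
      (∀ x ∈ L, x ∈ cl (↑B ∪ E)) → L.length ≤ B.card := by
  intro L
  induction L with
  | nil => intro E B _ _; simp
  | cons x xs ih =>
    intro E B hT hall
    obtain ⟨hx, hxs⟩ := hT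
    have hxB : x ∈ cl (↑B ∪ E) := hall x (by simp)
    classical
    obtain ⟨B', hB'mem, hB'min⟩ := Finset.exists_min_image
      (B.powerset.filter (fun B' : Finset α => x ∈ cl ((B' : Set α) ∪ E))) Finset.card
      ⟨B, by simp only [Finset.mem_filter, Finset.mem_powerset]; exact ⟨Finset.Subset.refl _, hxB⟩⟩
    simp only [Finset.mem_filter, Finset.mem_powerset] at hB'mem
    obtain ⟨hB'sub, hB'x⟩ := hB'mem
    have hB'ne : B'.Nonempty := by
      rcases Finset.eq_empty_or_nonempty B' with h | h
      · exfalso; apply hx; simpa [h] using hB'x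
      · exact h
    obtain ⟨b, hb⟩ := hB'ne
    have hbB : b ∈ B := hB'sub hb
    have hxnb : x ∉ cl (↑(B'.erase b) ∪ E) := by
      intro hmem
      have hle : B'.card ≤ (B'.erase b).card :=
        hB'min _ (by
          simp only [Finset.mem_filter, Finset.mem_powerset]
          exact ⟨(Finset.erase_subset _ _).trans hB'sub, hmem⟩)
      have := Finset.card_erase_lt_of_mem hb
      omega
    have hxin : x ∈ cl (insert b (↑(B'.erase b) ∪ E)) := by
      have hseteq : (↑B' ∪ E : Set α) = insert b (↑(B'.erase b) ∪ E) := by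
        ext z
        simp only [Set.mem_union, Finset.mem_coe, Set.mem_insert_iff, Finset.mem_erase]
        constructor
        · rintro (hz | hz)
          · by_cases hzb : z = b
            · exact Or.inl hzb
            · exact Or.inr (Or.inl ⟨hzb, hz⟩)
          · exact Or.inr (Or.inr hz)
        · rintro (hz | hz | hz)
          · exact Or.inl (hz ▸ hb)
          · exact Or.inl hz.2
          · exact Or.inr hz
      rwa [hseteq] at hB'x
    have hbex : b ∈ cl (insert x (↑(B'.erase b) ∪ E)) := hex _ _ _ hxnb hxin
    have hkey : cl (↑B ∪ E) ⊆ cl (↑(B.erase b) ∪ insert x E) := by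
      apply h2
      intro q hq
      rcases hq with hq | hq
      · by_cases hqb : q = b
        · rw [hqb]
          refine clmono cl h1 h2 ?_ hbex
          intro z hz
          rcases Set.mem_insert_iff.mp hz with h | h
          · exact h ▸ Or.inr (Set.mem_insert _ _)
          · rcases h with h | h
            · refine Or.inl ?_
              have hz' : z ∈ B'.erase b := h
              have : z ∈ B.erase b := Finset.erase_subset_erase _ hB'sub hz'
              exact Finset.mem_coe.mpr this
            · exact Or.inr (Set.mem_insert_of_mem _ h)
        · refine h1 _ (Or.inl ?_)
          have hq' : q ∈ B := hq
          exact Finset.mem_coe.mpr (Finset.mem_erase.mpr ⟨hqb, hq'⟩)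
      · exact h1 _ (Or.inr (Set.mem_insert_of_mem _ hq))
    have hih := ih (insert x E) (B.erase b) hxs (by
      intro y hy
      exact hkey (hall y (by simp [hy])))
    have hcb := Finset.card_erase_of_mem hbB
    have hpos : 1 ≤ B.card := Finset.card_pos.mpr ⟨b, hbB⟩
    simp only [List.length_cons]
    omega

lemma Tri_greedy (h1 : ∀ A, A ⊆ cl A) (h2 : ∀ A B, A ⊆ cl B → cl A ⊆ cl B) :
    ∀ (W : Finset α), ∃ L : List α, (∀ x ∈ L, x ∈ W) ∧ Tri cl ∅ L ∧
      ∀ w ∈ W, w ∈ cl ↑L.toFinset := by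
  intro W
  induction W using Finset.induction_on with
  | empty => exact ⟨[], by simp, trivial, by simp⟩
  | @insert x V hxV ih =>
    obtain ⟨L, hLW, hLT, hLcov⟩ := ih
    by_cases hmem : x ∈ cl ↑L.toFinset
    · refine ⟨L, fun y hy => Finset.mem_insert_of_mem (hLW y hy), hLT, ?_⟩
      intro w hw
      rcases Finset.mem_insert.mp hw with h | h
      · exact h ▸ hmem
      · exact hLcov w h
    · refine ⟨L ++ [x], ?_, ?_, ?_⟩
      · intro y hy
        rcases List.mem_append.mp hy with h | h
        · exact Finset.mem_insert_of_mem (hLW y h)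
        · simp at h; exact h ▸ Finset.mem_insert_self _ _
      · exact Tri_append cl x L ∅ hLT (by simpa using hmem)
      · intro w hw
        have hsub : (↑L.toFinset : Set α) ⊆ ↑(L ++ [x]).toFinset := by
          intro z hz
          simp only [List.toFinset_append, Finset.coe_union, Set.mem_union]
          exact Or.inl hz
        rcases Finset.mem_insert.mp hw with h | h
        · refine h ▸ h1 _ ?_
          simp
        · exact clmono cl h1 h2 hsub (hLcov w h)

end Abstract

end SweepDev

namespace SweepDev

variable {n : ℕ} {C : Set (Pairs n → SignType)}

/-- realization of the closure by a single covector (composition of all covectors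
vanishing on A). -/
lemma zcl_realize (hOM : IsOrientedMatroid C) (A : Set (Pairs n)) :
    ∃ Y ∈ C, ∀ e, (Y e = 0 ↔ e ∈ zcl C A) := by
  classical
  have hfin : ({Y ∈ C | ∀ a ∈ A, Y a = 0} : Set (Pairs n → SignType)).Finite :=
    Set.toFinite _
  set M := hfin.toFinset with hM
  -- fold composition over the list of members
  have hfold : ∀ L : List (Pairs n → SignType), (∀ x ∈ L, x ∈ C) →
      (L.foldr signComp (fun _ => 0)) ∈ C ∧
      (∀ e, (L.foldr signComp (fun _ => 0)) e = 0 ↔ ∀ x ∈ L, x e = 0) := by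
    intro L
    induction L with
    | nil => intro _; exact ⟨hOM.1, by simp⟩
    | cons x xs ih =>
      intro hmem
      obtain ⟨hC, hz⟩ := ih (fun y hy => hmem y (List.mem_cons_of_mem _ hy))
      refine ⟨hOM.2.2.1 x (hmem x List.mem_cons_self) _ hC, ?_⟩
      intro e
      rw [List.foldr_cons, signComp_eq_zero, hz e]
      constructor
      · rintro ⟨hx, hxs⟩ y hy
        rcases List.mem_cons.mp hy with h | h
        · exact h ▸ hx
        · exact hxs y h
      · intro hall
        exact ⟨hall x List.mem_cons_self, fun y hy => hall y (List.mem_cons_of_mem _ hy)⟩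
  obtain ⟨hC, hz⟩ := hfold M.toList (by
    intro x hx
    have := Finset.mem_toList.mp hx
    rw [hM, Set.Finite.mem_toFinset] at this
    exact this.1)
  refine ⟨_, hC, ?_⟩
  intro e
  rw [hz e]
  constructor
  · intro hall Y hY hYA
    exact hall Y (Finset.mem_toList.mpr (by rw [hM, Set.Finite.mem_toFinset]; exact ⟨hY, hYA⟩))
  · intro he x hx
    have hx' := Finset.mem_toList.mp hx
    rw [hM, Set.Finite.mem_toFinset] at hx'
    exact he x hx'.1 hx'.2

/-- the ordered pair with distinct components, as an element of Pairs n -/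
def pr (a b : Fin n) (h : a ≠ b) : Pairs n :=
  if hab : a < b then ⟨(a, b), hab⟩ else ⟨(b, a), h.lt_or_gt.resolve_left hab⟩

lemma braid_zero_iff {Y : Pairs n → SignType} {l : ℕ} {p : Fin n → Fin l}
    (hform : ∀ e : Pairs n, Y e =
      if p e.1.1 < p e.1.2 then 1 else if p e.1.2 < p e.1.1 then -1 else 0)
    (a b : Fin n) (h : a ≠ b) : Y (pr a b h) = 0 ↔ p a = p b := by
  unfold pr
  split_ifs with hab
  · rw [hform]
    simp only
    rcases lt_trichotomy (p a) (p b) with hlt | heq | hgt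
    · rw [if_pos hlt]
      constructor
      · intro h'; exact absurd h' (by decide)
      · intro h'; exact absurd h' (ne_of_lt hlt)
    · simp [heq, lt_irrefl]
    · rw [if_neg (by exact not_lt_of_gt hgt), if_pos hgt]
      constructor
      · intro h'; exact absurd h' (by decide)
      · intro h'; exact absurd h' (ne_of_gt hgt)
  · rw [hform]
    simp only
    rcases lt_trichotomy (p a) (p b) with hlt | heq | hgt
    · rw [if_neg (by exact not_lt_of_gt hlt), if_pos hlt]
      constructor
      · intro h'; exact absurd h' (by decide)
      · intro h'; exact absurd h' (ne_of_lt hlt)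
    · simp [heq, lt_irrefl]
    · rw [if_pos hgt]
      constructor
      · intro h'; exact absurd h' (by decide)
      · intro h'; exact absurd h' (ne_of_gt hgt)

/-- order refinement along covLE between braid covectors -/
lemma braid_refine {U V : Pairs n → SignType} (hUV : covLE U V)
    {lU : ℕ} {pU : Fin n → Fin lU} (hU : ∀ e : Pairs n, U e =
      if pU e.1.1 < pU e.1.2 then 1 else if pU e.1.2 < pU e.1.1 then -1 else 0)
    {lV : ℕ} {pV : Fin n → Fin lV} (hV : ∀ e : Pairs n, V e =
      if pV e.1.1 < pV e.1.2 then 1 else if pV e.1.2 < pV e.1.1 then -1 else 0)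
    (a b : Fin n) (hab : pU a < pU b) : pV a < pV b := by
  have hne : a ≠ b := by rintro rfl; exact lt_irrefl _ hab
  rcases hne.lt_or_gt with h | h
  · -- a < b, use pair (a,b)
    have hUe : U ⟨(a, b), h⟩ = 1 := by rw [hU]; simp only; rw [if_pos hab]
    have hVe : V ⟨(a, b), h⟩ = 1 := by
      rcases hUV ⟨(a, b), h⟩ with h' | h'
      · rw [hUe] at h'; exact absurd h' (by decide)
      · rw [← h', hUe]
    rw [hV] at hVe
    simp only at hVe
    by_cases h1 : pV a < pV b
    · exact h1
    · exfalso
      rw [if_neg h1] at hVe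
      split_ifs at hVe <;> exact absurd hVe (by decide)
  · -- b < a, use pair (b,a), value -1
    have hUe : U ⟨(b, a), h⟩ = -1 := by
      rw [hU]; simp only
      rw [if_neg (by exact not_lt_of_gt hab), if_pos hab]
    have hVe : V ⟨(b, a), h⟩ = -1 := by
      rcases hUV ⟨(b, a), h⟩ with h' | h'
      · rw [hUe] at h'; exact absurd h' (by decide)
      · rw [← h', hUe]
    rw [hV] at hVe
    simp only at hVe
    rcases lt_trichotomy (pV a) (pV b) with h1 | h1 | h1
    · exact h1
    · exfalso
      rw [if_neg (by simp [h1]), if_neg (by simp [h1])] at hVe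
      exact absurd hVe (by decide)
    · exfalso
      rw [if_pos h1] at hVe
      exact absurd hVe (by decide)

end SweepDev

namespace SweepDev

variable {n : ℕ} {C : Set (Pairs n → SignType)}

lemma little_chain (hOM : IsOrientedMatroid C) (hsweep : ∀ X ∈ C, IsBraidCovector X)
    (S : Set (Fin n)) (s₀ : Fin n) (hs₀ : s₀ ∈ S)
    (m : ℕ) (g : Fin m → Pairs n) (u : Fin m → Fin n)
    (hu : ∀ c, u c ∈ S) (hune : ∀ c, u c ≠ s₀)
    (hg : ∀ c, g c = pr s₀ (u c) (Ne.symm (hune c)))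
    (htri : ∀ c : Fin m, g c ∉ zcl C {q | ∃ c' : Fin m, c.val < c'.val ∧ g c' = q}) :
    HasChain (restrictSet (LittleCovectors C) S) (m + 1) := by
  classical
  -- the nested prefix sets (tails of g)
  set P : ℕ → Set (Pairs n) := fun b => {q | ∃ c : Fin m, b ≤ c.val ∧ g c = q} with hP
  have hPmono : ∀ a b : ℕ, a ≤ b → P b ⊆ P a := by
    intro a b hab q hq
    obtain ⟨c, hc, hcq⟩ := hq
    exact ⟨c, le_trans hab hc, hcq⟩
  -- realizations of the closures of the P b
  have hYA : ∀ b : ℕ, ∃ Y ∈ C, ∀ e, (Y e = 0 ↔ e ∈ zcl C (P b)) :=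
    fun b => zcl_realize hOM (P b)
  choose YA hYAC hYAz using hYA
  -- composed chain
  let Y'' : ℕ → (Pairs n → SignType) := fun b => Nat.rec (YA 0)
    (fun b' prev => signComp prev (YA (b' + 1))) b
  have hY0 : Y'' 0 = YA 0 := rfl
  have hYsucc : ∀ b, Y'' (b + 1) = signComp (Y'' b) (YA (b + 1)) := fun b => rfl
  have hYC : ∀ b, Y'' b ∈ C := by
    intro b
    induction b with
    | zero => exact hYAC 0
    | succ b ih => exact hOM.2.2.1 _ ih _ (hYAC (b + 1))
  have hYz : ∀ b e, Y'' b e = 0 ↔ e ∈ zcl C (P b) := by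
    intro b
    induction b with
    | zero => exact hYAz 0
    | succ b ih =>
      intro e
      rw [hYsucc, signComp_eq_zero, ih e, hYAz (b + 1) e]
      constructor
      · rintro ⟨_, h2⟩; exact h2
      · intro h
        exact ⟨zcl_mono C (hPmono b (b + 1) (Nat.le_succ b)) h, h⟩
  have hYle : ∀ a b : ℕ, a ≤ b → covLE (Y'' a) (Y'' b) := by
    intro a b hab
    induction b with
    | zero =>
      have : a = 0 := Nat.le_zero.mp hab
      subst this; intro e; exact Or.inr rfl
    | succ b ih =>
      rcases Nat.lt_or_ge a (b + 1) with h | h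
      · exact covLE_trans (ih (Nat.lt_succ_iff.mp h)) (by rw [hYsucc]; exact covLE_comp _ _)
      · have : a = b + 1 := le_antisymm hab h
        subst this; intro e; exact Or.inr rfl
  -- braid representations
  have hrep : ∀ b : ℕ, IsBraidCovector (Y'' b) := fun b => hsweep _ (hYC b)
  choose lb pb hsurj hform using hrep
  -- cut and tope sign vectors
  let lw : ℕ → Fin n → SignType := fun b i =>
    if (pb b i : ℕ) < (pb b s₀ : ℕ) then -1 else if (pb b s₀ : ℕ) < (pb b i : ℕ) then 1 else 0
  let tp : Fin n → SignType := fun i => if (pb m i : ℕ) < (pb m s₀ : ℕ) then -1 else 1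
  -- order refinement
  have href : ∀ a b : ℕ, a ≤ b → ∀ x y : Fin n,
      (pb a x : ℕ) < (pb a y : ℕ) → (pb b x : ℕ) < (pb b y : ℕ) := by
    intro a b hab x y hxy
    exact braid_refine (hYle a b hab) (hform a) (hform b) x y hxy
  -- zero characterization of lw
  have hlwz : ∀ b (i : Fin n), lw b i = 0 ↔ (pb b i : ℕ) = (pb b s₀ : ℕ) := by
    intro b i
    simp only [lw]
    rcases lt_trichotomy (pb b i : ℕ) (pb b s₀ : ℕ) with h | h | h
    · rw [if_pos h]
      exact ⟨fun h' => absurd h' (by decide), fun h' => absurd h' (ne_of_lt h)⟩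
    · rw [if_neg (by omega), if_neg (by omega)]
      simp [h]
    · rw [if_neg (by omega), if_pos h]
      exact ⟨fun h' => absurd h' (by decide), fun h' => absurd h' (ne_of_gt h)⟩
  -- covLE between cuts
  have hlwle : ∀ a b : ℕ, a ≤ b → ∀ i, lw a i = 0 ∨ lw a i = lw b i := by
    intro a b hab i
    rcases lt_trichotomy (pb a i : ℕ) (pb a s₀ : ℕ) with h | h | h
    · right
      have h' := href a b hab i s₀ h
      simp only [lw, if_pos h, if_pos h']
    · left; exact (hlwz a i).mpr h
    · right
      have h' := href a b hab s₀ i h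
      simp only [lw]
      rw [if_neg (by omega), if_pos h, if_neg (by omega), if_pos h']
  have hlwtp : ∀ a : ℕ, a ≤ m → ∀ i, lw a i = 0 ∨ lw a i = tp i := by
    intro a ha i
    rcases lt_trichotomy (pb a i : ℕ) (pb a s₀ : ℕ) with h | h | h
    · right
      have h' := href a m ha i s₀ h
      simp only [lw, tp, if_pos h, if_pos h']
    · left; exact (hlwz a i).mpr h
    · right
      have h' := href a m ha s₀ i h
      simp only [lw, tp]
      rw [if_neg (by omega), if_pos h, if_neg (by omega)]
  -- zero values at s₀
  have hlws : ∀ b, lw b s₀ = 0 := fun b => (hlwz b s₀).mpr rfl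
  have htps : tp s₀ = 1 := by simp [tp]
  -- zero/nonzero at the witnesses u c
  have hzero_u : ∀ (b : ℕ) (c : Fin m), b ≤ c.val → lw b (u c) = 0 := by
    intro b c hbc
    have hgP : g c ∈ P b := ⟨c, hbc, rfl⟩
    have hY : Y'' b (g c) = 0 := (hYz b (g c)).mpr (subset_zcl C (P b) hgP)
    rw [hg c] at hY
    have := (braid_zero_iff (hform b) s₀ (u c) (Ne.symm (hune c))).mp hY
    rw [hlwz]
    omega
  have hnonzero_u : ∀ (c : Fin m), lw (c.val + 1) (u c) ≠ 0 := by
    intro c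
    have hgnP : g c ∉ zcl C (P (c.val + 1)) := by
      intro hmem
      apply htri c
      have : P (c.val + 1) = {q | ∃ c' : Fin m, c.val < c'.val ∧ g c' = q} := by
        ext q
        constructor
        · rintro ⟨c', hc', rfl⟩; exact ⟨c', by omega, rfl⟩
        · rintro ⟨c', hc', rfl⟩; exact ⟨c', by omega, rfl⟩
      rwa [this] at hmem
    have hY : Y'' (c.val + 1) (g c) ≠ 0 := fun h => hgnP ((hYz _ _).mp h)
    rw [hg c] at hY
    intro hlw
    apply hY
    rw [braid_zero_iff (hform (c.val + 1)) s₀ (u c) (Ne.symm (hune c))]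
    have := (hlwz (c.val + 1) (u c)).mp hlw
    omega
  -- membership of cuts in the little covectors restricted to S
  have hmem_lw : ∀ b : ℕ, (fun i : S => lw b i.1) ∈ restrictSet (LittleCovectors C) S := by
    intro b
    refine ⟨fun i => lw b i, ⟨Sum.elim (lw b) (Y'' b), ?_, fun i => rfl⟩, fun e => rfl⟩
    refine ⟨Y'' b, hYC b, lb b, pb b, hsurj b, hform b, 2 * ((pb b s₀ : ℕ) + 1),
      by omega, ?_, ?_, fun e => rfl⟩
    · have := (pb b s₀).isLt; omega
    · intro i
      simp only [Sum.elim_inl, lw]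
      have h1 : (2 * ((pb b s₀ : ℕ) + 1) - 1) / 2 = (pb b s₀ : ℕ) := by omega
      have h2 : (2 * ((pb b s₀ : ℕ) + 1)) / 2 = (pb b s₀ : ℕ) + 1 := by omega
      rw [h1, h2]
      split_ifs <;> first | rfl | omega
  have hmem_tp : (fun i : S => tp i.1) ∈ restrictSet (LittleCovectors C) S := by
    refine ⟨fun i => tp i, ⟨Sum.elim tp (Y'' m), ?_, fun i => rfl⟩, fun e => rfl⟩
    refine ⟨Y'' m, hYC m, lb m, pb m, hsurj m, hform m, 2 * (pb m s₀ : ℕ) + 1,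
      by omega, ?_, ?_, fun e => rfl⟩
    · have := (pb m s₀).isLt; omega
    · intro i
      simp only [Sum.elim_inl, tp]
      have h1 : (2 * (pb m s₀ : ℕ) + 1 - 1) / 2 = (pb m s₀ : ℕ) := by omega
      have h2 : (2 * (pb m s₀ : ℕ) + 1) / 2 = (pb m s₀ : ℕ) := by omega
      rw [h1, h2]
      split_ifs <;> first | rfl | omega
  -- assemble the chain
  refine ⟨fun j => if j.val ≤ m then (fun i : S => lw j.val i.1) else (fun i : S => tp i.1),
    ?_, ?_⟩
  · intro j
    dsimp only
    by_cases h : j.val ≤ m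
    · rw [if_pos h]; exact hmem_lw j.val
    · rw [if_neg h]; exact hmem_tp
  · intro i j hij
    have hilt : i.val < j.val := hij
    have himax : i.val ≤ m := by
      have := j.isLt
      omega
    dsimp only
    rw [if_pos himax]
    by_cases hj : j.val ≤ m
    · rw [if_pos hj]
      constructor
      · intro e
        exact hlwle i.val j.val (le_of_lt hij) e.1
      · -- distinct: witness u (j.val - 1)
        have hj1 : 1 ≤ j.val := by
          have : i.val < j.val := hij
          omega
        have hjm : j.val - 1 < m := by omega
        set c : Fin m := ⟨j.val - 1, hjm⟩ with hc
        intro heq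
        have h0 : lw i.val (u c) = 0 := hzero_u i.val c (by simp [hc]; omega)
        have h1 : lw j.val (u c) ≠ 0 := by
          have : c.val + 1 = j.val := by simp [hc]; omega
          rw [← this]
          exact hnonzero_u c
        apply h1
        have := congrFun heq (⟨u c, hu c⟩ : S)
        simpa [← this] using h0
    · rw [if_neg hj]
      constructor
      · intro e
        exact hlwtp i.val himax e.1
      · intro heq
        have := congrFun heq (⟨s₀, hs₀⟩ : S)
        simp only at this
        rw [hlws i.val, htps] at this
        exact absurd this (by decide)

end SweepDev

namespace SweepDev

lemma HasChain_mono {E : Type*} {P : Set (E → SignType)} {r r' : ℕ}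
    (h : HasChain P r) (hle : r' ≤ r) : HasChain P r' := by
  obtain ⟨c, h1, h2⟩ := h
  refine ⟨fun i => c (Fin.castLE (by omega) i), fun i => h1 _, fun i j hij => ?_⟩
  exact h2 _ _ hij

end SweepDev


open SweepDev in
/-- Weak map from the first Dilworth truncation of the underlying matroid of the
little oriented matroid `L` to the underlying matroid of the sweep oriented matroid
`M`: for every subset `G ⊆ E_n` and every partition of `G` into nonempty parts
`F_1, …, F_l`, the rank of `G` in `M` is at most `(Σ_k rank_L(endpoints of F_k)) - l`.
(Rank of a subset is the rank of the restriction; since the Dilworth rank of `G` is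
the minimum over such partitions, this is exactly the weak-map inequality.) -/
theorem weakMap_dilworth {n : ℕ} (C : Set (Pairs n → SignType))
    (hOM : IsOrientedMatroid C) (hsweep : ∀ X ∈ C, IsBraidCovector X)
    (G : Set (Pairs n)) (rG : ℕ) (hrG : HasRank (restrictSet C G) rG)
    (l : ℕ) (F : Fin l → Set (Pairs n))
    (hne : ∀ k, (F k).Nonempty)
    (hdisj : ∀ k k' : Fin l, k ≠ k' → Disjoint (F k) (F k'))
    (hunion : (⋃ k, F k) = G)
    (rL : Fin l → ℕ)
    (hrL : ∀ k, HasRank (restrictSet (LittleCovectors C)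
        {i : Fin n | ∃ e ∈ F k, e.1.1 = i ∨ e.1.2 = i}) (rL k)) :
    (rG : ℤ) ≤ (∑ k, (rL k : ℤ)) - l := by
  classical
  obtain ⟨c, hcmem, hchain⟩ := hrG.1
  -- lifts of the chain elements to covectors of C
  have hlift : ∀ t, ∃ X ∈ C, ∀ e : G, c t e = X e.1 := fun t => hcmem t
  choose X hXC hXagree using hlift
  -- witness pairs for each step
  have hstep : ∀ t : Fin rG, ∃ e : G, c t.castSucc e = 0 ∧ c t.succ e ≠ 0 := by
    intro t
    obtain ⟨hle, hne'⟩ := hchain t.castSucc t.succ (Fin.castSucc_lt_succ (i := t))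
    by_contra hno
    push_neg at hno
    apply hne'
    funext e
    rcases hle e with h0 | heq
    · rw [h0, hno e h0]
    · exact heq
  choose estep hez henz using hstep
  -- zero entries persist backwards in the chain
  have hzmono : ∀ (s t : Fin (rG + 1)), s ≤ t → ∀ e, c t e = 0 → c s e = 0 := by
    intro s t hst e h0
    rcases eq_or_lt_of_le hst with rfl | hlt
    · exact h0
    · rcases (hchain s t hlt).1 e with h | h
      · exact h
      · rw [h, h0]
  -- assign to each step a part containing its witness pair
  have hkey : ∀ t : Fin rG, ∃ k, (estep t).1 ∈ F k := by
    intro t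
    have : (estep t).1 ∈ ⋃ k, F k := by rw [hunion]; exact (estep t).2
    exact Set.mem_iUnion.mp this
  choose kfun hkfun using hkey
  -- per-part bound
  have hpart : ∀ k : Fin l,
      (Finset.univ.filter (fun t => kfun t = k)).card + 1 ≤ rL k := by
    intro k
    set m := (Finset.univ.filter (fun t => kfun t = k)).card with hm
    set Sk : Set (Fin n) := {i : Fin n | ∃ e ∈ F k, e.1.1 = i ∨ e.1.2 = i} with hSk
    obtain ⟨e₀, he₀⟩ := hne k
    set s₀ : Fin n := e₀.1.1 with hs₀def
    have hs₀ : s₀ ∈ Sk := ⟨e₀, he₀, Or.inl rfl⟩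
    -- the star at s₀
    set SkF : Finset (Fin n) := (Set.toFinite Sk).toFinset with hSkF
    set W : Finset (Pairs n) := ((SkF.erase s₀).attach).image
      (fun u => pr s₀ u.1 (Ne.symm (Finset.mem_erase.mp u.2).1)) with hW
    -- closure operator facts
    have h1 : ∀ A : Set (Pairs n), A ⊆ zcl C A := subset_zcl C
    have h2 : ∀ A B : Set (Pairs n), A ⊆ zcl C B → zcl C A ⊆ zcl C B :=
      fun A B h => zcl_closed C h
    have hex : ∀ (A : Set (Pairs n)) (a b : Pairs n), a ∉ zcl C A →
        a ∈ zcl C (insert b A) → b ∈ zcl C (insert a A) :=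
      fun A a b ha hab => zcl_exchange C hOM ha hab
    -- the star spans all pairs of the part
    have hspan : ∀ f : Pairs n, f ∈ F k → f ∈ zcl C ↑W := by
      intro f hf Y hY hYW
      obtain ⟨l', p', hsurj', hform'⟩ := hsweep Y hY
      have hkey' : ∀ x, x ∈ Sk → p' x = p' s₀ := by
        intro x hx
        by_cases hxs : x = s₀
        · rw [hxs]
        · have hWmem : pr s₀ x (Ne.symm hxs) ∈ W := by
            rw [hW]
            apply Finset.mem_image.mpr
            refine ⟨⟨x, ?_⟩, Finset.mem_attach _ _, rfl⟩
            exact Finset.mem_erase.mpr ⟨hxs, (Set.Finite.mem_toFinset _).mpr hx⟩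
          have hz := hYW _ hWmem
          exact ((braid_zero_iff hform' s₀ x (Ne.symm hxs)).mp hz).symm
      have hf1 : f.1.1 ∈ Sk := ⟨f, hf, Or.inl rfl⟩
      have hf2 : f.1.2 ∈ Sk := ⟨f, hf, Or.inr rfl⟩
      rw [hform' f, hkey' _ hf1, hkey' _ hf2, if_neg (lt_irrefl _), if_neg (lt_irrefl _)]
    -- greedy triangular list in the star
    obtain ⟨L, hLW, hLT, hLcov⟩ := Tri_greedy (zcl C) h1 h2 W
    -- sorted (descending) list of the steps assigned to part k
    set ts : List (Fin rG) := (Finset.univ.filter (fun t => kfun t = k)).sort (· ≤ ·)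
      with hts
    set tsr := ts.reverse with htsr
    have hpw : tsr.Pairwise (fun a b => b < a) := by
      rw [htsr, List.pairwise_reverse]
      exact (Finset.sortedLT_sort _).pairwise
    have htsmem : ∀ t ∈ tsr, kfun t = k := by
      intro t ht
      rw [htsr, List.mem_reverse, hts, Finset.mem_sort] at ht
      exact (Finset.mem_filter.mp ht).2
    -- triangularity of the dropped pair list
    have htriF : ∀ (ts' : List (Fin rG)), ts'.Pairwise (fun a b => b < a) →
        ∀ E : Set (Pairs n), (∀ q ∈ E, ∃ hq : q ∈ G, ∀ t' ∈ ts',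
          c t'.succ ⟨q, hq⟩ = 0) →
        Tri (zcl C) E (ts'.map (fun t => (estep t).1)) := by
      intro ts'
      induction ts' with
      | nil => intro _ E _; trivial
      | cons t₀ rest ih =>
        intro hpw' E hE
        obtain ⟨hhead, htail⟩ := List.pairwise_cons.mp hpw'
        constructor
        · intro hmem
          have hXz : ∀ q ∈ E, X t₀.succ q = 0 := by
            intro q hq
            obtain ⟨hqG, hq0⟩ := hE q hq
            have h0 := hq0 t₀ List.mem_cons_self
            rw [hXagree t₀.succ ⟨q, hqG⟩] at h0
            exact h0
          have h0 := hmem (X t₀.succ) (hXC _) hXz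
          apply henz t₀
          rw [hXagree t₀.succ (estep t₀)]
          exact h0
        · apply ih htail
          intro q hq
          rcases Set.mem_insert_iff.mp hq with h | h
          · subst h
            refine ⟨(estep t₀).2, ?_⟩
            intro t' ht'
            have hlt : t' < t₀ := hhead t' ht'
            have hle' : (t'.succ : Fin (rG + 1)) ≤ t₀.castSucc := by
              simp only [Fin.le_def, Fin.val_succ, Fin.coe_castSucc]
              omega
            have h0 := hzmono t'.succ t₀.castSucc hle' (estep t₀) (hez t₀)
            convert h0 using 2
          · obtain ⟨hqG, hq0⟩ := hE q h
            exact ⟨hqG, fun t' ht' => hq0 t' (List.mem_cons_of_mem _ ht')⟩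
    have hflistT : Tri (zcl C) ∅ (tsr.map (fun t => (estep t).1)) :=
      htriF tsr hpw ∅ (by intro q hq; exact absurd hq (Set.notMem_empty q))
    -- every dropped pair is in the closure of the greedy list
    have hflist_cov : ∀ x ∈ tsr.map (fun t => (estep t).1),
        x ∈ zcl C (↑L.toFinset ∪ ∅) := by
      intro x hx
      rw [Set.union_empty]
      obtain ⟨t, ht, rfl⟩ := List.mem_map.mp hx
      have hFk : (estep t).1 ∈ F k := by
        have := hkfun t
        rwa [htsmem t ht] at this
      exact h2 _ _ (fun w hw => hLcov w hw) (hspan _ hFk)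
    -- length bound
    have hlen : m ≤ L.length := by
      have hcard := Tri_card (zcl C) h1 h2 hex
        (tsr.map (fun t => (estep t).1)) ∅ L.toFinset hflistT hflist_cov
      have hlen1 : (tsr.map (fun t => (estep t).1)).length = m := by
        rw [List.length_map, htsr, List.length_reverse, hts, Finset.length_sort]
      have := L.toFinset_card_le
      omega
    -- extract the star triangular sequence
    have hmpos : ∀ cc : Fin m, m - 1 - cc.val < L.length := by
      intro cc
      have := cc.isLt
      omega
    set g : Fin m → Pairs n := fun cc => L[m - 1 - cc.val]'(hmpos cc) with hg
    have hgW : ∀ cc, g cc ∈ W := by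
      intro cc
      exact hLW _ (List.getElem_mem _)
    have hgtri : ∀ cc : Fin m, g cc ∉ zcl C {q | ∃ c' : Fin m, cc.val < c'.val ∧ g c' = q} := by
      intro cc hmem
      have hget := Tri_get (zcl C) L ∅ hLT (m - 1 - cc.val) (hmpos cc)
      apply hget
      refine zcl_mono C ?_ hmem
      rintro q ⟨c', hc', rfl⟩
      have hlt : m - 1 - c'.val < m - 1 - cc.val := by
        have := c'.isLt
        omega
      refine Or.inl ?_
      simp only [Finset.mem_coe, List.mem_toFinset]
      have : (L.take (m - 1 - cc.val))[m - 1 - c'.val]'(by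
          rw [List.length_take]
          have := hmpos c'
          omega) = L[m - 1 - c'.val]'(hmpos c') := by
        rw [List.getElem_take]
      show L[m - 1 - c'.val]'(hmpos c') ∈ List.take (m - 1 - cc.val) L
      rw [← this]
      exact List.getElem_mem _
    -- endpoints of the star pairs
    have hstar : ∀ cc : Fin m, ∃ uu : Fin n, uu ∈ Sk ∧ uu ≠ s₀ ∧
        ∀ h : s₀ ≠ uu, g cc = pr s₀ uu h := by
      intro cc
      have := hgW cc
      rw [hW] at this
      obtain ⟨a, _, heq⟩ := Finset.mem_image.mp this
      have ha := Finset.mem_erase.mp a.2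
      refine ⟨a.1, (Set.Finite.mem_toFinset _).mp ha.2, ha.1, fun h => ?_⟩
      rw [← heq]
    choose ufun hu1 hu2 hu3 using hstar
    -- the little chain
    have hlc := little_chain hOM hsweep Sk s₀ hs₀ m g ufun hu1 hu2
      (fun cc => hu3 cc (Ne.symm (hu2 cc))) hgtri
    -- conclude via the rank hypothesis
    by_contra hcon
    push_neg at hcon
    exact (hrL k).2 (HasChain_mono hlc (by omega))
  -- sum up
  have hsum : rG = ∑ k : Fin l, (Finset.univ.filter (fun t => kfun t = k)).card := by
    have := Finset.card_eq_sum_card_fiberwise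
      (f := kfun) (s := Finset.univ) (t := Finset.univ) (fun t _ => Finset.mem_univ _)
    simpa using this
  have hfinal : rG + l ≤ ∑ k, rL k := by
    calc rG + l = ∑ k : Fin l, ((Finset.univ.filter (fun t => kfun t = k)).card + 1) := by
          rw [Finset.sum_add_distrib, ← hsum]
          simp
      _ ≤ ∑ k, rL k := Finset.sum_le_sum (fun k _ => hpart k)
  have : (rG : ℤ) + l ≤ ∑ k, (rL k : ℤ) := by
    have := hfinal
    push_cast
    exact_mod_cast this
  omega
end
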